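/- arXiv:1808.00929 — 6 statements merged into one kernel-verified Lean document; each statement's English description precedes it below -/
import Mathlib

section
/- Let T > 0, let Ψ : ℝ² → ℝ² be continuously differentiable, and let X, Y : [0,T] → ℝ² be continuously differentiable curves with Y'(t) = Ψ(Y(t)) for all t ∈ [0,T] and X(0) = Y(0). Assume Ψ₁(X(0)) > 0, and that for every t ∈ (0,T] one has Ψ₁(X(t)) > 0 and Ψ₁(Y(t)) > 0, and that X₁'(t) = Ψ₁(X(t)) for all t. Then: (i) X₁ and Y₁ are injective (indeed strictly increasing) on [0,T]; (ii) if moreover X₂'(t) ≤ Ψ₂(X(t)) for all t ∈ [0,T], then for all s, t ∈ [0,T] with X₁(s) = Y₁(t) one has X₂(s) ≤ Y₂(t); (iii) if instead X₂'(t) ≥ Ψ₂(X(t)) for all t ∈ [0,T], then for all s, t ∈ [0,T] with X₁(s) = Y₁(t) one has X₂(s) ≥ Y₂(t). -/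
open Set Function Filter Metric

/-! ### Auxiliary lemmas for the graph comparison theorem -/

private lemma hasDerivWithinAt_fst' {f : ℝ → ℝ × ℝ} {u : ℝ × ℝ} {s : Set ℝ} {x : ℝ}
    (h : HasDerivWithinAt f u s x) :
    HasDerivWithinAt (fun t => (f t).1) u.1 s x := by
  exact (ContinuousLinearMap.fst ℝ ℝ ℝ).hasFDerivAt.comp_hasDerivWithinAt x h

private lemma hasDerivWithinAt_snd' {f : ℝ → ℝ × ℝ} {u : ℝ × ℝ} {s : Set ℝ} {x : ℝ}
    (h : HasDerivWithinAt f u s x) :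
    HasDerivWithinAt (fun t => (f t).2) u.2 s x := by
  exact (ContinuousLinearMap.snd ℝ ℝ ℝ).hasFDerivAt.comp_hasDerivWithinAt x h

/-- The inverse of the first coordinate of a curve. -/
noncomputable def curveInv (T : ℝ) (Z : ℝ → ℝ × ℝ) : ℝ → ℝ :=
  Function.invFunOn (fun t => (Z t).1) (Icc 0 T)

/-- The graph function of a curve. -/
noncomputable def curveGraph (T : ℝ) (Z : ℝ → ℝ × ℝ) : ℝ → ℝ :=
  fun x => (Z (curveInv T Z x)).2

private lemma icc_eventuallyEq_ici {x b : ℝ} (hxb : x < b) : Icc x b =ᶠ[nhds x] Ici x := by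
  rw [Filter.eventuallyEq_set]
  filter_upwards [Iio_mem_nhds hxb] with y hy
  simp only [mem_Icc, mem_Ici, and_iff_left_iff_imp]
  exact fun _ => hy.le

section Curve

variable {T : ℝ} {Z Z' : ℝ → ℝ × ℝ}

private lemma curve_cont (hZ : ∀ t ∈ Icc (0 : ℝ) T, HasDerivWithinAt Z (Z' t) (Icc (0 : ℝ) T) t) :
    ContinuousOn Z (Icc 0 T) := fun t ht => (hZ t ht).continuousWithinAt

private lemma curve_cont1 (hZ : ∀ t ∈ Icc (0 : ℝ) T, HasDerivWithinAt Z (Z' t) (Icc (0 : ℝ) T) t) :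
    ContinuousOn (fun t => (Z t).1) (Icc 0 T) :=
  continuous_fst.comp_continuousOn (curve_cont hZ)

private lemma curve_mono (hZ : ∀ t ∈ Icc (0 : ℝ) T, HasDerivWithinAt Z (Z' t) (Icc (0 : ℝ) T) t)
    (hpos : ∀ t ∈ Icc (0 : ℝ) T, 0 < (Z' t).1) :
    StrictMonoOn (fun t => (Z t).1) (Icc 0 T) := by
  apply strictMonoOn_of_hasDerivWithinAt_pos (f' := fun t => (Z' t).1) (convex_Icc 0 T)
    (curve_cont1 hZ)
  · intro x hx
    rw [interior_Icc] at hx ⊢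
    exact (hasDerivWithinAt_fst' (hZ x (Ioo_subset_Icc_self hx))).mono Ioo_subset_Icc_self
  · intro x hx
    rw [interior_Icc] at hx
    exact hpos x (Ioo_subset_Icc_self hx)

variable (hT : 0 < T)
  (hZ : ∀ t ∈ Icc (0 : ℝ) T, HasDerivWithinAt Z (Z' t) (Icc (0 : ℝ) T) t)
  (hpos : ∀ t ∈ Icc (0 : ℝ) T, 0 < (Z' t).1)

include hT hZ hpos

private lemma curve_lt : (Z 0).1 < (Z T).1 :=
  curve_mono hZ hpos ⟨le_rfl, hT.le⟩ ⟨hT.le, le_rfl⟩ hT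

private lemma curveInv_left : ∀ t ∈ Icc (0 : ℝ) T, curveInv T Z ((Z t).1) = t :=
  fun _ ht => (curve_mono hZ hpos).injOn.leftInvOn_invFunOn ht

private lemma curveInv_mem {x : ℝ} (hx : x ∈ Icc (Z 0).1 (Z T).1) :
    curveInv T Z x ∈ Icc (0 : ℝ) T := by
  obtain ⟨t, ht, hxt⟩ := intermediate_value_Icc hT.le (curve_cont1 hZ) hx
  exact Function.invFunOn_mem (f := fun t => (Z t).1) (s := Icc 0 T) ⟨t, ht, hxt⟩

private lemma curveInv_right {x : ℝ} (hx : x ∈ Icc (Z 0).1 (Z T).1) :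
    (Z (curveInv T Z x)).1 = x := by
  obtain ⟨t, ht, hxt⟩ := intermediate_value_Icc hT.le (curve_cont1 hZ) hx
  exact Function.invFunOn_eq (f := fun t => (Z t).1) (s := Icc 0 T) ⟨t, ht, hxt⟩

private lemma curveInv_mono : StrictMonoOn (curveInv T Z) (Icc (Z 0).1 (Z T).1) := by
  intro u hu v hv huv
  by_contra hle
  push_neg at hle
  have := (curve_mono hZ hpos).monotoneOn (curveInv_mem hT hZ hpos hv)
    (curveInv_mem hT hZ hpos hu) hle
  rw [curveInv_right hT hZ hpos hu, curveInv_right hT hZ hpos hv] at this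
  exact absurd huv (not_lt.2 this)

private lemma curveInv_zero : curveInv T Z (Z 0).1 = 0 :=
  curveInv_left hT hZ hpos 0 ⟨le_rfl, hT.le⟩

private lemma curveInv_top : curveInv T Z (Z T).1 = T :=
  curveInv_left hT hZ hpos T ⟨hT.le, le_rfl⟩

private lemma curveInv_cont : ContinuousOn (curveInv T Z) (Icc (Z 0).1 (Z T).1) := by
  have hab : (Z 0).1 < (Z T).1 := curve_lt hT hZ hpos
  have hmono := curveInv_mono hT hZ hpos
  have hmonoZ := curve_mono hZ hpos
  have hR : ∀ x ∈ Ico (Z 0).1 (Z T).1, ContinuousWithinAt (curveInv T Z) (Ici x) x := by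
    intro x hx
    apply hmono.continuousWithinAt_right_of_exists_between (Icc_mem_nhdsGE_of_mem hx)
    intro r hr
    have h0 : 0 ≤ curveInv T Z x := (curveInv_mem hT hZ hpos ⟨hx.1, hx.2.le⟩).1
    have hxT : curveInv T Z x < T := by
      have := hmono ⟨hx.1, hx.2.le⟩ ⟨hab.le, le_rfl⟩ hx.2
      rwa [curveInv_top hT hZ hpos] at this
    have htmem : min r T ∈ Icc (0 : ℝ) T :=
      ⟨le_min (h0.trans hr.le) hT.le, min_le_right _ _⟩
    refine ⟨(Z (min r T)).1, ⟨?_, ?_⟩, ?_, ?_⟩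
    · exact hmonoZ.monotoneOn ⟨le_rfl, hT.le⟩ htmem htmem.1
    · exact hmonoZ.monotoneOn htmem ⟨hT.le, le_rfl⟩ htmem.2
    · rw [curveInv_left hT hZ hpos _ htmem]; exact lt_min hr hxT
    · rw [curveInv_left hT hZ hpos _ htmem]; exact min_le_left _ _
  have hL : ∀ x ∈ Ioc (Z 0).1 (Z T).1, ContinuousWithinAt (curveInv T Z) (Iic x) x := by
    intro x hx
    apply hmono.continuousWithinAt_left_of_exists_between (Icc_mem_nhdsLE_of_mem hx)
    intro r hr
    have hT0 : curveInv T Z x ≤ T := (curveInv_mem hT hZ hpos ⟨hx.1.le, hx.2⟩).2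
    have hx0 : 0 < curveInv T Z x := by
      have := hmono ⟨le_rfl, hab.le⟩ ⟨hx.1.le, hx.2⟩ hx.1
      rwa [curveInv_zero hT hZ hpos] at this
    have htmem : max r 0 ∈ Icc (0 : ℝ) T :=
      ⟨le_max_right _ _, (max_lt hr hx0).le.trans hT0⟩
    refine ⟨(Z (max r 0)).1, ⟨?_, ?_⟩, ?_, ?_⟩
    · exact hmonoZ.monotoneOn ⟨le_rfl, hT.le⟩ htmem htmem.1
    · exact hmonoZ.monotoneOn htmem ⟨hT.le, le_rfl⟩ htmem.2
    · rw [curveInv_left hT hZ hpos _ htmem]; exact le_max_left _ _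
    · rw [curveInv_left hT hZ hpos _ htmem]; exact max_lt hr hx0
  intro x hx
  rcases eq_or_lt_of_le hx.1 with rfl | h1
  · exact (hR _ ⟨le_rfl, hab⟩).mono Icc_subset_Ici_self
  · rcases eq_or_lt_of_le hx.2 with rfl | h2
    · exact (hL _ ⟨h1, le_rfl⟩).mono Icc_subset_Iic_self
    · exact ((hL x ⟨h1, hx.2⟩).union (hR x ⟨hx.1, h2⟩)).mono
        (fun y _ => (le_total y x).elim Or.inl Or.inr)

private lemma curveInv_deriv {x : ℝ} (hx : x ∈ Ico (Z 0).1 (Z T).1) :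
    HasDerivWithinAt (curveInv T Z) (((Z' (curveInv T Z x)).1)⁻¹) (Icc x (Z T).1) x := by
  have hxI : x ∈ Icc (Z 0).1 (Z T).1 := ⟨hx.1, hx.2.le⟩
  have ht0 : curveInv T Z x ∈ Icc (0 : ℝ) T := curveInv_mem hT hZ hpos hxI
  have hZx : (Z (curveInv T Z x)).1 = x := curveInv_right hT hZ hpos hxI
  rw [hasDerivWithinAt_iff_tendsto_slope, Icc_diff_left]
  have hslope : Tendsto (slope (fun t => (Z t).1) (curveInv T Z x))
      (nhdsWithin (curveInv T Z x) (Icc 0 T \ {curveInv T Z x})) (nhds ((Z' (curveInv T Z x)).1)) :=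
    hasDerivWithinAt_iff_tendsto_slope.mp (hasDerivWithinAt_fst' (hZ _ ht0))
  have hmaps : MapsTo (curveInv T Z) (Ioc x (Z T).1) (Icc 0 T \ {curveInv T Z x}) := by
    intro y hy
    have hyI : y ∈ Icc (Z 0).1 (Z T).1 := ⟨hx.1.trans hy.1.le, hy.2⟩
    refine ⟨curveInv_mem hT hZ hpos hyI, ?_⟩
    simp only [mem_singleton_iff]
    intro h
    apply hy.1.ne'
    calc y = (Z (curveInv T Z y)).1 := (curveInv_right hT hZ hpos hyI).symm
    _ = (Z (curveInv T Z x)).1 := by rw [h]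
    _ = x := hZx
  have hcw : ContinuousWithinAt (curveInv T Z) (Ioc x (Z T).1) x :=
    (curveInv_cont hT hZ hpos x hxI).mono (fun y hy => ⟨hx.1.trans hy.1.le, hy.2⟩)
  have hcomp := hslope.comp (hcw.tendsto_nhdsWithin hmaps)
  have hfin := hcomp.inv₀ (hpos _ ht0).ne'
  apply hfin.congr'
  filter_upwards [self_mem_nhdsWithin] with y hy
  have hyI : y ∈ Icc (Z 0).1 (Z T).1 := ⟨hx.1.trans hy.1.le, hy.2⟩
  simp only [Function.comp_apply, slope_def_field]
  rw [curveInv_right hT hZ hpos hyI, hZx, inv_div]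

private lemma curveGraph_deriv {x : ℝ} (hx : x ∈ Ico (Z 0).1 (Z T).1) :
    HasDerivWithinAt (curveGraph T Z)
      (((Z' (curveInv T Z x)).1)⁻¹ * (Z' (curveInv T Z x)).2) (Ici x) x := by
  have ht0 : curveInv T Z x ∈ Icc (0 : ℝ) T := curveInv_mem hT hZ hpos ⟨hx.1, hx.2.le⟩
  have hmaps : MapsTo (curveInv T Z) (Icc x (Z T).1) (Icc 0 T) :=
    fun y hy => curveInv_mem hT hZ hpos ⟨hx.1.trans hy.1, hy.2⟩
  have hcomp := HasDerivWithinAt.scomp x (hasDerivWithinAt_snd' (hZ _ ht0))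
    (curveInv_deriv hT hZ hpos hx) hmaps
  rw [← hasDerivWithinAt_congr_set (icc_eventuallyEq_ici hx.2)]
  exact hcomp

private lemma curveGraph_cont : ContinuousOn (curveGraph T Z) (Icc (Z 0).1 (Z T).1) :=
  continuous_snd.comp_continuousOn ((curve_cont hZ).comp (curveInv_cont hT hZ hpos)
    (fun _ hx => curveInv_mem hT hZ hpos hx))

private lemma curveGraph_eq : ∀ t ∈ Icc (0 : ℝ) T, curveGraph T Z ((Z t).1) = (Z t).2 := by
  intro t ht
  unfold curveGraph
  rw [curveInv_left hT hZ hpos t ht]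

private lemma curveGraph_pt {x : ℝ} (hx : x ∈ Icc (Z 0).1 (Z T).1) :
    Z (curveInv T Z x) = (x, curveGraph T Z x) :=
  Prod.ext (curveInv_right hT hZ hpos hx) rfl

end Curve

/-- The main comparison step: if `X` is a subsolution in the second coordinate and `Y` is a
solution, then the graph of `X` lies below the graph of `Y`. -/
private theorem graph_key
    (T : ℝ) (hT : 0 < T)
    (Ψ : ℝ × ℝ → ℝ × ℝ) (hΨ : ContDiff ℝ 1 Ψ)
    (X Y X' Y' : ℝ → ℝ × ℝ)
    (hX : ∀ t ∈ Icc (0 : ℝ) T, HasDerivWithinAt X (X' t) (Icc (0 : ℝ) T) t)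
    (hY : ∀ t ∈ Icc (0 : ℝ) T, HasDerivWithinAt Y (Y' t) (Icc (0 : ℝ) T) t)
    (hYode : ∀ t ∈ Icc (0 : ℝ) T, Y' t = Ψ (Y t))
    (hinit : X 0 = Y 0)
    (hposX : ∀ t ∈ Icc (0 : ℝ) T, 0 < (Ψ (X t)).1)
    (hposY : ∀ t ∈ Icc (0 : ℝ) T, 0 < (Ψ (Y t)).1)
    (hX1 : ∀ t ∈ Icc (0 : ℝ) T, (X' t).1 = (Ψ (X t)).1)
    (hX2 : ∀ t ∈ Icc (0 : ℝ) T, (X' t).2 ≤ (Ψ (X t)).2) :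
    ∀ s ∈ Icc (0 : ℝ) T, ∀ t ∈ Icc (0 : ℝ) T,
      (X s).1 = (Y t).1 → (X s).2 ≤ (Y t).2 := by
  have hXpos : ∀ t ∈ Icc (0 : ℝ) T, 0 < (X' t).1 := fun t ht => (hX1 t ht).symm ▸ hposX t ht
  have hYpos : ∀ t ∈ Icc (0 : ℝ) T, 0 < (Y' t).1 := by
    intro t ht; rw [hYode t ht]; exact hposY t ht
  set a : ℝ := (X 0).1 with ha_def
  have haY : (Y 0).1 = a := by rw [← hinit]
  set m : ℝ := min (X T).1 (Y T).1 with hm_def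
  have hm1 : m ≤ (X T).1 := min_le_left _ _
  have hm2 : m ≤ (Y T).1 := min_le_right _ _
  have ham : a < m := lt_min (curve_lt hT hX hXpos) (haY ▸ curve_lt hT hY hYpos)
  set h : ℝ → ℝ := curveGraph T X with hh_def
  set g : ℝ → ℝ := curveGraph T Y with hg_def
  -- the open set where the first component of `Ψ` is positive
  set U : Set (ℝ × ℝ) := {p | 0 < (Ψ p).1} with hU_def
  have hU : IsOpen U := isOpen_lt continuous_const (continuous_fst.comp hΨ.continuous)
  set K : Set (ℝ × ℝ) := (fun x => (x, g x)) '' Icc (Y 0).1 (Y T).1 with hK_def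
  have hKcomp : IsCompact K :=
    isCompact_Icc.image_of_continuousOn (continuousOn_id.prodMk (curveGraph_cont hT hY hYpos))
  have hKU : K ⊆ U := by
    rintro _ ⟨x, hx, rfl⟩
    have := hposY _ (curveInv_mem hT hY hYpos hx)
    rwa [curveGraph_pt hT hY hYpos hx] at this
  obtain ⟨δ, hδ0, hδU⟩ := hKcomp.exists_cthickening_subset_open hU hKU
  set C : Set (ℝ × ℝ) := cthickening δ K with hC_def
  have hCcomp : IsCompact C := hKcomp.cthickening
  have hCU : C ⊆ U := hδU
  set F : ℝ × ℝ → ℝ := fun p => (Ψ p).2 / (Ψ p).1 with hF_def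
  have hF1 : ContDiffOn ℝ 1 F U := by
    apply ContDiffOn.div ((contDiff_snd.comp hΨ).contDiffOn) ((contDiff_fst.comp hΨ).contDiffOn)
    intro p hp
    exact (hp : 0 < (Ψ p).1).ne'
  have hFd : DifferentiableOn ℝ F U := hF1.differentiableOn one_ne_zero
  have hFc : ContinuousOn (fderiv ℝ F) U := hF1.continuousOn_fderiv_of_isOpen hU le_rfl
  obtain ⟨M, hM⟩ := hCcomp.exists_bound_of_continuousOn (hFc.mono hCU)
  set L : ℝ := max M 0 + 1 with hL_def
  have hL0 : 0 < L := by positivity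
  have hLM : ∀ p ∈ C, ‖fderiv ℝ F p‖ ≤ L := by
    intro p hp
    have := hM p hp
    have h2 : M ≤ max M 0 := le_max_left _ _
    linarith
  -- the key Lipschitz-type estimate along vertical segments above the graph of `Y`
  have hE : ∀ x ∈ Icc (Y 0).1 (Y T).1, ∀ d : ℝ, 0 ≤ d → d ≤ δ →
      F (x, g x + d) ≤ F (x, g x) + L * d := by
    intro x hx d hd0 hdδ
    set s : Set (ℝ × ℝ) := {x} ×ˢ Icc (g x) (g x + d) with hs_def
    have hpK : ((x, g x) : ℝ × ℝ) ∈ K := mem_image_of_mem _ hx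
    have hsC : s ⊆ C := by
      rintro ⟨z1, z2⟩ ⟨hz1, hz2⟩
      apply mem_cthickening_of_dist_le _ (x, g x) δ K hpK
      have hz1' : z1 = x := hz1
      rw [Prod.dist_eq, hz1']
      simp only [dist_self]
      rw [Real.dist_eq, abs_of_nonneg (by linarith [hz2.1] : (0:ℝ) ≤ z2 - g x)]
      have := hz2.2
      exact max_le hδ0.le (by linarith)
    have hconv : Convex ℝ s := (convex_singleton x).prod (convex_Icc _ _)
    have hderiv : ∀ z ∈ s, HasFDerivWithinAt F (fderiv ℝ F z) s z := fun z hz =>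
      ((hFd.differentiableAt (hU.mem_nhds (hCU (hsC hz)))).hasFDerivAt).hasFDerivWithinAt
    have hps : ((x, g x) : ℝ × ℝ) ∈ s := by
      simp only [hs_def, mem_prod, mem_singleton_iff, mem_Icc]
      exact ⟨trivial, le_rfl, by linarith⟩
    have hqs : ((x, g x + d) : ℝ × ℝ) ∈ s := by
      simp only [hs_def, mem_prod, mem_singleton_iff, mem_Icc]
      exact ⟨trivial, by linarith, le_rfl⟩
    have hbound := hconv.norm_image_sub_le_of_norm_hasFDerivWithin_le hderiv
      (fun z hz => hLM z (hsC hz)) hps hqs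
    have hnorm : ‖((x, g x + d) : ℝ × ℝ) - (x, g x)‖ = d := by
      rw [Prod.mk_sub_mk, sub_self, add_sub_cancel_left, Prod.norm_def]
      simp [abs_of_nonneg hd0, hd0]
    rw [hnorm] at hbound
    have := le_trans (le_abs_self _) hbound
    linarith [this]
  -- right derivatives of the two graph functions on `[a, m)`
  have hIcoX : Ico a m ⊆ Ico (X 0).1 (X T).1 := fun x hx => ⟨hx.1, lt_of_lt_of_le hx.2 hm1⟩
  have hIcoY : Ico a m ⊆ Ico (Y 0).1 (Y T).1 := fun x hx =>
    ⟨haY ▸ hx.1, lt_of_lt_of_le hx.2 hm2⟩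
  have hIccX : Icc a m ⊆ Icc (X 0).1 (X T).1 := fun x hx => ⟨hx.1, le_trans hx.2 hm1⟩
  have hIccY : Icc a m ⊆ Icc (Y 0).1 (Y T).1 := fun x hx => ⟨haY ▸ hx.1, le_trans hx.2 hm2⟩
  set hd' : ℝ → ℝ := fun x => ((X' (curveInv T X x)).1)⁻¹ * (X' (curveInv T X x)).2 with hhd'_def
  set gd' : ℝ → ℝ := fun x => ((Y' (curveInv T Y x)).1)⁻¹ * (Y' (curveInv T Y x)).2 with hgd'_def
  have hhd : ∀ x ∈ Ico a m, HasDerivWithinAt h (hd' x) (Ici x) x := fun x hx =>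
    curveGraph_deriv hT hX hXpos (hIcoX hx)
  have hgd : ∀ x ∈ Ico a m, HasDerivWithinAt g (gd' x) (Ici x) x := fun x hx =>
    curveGraph_deriv hT hY hYpos (hIcoY hx)
  -- the slope bound for the graph of X, and the exact slope for the graph of Y
  have hslopeX : ∀ x ∈ Ico a m, hd' x ≤ F (x, h x) := by
    intro x hx
    have hxI : x ∈ Icc (X 0).1 (X T).1 := hIccX ⟨hx.1, hx.2.le⟩
    have ht : curveInv T X x ∈ Icc (0:ℝ) T := curveInv_mem hT hX hXpos hxI
    have hpt : X (curveInv T X x) = (x, h x) := curveGraph_pt hT hX hXpos hxI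
    have h1 : (X' (curveInv T X x)).1 = (Ψ (x, h x)).1 := by rw [hX1 _ ht, hpt]
    have h2 : (X' (curveInv T X x)).2 ≤ (Ψ (x, h x)).2 := by rw [← hpt]; exact hX2 _ ht
    have hp : 0 < (Ψ ((x : ℝ), h x)).1 := by rw [← hpt]; exact hposX _ ht
    show ((X' (curveInv T X x)).1)⁻¹ * (X' (curveInv T X x)).2 ≤
      (Ψ (x, h x)).2 / (Ψ (x, h x)).1
    rw [h1, inv_mul_eq_div]
    exact (div_le_div_iff_of_pos_right hp).2 h2
  have hslopeY : ∀ x ∈ Ico a m, gd' x = F (x, g x) := by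
    intro x hx
    have hxI : x ∈ Icc (Y 0).1 (Y T).1 := hIccY ⟨hx.1, hx.2.le⟩
    have ht : curveInv T Y x ∈ Icc (0:ℝ) T := curveInv_mem hT hY hYpos hxI
    have hpt : Y (curveInv T Y x) = (x, g x) := curveGraph_pt hT hY hYpos hxI
    show ((Y' (curveInv T Y x)).1)⁻¹ * (Y' (curveInv T Y x)).2 =
      (Ψ (x, g x)).2 / (Ψ (x, g x)).1
    rw [hYode _ ht, hpt, inv_mul_eq_div]
  set Emax : ℝ := Real.exp (2 * L * (m - a)) with hEmax_def
  have hEmaxpos : 0 < Emax := Real.exp_pos _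
  -- the barrier bound for every small ε
  have main : ∀ ε : ℝ, 0 < ε → ε ≤ δ / Emax →
      ∀ x ∈ Icc a m, h x ≤ g x + ε * Real.exp (2 * L * (x - a)) := by
    intro ε hε hεδ
    set B : ℝ → ℝ := fun x => g x + ε * Real.exp (2 * L * (x - a)) with hB_def
    set B' : ℝ → ℝ := fun x => gd' x + ε * (Real.exp (2 * L * (x - a)) * (2 * L)) with hB'_def
    have hBd : ∀ x ∈ Ico a m, HasDerivWithinAt B (B' x) (Ici x) x := by
      intro x hx
      apply (hgd x hx).add
      have h1 : HasDerivAt (fun y : ℝ => 2 * L * (y - a)) (2 * L) x := by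
        simpa using ((hasDerivAt_id x).sub_const a).const_mul (2 * L)
      have h2 := (Real.hasDerivAt_exp (2 * L * (x - a))).comp x h1
      exact (h2.const_mul ε).hasDerivWithinAt
    have hhcont : ContinuousOn h (Icc a m) := (curveGraph_cont hT hX hXpos).mono hIccX
    have hgcont : ContinuousOn g (Icc a m) := (curveGraph_cont hT hY hYpos).mono hIccY
    have hBcont : ContinuousOn B (Icc a m) := by
      apply hgcont.add
      have : Continuous fun y : ℝ => ε * Real.exp (2 * L * (y - a)) :=
        continuous_const.mul
          (Real.continuous_exp.comp (continuous_const.mul (continuous_id.sub continuous_const)))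
      exact this.continuousOn
    have hfa : h a ≤ B a := by
      have h1 : h a = (X 0).2 := curveGraph_eq hT hX hXpos 0 ⟨le_rfl, hT.le⟩
      have h2 : g a = (Y 0).2 := by
        rw [← haY]; exact curveGraph_eq hT hY hYpos 0 ⟨le_rfl, hT.le⟩
      have h3 : (X 0).2 = (Y 0).2 := by rw [hinit]
      simp only [hB_def, h1, h2, ← h3, sub_self, mul_zero, Real.exp_zero, mul_one]
      linarith [hε]
    have hbound : ∀ x ∈ Ico a m, h x = B x → hd' x < B' x := by
      intro x hx hcontact
      have hxY : x ∈ Icc (Y 0).1 (Y T).1 := hIccY ⟨hx.1, hx.2.le⟩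
      set E : ℝ := Real.exp (2 * L * (x - a)) with hE_def'
      have hEpos : 0 < E := Real.exp_pos _
      have hEle : E ≤ Emax := by
        apply Real.exp_le_exp.2
        have : x ≤ m := hx.2.le
        nlinarith
      have hεE0 : 0 ≤ ε * E := by positivity
      have hεEδ : ε * E ≤ δ := by
        have h1 : ε * E ≤ (δ / Emax) * Emax := by
          apply mul_le_mul hεδ hEle hEpos.le
          positivity
        rwa [div_mul_cancel₀ _ hEmaxpos.ne'] at h1
      have hFest := hE x hxY (ε * E) hεE0 hεEδ
      have hstep1 : hd' x ≤ F (x, g x + ε * E) := by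
        have := hslopeX x hx
        rwa [hcontact] at this
      have hstep2 : F (x, g x + ε * E) ≤ F (x, g x) + L * (ε * E) := hFest
      have hstep3 : F (x, g x) = gd' x := (hslopeY x hx).symm
      have hfinal : L * (ε * E) < ε * (E * (2 * L)) := by
        nlinarith [mul_pos (mul_pos hε hEpos) hL0]
      calc hd' x ≤ F (x, g x) + L * (ε * E) := hstep1.trans hstep2
      _ = gd' x + L * (ε * E) := by rw [hstep3]
      _ < gd' x + ε * (E * (2 * L)) := by linarith
      _ = B' x := rfl
    exact fun x hx => image_le_of_deriv_right_lt_deriv_boundary' hhcont hhd hfa hBcont hBd hbound hx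
  -- conclusion
  intro s hs t ht heq
  set x : ℝ := (X s).1 with hx_def
  have hmonoX := curve_mono hX hXpos
  have hmonoY := curve_mono hY hYpos
  have hxm : x ∈ Icc a m := by
    constructor
    · exact hmonoX.monotoneOn ⟨le_rfl, hT.le⟩ hs hs.1
    · apply le_min
      · exact hmonoX.monotoneOn hs ⟨hT.le, le_rfl⟩ hs.2
      · rw [heq]; exact hmonoY.monotoneOn ht ⟨hT.le, le_rfl⟩ ht.2
  have hhx : h x = (X s).2 := curveGraph_eq hT hX hXpos s hs
  have hgx : g x = (Y t).2 := by
    rw [heq]; exact curveGraph_eq hT hY hYpos t ht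
  rw [← hhx, ← hgx]
  by_contra hlt
  push_neg at hlt
  have hη : 0 < h x - g x := by linarith
  set ε : ℝ := min (δ / Emax) ((h x - g x) / 2 / Emax) with hε_def
  have hε2pos : 0 < (h x - g x) / 2 / Emax := div_pos (div_pos hη two_pos) hEmaxpos
  have hεpos : 0 < ε := lt_min (div_pos hδ0 hEmaxpos) hε2pos
  have h1 := main ε hεpos (min_le_left _ _) x hxm
  have h2 : Real.exp (2 * L * (x - a)) ≤ Emax := by
    apply Real.exp_le_exp.2
    have hx2 := hxm.2
    nlinarith
  have h3 : ε * Real.exp (2 * L * (x - a)) ≤ (h x - g x) / 2 := by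
    calc ε * Real.exp (2 * L * (x - a)) ≤ ((h x - g x) / 2 / Emax) * Emax := by
          exact mul_le_mul (min_le_right _ _) h2 (Real.exp_pos _).le hε2pos.le
    _ = (h x - g x) / 2 := div_mul_cancel₀ _ hEmaxpos.ne'
  linarith

/-- **Graph comparison lemma.** Let `Ψ : ℝ² → ℝ²` be `C¹`, let `X, Y : [0,T] → ℝ²` be `C¹`
(with derivative functions `X', Y'`) with `Y' = Ψ ∘ Y`, `X 0 = Y 0`, `Ψ₁(X 0) > 0`,
`Ψ₁(X t) > 0` and `Ψ₁(Y t) > 0` for `t ∈ (0,T]`, and `X₁' = Ψ₁ ∘ X`.  Then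
(i) `X₁` and `Y₁` are strictly increasing (hence injective) on `[0,T]`;
(ii) if `X₂' ≤ Ψ₂ ∘ X` then whenever `X₁(s) = Y₁(t)` one has `X₂(s) ≤ Y₂(t)`;
(iii) if `X₂' ≥ Ψ₂ ∘ X` then whenever `X₁(s) = Y₁(t)` one has `X₂(s) ≥ Y₂(t)`. -/
theorem graph_comparison
    (T : ℝ) (hT : 0 < T)
    (Ψ : ℝ × ℝ → ℝ × ℝ) (hΨ : ContDiff ℝ 1 Ψ)
    (X Y X' Y' : ℝ → ℝ × ℝ)
    (hX : ∀ t ∈ Icc (0 : ℝ) T, HasDerivWithinAt X (X' t) (Icc (0 : ℝ) T) t)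
    (hX' : ContinuousOn X' (Icc (0 : ℝ) T))
    (hY : ∀ t ∈ Icc (0 : ℝ) T, HasDerivWithinAt Y (Y' t) (Icc (0 : ℝ) T) t)
    (hY' : ContinuousOn Y' (Icc (0 : ℝ) T))
    (hYode : ∀ t ∈ Icc (0 : ℝ) T, Y' t = Ψ (Y t))
    (hinit : X 0 = Y 0)
    (hpos0 : 0 < (Ψ (X 0)).1)
    (hposX : ∀ t ∈ Ioc (0 : ℝ) T, 0 < (Ψ (X t)).1)
    (hposY : ∀ t ∈ Ioc (0 : ℝ) T, 0 < (Ψ (Y t)).1)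
    (hX1 : ∀ t ∈ Icc (0 : ℝ) T, (X' t).1 = (Ψ (X t)).1) :
    (StrictMonoOn (fun t => (X t).1) (Icc (0 : ℝ) T) ∧
      StrictMonoOn (fun t => (Y t).1) (Icc (0 : ℝ) T)) ∧
    ((∀ t ∈ Icc (0 : ℝ) T, (X' t).2 ≤ (Ψ (X t)).2) →
      ∀ s ∈ Icc (0 : ℝ) T, ∀ t ∈ Icc (0 : ℝ) T,
        (X s).1 = (Y t).1 → (X s).2 ≤ (Y t).2) ∧
    ((∀ t ∈ Icc (0 : ℝ) T, (Ψ (X t)).2 ≤ (X' t).2) →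
      ∀ s ∈ Icc (0 : ℝ) T, ∀ t ∈ Icc (0 : ℝ) T,
        (X s).1 = (Y t).1 → (Y t).2 ≤ (X s).2) := by
  -- positivity on all of `[0, T]`
  have hposX' : ∀ t ∈ Icc (0 : ℝ) T, 0 < (Ψ (X t)).1 := by
    intro t ht
    rcases ht.1.eq_or_lt with h | h
    · rw [← h]; exact hpos0
    · exact hposX t ⟨h, ht.2⟩
  have hposY' : ∀ t ∈ Icc (0 : ℝ) T, 0 < (Ψ (Y t)).1 := by
    intro t ht
    rcases ht.1.eq_or_lt with h | h
    · rw [← h, ← hinit]; exact hpos0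
    · exact hposY t ⟨h, ht.2⟩
  have hXpos : ∀ t ∈ Icc (0 : ℝ) T, 0 < (X' t).1 := fun t ht => (hX1 t ht).symm ▸ hposX' t ht
  have hYpos : ∀ t ∈ Icc (0 : ℝ) T, 0 < (Y' t).1 := by
    intro t ht; rw [hYode t ht]; exact hposY' t ht
  refine ⟨⟨curve_mono hX hXpos, curve_mono hY hYpos⟩, ?_, ?_⟩
  · intro hX2
    exact graph_key T hT Ψ hΨ X Y X' Y' hX hY hYode hinit hposX' hposY' hX1 hX2
  · -- reflection trick: apply the key lemma to the reflected system
    intro hX2 s hs t ht heq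
    set Nl : ℝ × ℝ →L[ℝ] ℝ × ℝ :=
      (ContinuousLinearMap.fst ℝ ℝ ℝ).prod (-(ContinuousLinearMap.snd ℝ ℝ ℝ)) with hNl_def
    have hNl : ∀ p : ℝ × ℝ, Nl p = (p.1, -p.2) := fun p => rfl
    set Ψ' : ℝ × ℝ → ℝ × ℝ := fun p => Nl (Ψ (Nl p)) with hΨ'_def
    have hΨ' : ContDiff ℝ 1 Ψ' := Nl.contDiff.comp (hΨ.comp Nl.contDiff)
    have hNN : ∀ p : ℝ × ℝ, Nl (Nl p) = p := by
      intro p; simp [hNl]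
    have hXd : ∀ u ∈ Icc (0 : ℝ) T,
        HasDerivWithinAt (fun u => Nl (X u)) (Nl (X' u)) (Icc (0 : ℝ) T) u := fun u hu =>
      Nl.hasFDerivAt.comp_hasDerivWithinAt u (hX u hu)
    have hYd : ∀ u ∈ Icc (0 : ℝ) T,
        HasDerivWithinAt (fun u => Nl (Y u)) (Nl (Y' u)) (Icc (0 : ℝ) T) u := fun u hu =>
      Nl.hasFDerivAt.comp_hasDerivWithinAt u (hY u hu)
    have key := graph_key T hT Ψ' hΨ' (fun u => Nl (X u)) (fun u => Nl (Y u))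
      (fun u => Nl (X' u)) (fun u => Nl (Y' u)) hXd hYd
      (by intro u hu; simp only [hΨ'_def, hNN]; rw [hYode u hu])
      (by simp [hinit])
      (by intro u hu; simpa [hΨ'_def, hNN, hNl] using hposX' u hu)
      (by intro u hu; simpa [hΨ'_def, hNN, hNl] using hposY' u hu)
      (by intro u hu; simpa [hΨ'_def, hNN, hNl] using hX1 u hu)
      (by intro u hu; simpa [hΨ'_def, hNN, hNl] using neg_le_neg (hX2 u hu))
      s hs t ht (by simpa [hNl] using heq)
    simpa [hNl] using key
end

section
/- Fix real constants p > 2, β > 0, Λ > 0 and T, T' > 0. Let X : [0,T] → ℝ × [0,∞) be continuously differentiable and satisfy Condition I, with F₁(X(0)) > 0. Let A_L : [0,T'] → ℝ² be a solution of the initial value problem A_L'(t) = Φ_L(A_L(t)), A_L(0) = X(0). Define τ = inf{t ∈ [0,T] : F₁(X(t)) ≤ 0} (with τ = T if this set is empty) and τᴸ = inf{t ∈ [0,T'] : F₁(A_L(t)) ≤ 0} (with τᴸ = T' if empty). Then: (i) t ↦ X₁(t) is strictly increasing on [0, τ]; and (ii) for every s ∈ [0, τ] and t ∈ [0, τᴸ]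 with X₁(s) = A_{L,1}(t), one has X₂(s) ≥ A_{L,2}(t). -/
open Set

/-- `F₁(u,v) = -p·u + β·v`. -/
noncomputable def F1 (p β : ℝ) (z : ℝ × ℝ) : ℝ := -p * z.1 + β * z.2

/-- `F₂ᴸ(u,v) = 2p(p-1) - 2(p-1)v + 2pu(pu - βv) - 2βΛv`. -/
noncomputable def F2L (p β Λ : ℝ) (z : ℝ × ℝ) : ℝ :=
  2 * p * (p - 1) - 2 * (p - 1) * z.2 + 2 * p * z.1 * (p * z.1 - β * z.2) - 2 * β * Λ * z.2

/-- `F₂ᵁ(u,v) = 2p(p-1) - 2(p-1)v + 2pu(pu - βv) + 2βΛv`. -/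
noncomputable def F2U (p β Λ : ℝ) (z : ℝ × ℝ) : ℝ :=
  2 * p * (p - 1) - 2 * (p - 1) * z.2 + 2 * p * z.1 * (p * z.1 - β * z.2) + 2 * β * Λ * z.2

/-- The lower bounding vector field `Φ_L = (F₁, F₂ᴸ)`. -/
noncomputable def PhiL (p β Λ : ℝ) (z : ℝ × ℝ) : ℝ × ℝ := (F1 p β z, F2L p β Λ z)

/-- The upper bounding vector field `Φ_U = (F₁, F₂ᵁ)`. -/
noncomputable def PhiU (p β Λ : ℝ) (z : ℝ × ℝ) : ℝ × ℝ := (F1 p β z, F2U p β Λ z)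

/-- **Condition I**: `U : [0,T] → ℝ²` is `C¹` with derivative `U'` satisfying
`U₁' = F₁(U)` and `F₂ᴸ(U) ≤ U₂' ≤ F₂ᵁ(U)` on `[0,T]`. -/
def CondI (p β Λ T : ℝ) (U U' : ℝ → ℝ × ℝ) : Prop :=
  (∀ t ∈ Icc (0 : ℝ) T, HasDerivWithinAt U (U' t) (Icc (0 : ℝ) T) t) ∧
  ContinuousOn U' (Icc (0 : ℝ) T) ∧
  (∀ t ∈ Icc (0 : ℝ) T, (U' t).1 = F1 p β (U t)) ∧
  (∀ t ∈ Icc (0 : ℝ) T, F2L p β Λ (U t) ≤ (U' t).2 ∧ (U' t).2 ≤ F2U p β Λ (U t))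

private lemma hasDerivAt_fst' {Y : ℝ → ℝ × ℝ} {d : ℝ × ℝ} {t : ℝ} (h : HasDerivAt Y d t) :
    HasDerivAt (fun r => (Y r).1) d.1 t := by
  exact ((ContinuousLinearMap.fst ℝ ℝ ℝ).hasFDerivAt (x := Y t)).comp_hasDerivAt t h

private lemma hasDerivAt_snd' {Y : ℝ → ℝ × ℝ} {d : ℝ × ℝ} {t : ℝ} (h : HasDerivAt Y d t) :
    HasDerivAt (fun r => (Y r).2) d.2 t := by
  exact ((ContinuousLinearMap.snd ℝ ℝ ℝ).hasFDerivAt (x := Y t)).comp_hasDerivAt t h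

private lemma tau_mem (p β TY : ℝ) (Y : ℝ → ℝ × ℝ) (hT : 0 < TY) :
    sInf ({t ∈ Icc (0:ℝ) TY | F1 p β (Y t) ≤ 0} ∪ {TY}) ∈ Icc (0:ℝ) TY := by
  constructor
  · apply le_csInf ⟨TY, Or.inr rfl⟩
    rintro b (hb | hb)
    · exact hb.1.1
    · exact (mem_singleton_iff.1 hb) ▸ hT.le
  · exact csInf_le ⟨0, by rintro b (hb | hb); exacts [hb.1.1, (mem_singleton_iff.1 hb) ▸ hT.le]⟩
      (Or.inr rfl)

private lemma tau_pos_before (p β TY : ℝ) (Y : ℝ → ℝ × ℝ) (hT : 0 < TY) {t : ℝ} (ht0 : 0 ≤ t)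
    (htτ : t < sInf ({t ∈ Icc (0:ℝ) TY | F1 p β (Y t) ≤ 0} ∪ {TY})) :
    0 < F1 p β (Y t) := by
  by_contra h
  push_neg at h
  have htT : t ∈ Icc (0:ℝ) TY := ⟨ht0, (htτ.trans_le (tau_mem p β TY Y hT).2).le⟩
  have : sInf ({t ∈ Icc (0:ℝ) TY | F1 p β (Y t) ≤ 0} ∪ {TY}) ≤ t :=
    csInf_le ⟨0, by rintro b (hb | hb); exacts [hb.1.1, (mem_singleton_iff.1 hb) ▸ hT.le]⟩
      (Or.inl ⟨htT, h⟩)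
  exact absurd htτ (not_lt.2 this)

private lemma strictMono_first (p β TY : ℝ) (Y Y' : ℝ → ℝ × ℝ) (hT : 0 < TY)
    (hder : ∀ t ∈ Icc (0:ℝ) TY, HasDerivWithinAt Y (Y' t) (Icc (0:ℝ) TY) t)
    (hfst : ∀ t ∈ Icc (0:ℝ) TY, (Y' t).1 = F1 p β (Y t)) :
    StrictMonoOn (fun t => (Y t).1)
      (Icc (0:ℝ) (sInf ({t ∈ Icc (0:ℝ) TY | F1 p β (Y t) ≤ 0} ∪ {TY}))) := by
  have hτ := tau_mem p β TY Y hT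
  have hYc : ContinuousOn Y (Icc (0:ℝ) TY) := fun r hr => (hder r hr).continuousWithinAt
  apply strictMonoOn_of_deriv_pos (convex_Icc _ _)
  · exact continuous_fst.comp_continuousOn (hYc.mono (Icc_subset_Icc le_rfl hτ.2))
  · intro x hx
    rw [interior_Icc] at hx
    have hxT : x ∈ Icc (0:ℝ) TY := ⟨hx.1.le, (hx.2.trans_le hτ.2).le⟩
    have hd : HasDerivAt Y (Y' x) x :=
      (hder x hxT).hasDerivAt (Icc_mem_nhds hx.1 (hx.2.trans_le hτ.2))
    rw [(hasDerivAt_fst' hd).deriv, hfst x hxT]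
    exact tau_pos_before p β TY Y hT hx.1.le hx.2

private lemma exists_param (p β TY τ s : ℝ) (Y : ℝ → ℝ × ℝ)
    (hs0 : 0 ≤ s) (hsτ : s ≤ τ) (hτT : τ ≤ TY)
    (hYc : ContinuousOn Y (Icc (0:ℝ) TY))
    (hmono : StrictMonoOn (fun r => (Y r).1) (Icc (0:ℝ) τ))
    (hder : ∀ r : ℝ, 0 < r → r < s → HasDerivAt (fun x => (Y x).1) (F1 p β (Y r)) r)
    (hpos : ∀ r : ℝ, 0 ≤ r → r < τ → 0 < F1 p β (Y r)) :
    ∃ σ : ℝ → ℝ,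
      (∀ u ∈ Icc (Y 0).1 (Y s).1, σ u ∈ Icc (0:ℝ) s ∧ (Y (σ u)).1 = u) ∧
      ContinuousOn σ (Icc (Y 0).1 (Y s).1) ∧
      (∀ u ∈ Ioo (Y 0).1 (Y s).1, σ u ∈ Ioo (0:ℝ) s ∧
        HasDerivAt σ (F1 p β (Y (σ u)))⁻¹ u) := by
  have h0τ : (0:ℝ) ∈ Icc (0:ℝ) τ := ⟨le_rfl, hs0.trans hsτ⟩
  have hsmem : s ∈ Icc (0:ℝ) τ := ⟨hs0, hsτ⟩
  have hsub : Icc (0:ℝ) s ⊆ Icc (0:ℝ) TY := Icc_subset_Icc le_rfl (hsτ.trans hτT)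
  have hsubτ : Icc (0:ℝ) s ⊆ Icc (0:ℝ) τ := Icc_subset_Icc le_rfl hsτ
  have hc1 : ContinuousOn (fun r => (Y r).1) (Icc (0:ℝ) s) :=
    continuous_fst.comp_continuousOn (hYc.mono hsub)
  have hmem : ∀ r ∈ Icc (0:ℝ) s, (Y r).1 ∈ Icc (Y 0).1 (Y s).1 := fun r hr =>
    ⟨hmono.monotoneOn h0τ (hsubτ hr) hr.1, hmono.monotoneOn (hsubτ hr) hsmem hr.2⟩
  set f : Icc (0:ℝ) s → Icc (Y 0).1 (Y s).1 := fun r => ⟨(Y r).1, hmem r r.2⟩ with hf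
  have hfc : Continuous f :=
    Continuous.subtype_mk (continuousOn_iff_continuous_restrict.mp hc1) _
  have hbij : Function.Bijective f := by
    constructor
    · intro a b hab
      exact Subtype.ext (hmono.injOn (hsubτ a.2) (hsubτ b.2)
        (congrArg Subtype.val hab))
    · intro v
      obtain ⟨r, hr, hrv⟩ := intermediate_value_Icc hs0 hc1 v.2
      exact ⟨⟨r, hr⟩, Subtype.ext hrv⟩
  let e : Icc (0:ℝ) s ≃ Icc (Y 0).1 (Y s).1 := Equiv.ofBijective f hbij
  have hec : Continuous (e : Icc (0:ℝ) s → Icc (Y 0).1 (Y s).1) := hfc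
  let E := Continuous.homeoOfEquivCompactToT2 (f := e) hec
  set σ : ℝ → ℝ := fun u =>
    if h : u ∈ Icc (Y 0).1 (Y s).1 then (E.symm ⟨u, h⟩ : ℝ) else 0 with hσ
  have key : ∀ u, ∀ h : u ∈ Icc (Y 0).1 (Y s).1, σ u ∈ Icc (0:ℝ) s ∧ (Y (σ u)).1 = u := by
    intro u h
    have h1 : σ u = (E.symm ⟨u, h⟩ : ℝ) := dif_pos h
    constructor
    · rw [h1]; exact (E.symm ⟨u, h⟩).2
    · have h2 : E (E.symm ⟨u, h⟩) = ⟨u, h⟩ := E.apply_symm_apply _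
      have h3 : (f (E.symm ⟨u, h⟩) : ℝ) = u := congrArg Subtype.val h2
      rw [h1]; exact h3
  have hσc : ContinuousOn σ (Icc (Y 0).1 (Y s).1) := by
    rw [continuousOn_iff_continuous_restrict]
    have hres : restrict (Icc (Y 0).1 (Y s).1) σ = fun x => (E.symm x : ℝ) := by
      funext x
      exact dif_pos x.2
    refine (?_ : Continuous (restrict (Icc (Y 0).1 (Y s).1) σ)); rw [hres]
    exact continuous_subtype_val.comp E.symm.continuous
  refine ⟨σ, key, hσc, ?_⟩
  intro u hu
  obtain ⟨hσmem, hσY⟩ := key u (Ioo_subset_Icc_self hu)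
  have hσuIoo : σ u ∈ Ioo (0:ℝ) s := by
    constructor
    · rcases eq_or_lt_of_le hσmem.1 with h | h
      · exfalso; rw [← h] at hσY; exact (ne_of_lt hu.1) hσY
      · exact h
    · rcases eq_or_lt_of_le hσmem.2 with h | h
      · exfalso; rw [h] at hσY; exact (ne_of_gt hu.2) hσY
      · exact h
  refine ⟨hσuIoo, ?_⟩
  have hca : ContinuousAt σ u :=
    (hσc u (Ioo_subset_Icc_self hu)).continuousAt (Icc_mem_nhds hu.1 hu.2)
  have hdY : HasDerivAt (fun x => (Y x).1) (F1 p β (Y (σ u))) (σ u) :=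
    hder _ hσuIoo.1 hσuIoo.2
  have hne : F1 p β (Y (σ u)) ≠ 0 := (hpos _ hσmem.1 (hσuIoo.2.trans_le hsτ)).ne'
  have hfg : ∀ᶠ y in nhds u, (fun x => (Y x).1) (σ y) = y := by
    filter_upwards [isOpen_Ioo.mem_nhds hu] with y hy
    exact (key y (Ioo_subset_Icc_self hy)).2
  exact HasDerivAt.of_local_left_inverse hca hdY hne hfg

set_option maxHeartbeats 2000000 in
/-- Comparison of a curve satisfying Condition I with the lower bounding flow `A_L`,
up to the first times `τ`, `τᴸ` at which `F₁` becomes nonpositive (taken to be `T`,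
resp. `T'`, if this never happens): `X₁` is strictly increasing on `[0,τ]`, and whenever
`X₁(s) = A_{L,1}(t)` (for `s ≤ τ`, `t ≤ τᴸ`) one has `X₂(s) ≥ A_{L,2}(t)`. -/
theorem lower_flow_graph_comparison
    (p β Λ T T' : ℝ) (hp : 2 < p) (hβ : 0 < β) (hΛ : 0 < Λ) (hT : 0 < T) (hT' : 0 < T')
    (X X' : ℝ → ℝ × ℝ) (hXI : CondI p β Λ T X X')
    (hXrange : ∀ t ∈ Icc (0 : ℝ) T, 0 ≤ (X t).2)
    (hX0 : 0 < F1 p β (X 0))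
    (AL : ℝ → ℝ × ℝ)
    (hAL : ∀ t ∈ Icc (0 : ℝ) T', HasDerivWithinAt AL (PhiL p β Λ (AL t)) (Icc (0 : ℝ) T') t)
    (hAL0 : AL 0 = X 0) :
    StrictMonoOn (fun t => (X t).1)
      (Icc (0 : ℝ) (sInf ({t ∈ Icc (0 : ℝ) T | F1 p β (X t) ≤ 0} ∪ {T}))) ∧
    (∀ s ∈ Icc (0 : ℝ) (sInf ({t ∈ Icc (0 : ℝ) T | F1 p β (X t) ≤ 0} ∪ {T})),
      ∀ t ∈ Icc (0 : ℝ) (sInf ({t ∈ Icc (0 : ℝ) T' | F1 p β (AL t) ≤ 0} ∪ {T'})),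
        (X s).1 = (AL t).1 → (AL t).2 ≤ (X s).2) := by
  obtain ⟨hXd, hXc', hXfst, hXineq⟩ := hXI
  have hALfst : ∀ r ∈ Icc (0:ℝ) T', (PhiL p β Λ (AL r)).1 = F1 p β (AL r) := fun _ _ => rfl
  have hXmono := strictMono_first p β T X X' hT hXd hXfst
  have hALmono := strictMono_first p β T' AL (fun r => PhiL p β Λ (AL r)) hT' hAL hALfst
  refine ⟨hXmono, ?_⟩
  intro s hs t ht hst
  set τ := sInf ({t ∈ Icc (0:ℝ) T | F1 p β (X t) ≤ 0} ∪ {T}) with hτdef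
  set τL := sInf ({t ∈ Icc (0:ℝ) T' | F1 p β (AL t) ≤ 0} ∪ {T'}) with hτLdef
  have hτ : τ ∈ Icc (0:ℝ) T := tau_mem p β T X hT
  have hτL : τL ∈ Icc (0:ℝ) T' := tau_mem p β T' AL hT'
  have hXcont : ContinuousOn X (Icc (0:ℝ) T) := fun r hr => (hXd r hr).continuousWithinAt
  have hALcont : ContinuousOn AL (Icc (0:ℝ) T') := fun r hr => (hAL r hr).continuousWithinAt
  have h0τ : (0:ℝ) ∈ Icc (0:ℝ) τ := ⟨le_rfl, hτ.1⟩
  have h0τL : (0:ℝ) ∈ Icc (0:ℝ) τL := ⟨le_rfl, hτL.1⟩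
  have h00 : (AL 0).1 = (X 0).1 := by rw [hAL0]
  rcases eq_or_lt_of_le (hXmono.monotoneOn h0τ hs hs.1) with hdeg | hlt
  · -- degenerate case : (X 0).1 = (X s).1, so s = 0, t = 0
    have hs0 : (0:ℝ) = s := hXmono.injOn h0τ hs hdeg
    have ht0 : (0:ℝ) = t := hALmono.injOn h0τL ht (by rw [h00, ← hst, ← hs0])
    rw [← hs0, ← ht0, hAL0]
  · -- main case
    set u₀ := (X 0).1 with hu₀def
    set u₁ := (X s).1 with hu₁def
    have hτT : τ ≤ T := hτ.2
    have hτLT : τL ≤ T' := hτL.2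
    -- interior derivatives of the first coordinates
    have hderX : ∀ r : ℝ, 0 < r → r < s → HasDerivAt (fun x => (X x).1) (F1 p β (X r)) r := by
      intro r hr0 hrs
      have hrT : r ∈ Icc (0:ℝ) T := ⟨hr0.le, (hrs.trans_le (hs.2.trans hτT)).le⟩
      have hd : HasDerivAt X (X' r) r :=
        (hXd r hrT).hasDerivAt (Icc_mem_nhds hr0 (hrs.trans_le (hs.2.trans hτT)))
      have h2 := hasDerivAt_fst' hd
      rwa [hXfst r hrT] at h2
    have hderAL : ∀ r : ℝ, 0 < r → r < t → HasDerivAt (fun x => (AL x).1) (F1 p β (AL r)) r := by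
      intro r hr0 hrt
      have hrT : r ∈ Icc (0:ℝ) T' := ⟨hr0.le, (hrt.trans_le (ht.2.trans hτLT)).le⟩
      have hd : HasDerivAt AL (PhiL p β Λ (AL r)) r :=
        (hAL r hrT).hasDerivAt (Icc_mem_nhds hr0 (hrt.trans_le (ht.2.trans hτLT)))
      exact hasDerivAt_fst' hd
    have hposX : ∀ r : ℝ, 0 ≤ r → r < τ → 0 < F1 p β (X r) :=
      fun r h1 h2 => tau_pos_before p β T X hT h1 h2
    have hposAL : ∀ r : ℝ, 0 ≤ r → r < τL → 0 < F1 p β (AL r) :=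
      fun r h1 h2 => tau_pos_before p β T' AL hT' h1 h2
    obtain ⟨σ, keyX, hσc, hσd⟩ :=
      exists_param p β T τ s X hs.1 hs.2 hτT hXcont hXmono hderX hposX
    obtain ⟨σL, keyL, hσLc, hσLd⟩ :=
      exists_param p β T' τL t AL ht.1 ht.2 hτLT hALcont hALmono hderAL hposAL
    rw [h00, ← hst] at keyL hσLc hσLd
    rw [← hu₁def] at keyX hσc hσd
    -- basic endpoint identifications
    have hsubXτ : Icc (0:ℝ) s ⊆ Icc (0:ℝ) τ := Icc_subset_Icc le_rfl hs.2
    have hsubLτ : Icc (0:ℝ) t ⊆ Icc (0:ℝ) τL := Icc_subset_Icc le_rfl ht.2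
    have hσ0 : σ u₀ = 0 :=
      hXmono.injOn (hsubXτ (keyX u₀ ⟨le_rfl, hlt.le⟩).1) h0τ (keyX u₀ ⟨le_rfl, hlt.le⟩).2
    have hσ1 : σ u₁ = s :=
      hXmono.injOn (hsubXτ (keyX u₁ ⟨hlt.le, le_rfl⟩).1) hs (keyX u₁ ⟨hlt.le, le_rfl⟩).2
    have hσL0 : σL u₀ = 0 := by
      refine hALmono.injOn (hsubLτ (keyL u₀ ⟨le_rfl, hlt.le⟩).1) h0τL ?_
      rw [(keyL u₀ ⟨le_rfl, hlt.le⟩).2]; exact h00.symm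
    have hσL1 : σL u₁ = t := by
      refine hALmono.injOn (hsubLτ (keyL u₁ ⟨hlt.le, le_rfl⟩).1) ht ?_
      rw [(keyL u₁ ⟨hlt.le, le_rfl⟩).2]; exact hst
    set g : ℝ → ℝ := fun u => (X (σ u)).2 with hgdef
    set h : ℝ → ℝ := fun u => (AL (σL u)).2 with hhdef
    set w : ℝ → ℝ := fun u => h u - g u with hwdef
    have hw0 : w u₀ = 0 := by
      simp only [hwdef, hhdef, hgdef, hσ0, hσL0, hAL0, sub_self]
    -- continuity of w on [u₀, u₁]
    have hsubXs : Icc (0:ℝ) s ⊆ Icc (0:ℝ) T := Icc_subset_Icc le_rfl (hs.2.trans hτT)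
    have hsubLs : Icc (0:ℝ) t ⊆ Icc (0:ℝ) T' := Icc_subset_Icc le_rfl (ht.2.trans hτLT)
    have hgc : ContinuousOn g (Icc u₀ u₁) :=
      (continuous_snd.comp_continuousOn (hXcont.mono hsubXs)).comp hσc
        (fun u hu => (keyX u hu).1)
    have hhc : ContinuousOn h (Icc u₀ u₁) :=
      (continuous_snd.comp_continuousOn (hALcont.mono hsubLs)).comp hσLc
        (fun u hu => (keyL u hu).1)
    have hwc : ContinuousOn w (Icc u₀ u₁) := hhc.sub hgc
    -- the main claim : w ≤ 0 on [u₀, u₁)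
    have claimA : ∀ u' ∈ Ico u₀ u₁, w u' ≤ 0 := by
      intro u' hu'
      by_contra hcon
      push_neg at hcon
      have hIccne : (Icc u₀ u').Nonempty := ⟨u₀, le_rfl, hu'.1⟩
      have hIccsub : Icc u₀ u' ⊆ Icc u₀ u₁ := Icc_subset_Icc le_rfl hu'.2.le
      -- σ stays strictly before s (resp. t) on [u₀, u']
      have hσlt : ∀ u ∈ Icc u₀ u', σ u < s := by
        intro u hu
        rcases lt_or_ge (σ u) s with hlt' | hge
        · exact hlt'
        · exfalso
          have := hXmono.monotoneOn hs (hsubXτ (keyX u (hIccsub hu)).1) hge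
          rw [(keyX u (hIccsub hu)).2] at this
          exact absurd (lt_of_le_of_lt (le_trans this hu.2) hu'.2) (lt_irrefl u₁)
      have hσLlt : ∀ u ∈ Icc u₀ u', σL u < t := by
        intro u hu
        rcases lt_or_ge (σL u) t with hlt' | hge
        · exact hlt'
        · exfalso
          have := hALmono.monotoneOn ht (hsubLτ (keyL u (hIccsub hu)).1) hge
          rw [(keyL u (hIccsub hu)).2, ← hst] at this
          exact absurd (lt_of_le_of_lt (le_trans this hu.2) hu'.2) (lt_irrefl u₁)
      have hposg : ∀ u ∈ Icc u₀ u', 0 < F1 p β (X (σ u)) := fun u hu =>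
        hposX _ (keyX u (hIccsub hu)).1.1 ((hσlt u hu).trans_le hs.2)
      have hposh : ∀ u ∈ Icc u₀ u', 0 < F1 p β (AL (σL u)) := fun u hu =>
        hposAL _ (keyL u (hIccsub hu)).1.1 ((hσLlt u hu).trans_le ht.2)
      -- continuity of the denominators
      have hF1c : Continuous (F1 p β) := by unfold F1; fun_prop
      have hφgc : ContinuousOn (fun u => F1 p β (X (σ u))) (Icc u₀ u') :=
        hF1c.comp_continuousOn (((hXcont.mono hsubXs).comp (hσc.mono hIccsub)
          (fun u hu => (keyX u (hIccsub hu)).1)))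
      have hφhc : ContinuousOn (fun u => F1 p β (AL (σL u))) (Icc u₀ u') :=
        hF1c.comp_continuousOn (((hALcont.mono hsubLs).comp (hσLc.mono hIccsub)
          (fun u hu => (keyL u (hIccsub hu)).1)))
      obtain ⟨xg, hxg, hxgmin⟩ := isCompact_Icc.exists_isMinOn hIccne hφgc
      obtain ⟨xh, hxh, hxhmin⟩ := isCompact_Icc.exists_isMinOn hIccne hφhc
      set δ : ℝ := min (F1 p β (X (σ xg))) (F1 p β (AL (σL xh))) with hδdef
      have hδ : 0 < δ := lt_min (hposg xg hxg) (hposh xh hxh)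
      have hδg : ∀ u ∈ Icc u₀ u', δ ≤ F1 p β (X (σ u)) := fun u hu =>
        le_trans (min_le_left _ _) (hxgmin hu)
      have hδh : ∀ u ∈ Icc u₀ u', δ ≤ F1 p β (AL (σL u)) := fun u hu =>
        le_trans (min_le_right _ _) (hxhmin hu)
      -- bound for the coefficient C
      set C : ℝ → ℝ := fun u =>
        p * u * (2 * (p - 1) + 2 * p * β * u + 2 * β * Λ) -
          (2 * p * (p - 1) + 2 * p ^ 2 * u ^ 2) * β with hCdef
      have hCc : Continuous C := by rw [hCdef]; fun_prop
      obtain ⟨xM, hxM, hxMmax⟩ :=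
        isCompact_Icc.exists_isMaxOn hIccne (continuous_abs.comp hCc).continuousOn
      set M : ℝ := |C xM| with hMdef
      have hM0 : 0 ≤ M := abs_nonneg _
      have hMb : ∀ u ∈ Icc u₀ u', C u ≤ M := fun u hu =>
        le_trans (le_abs_self _) (hxMmax hu)
      set K : ℝ := M / δ ^ 2 with hKdef
      have hK0 : 0 ≤ K := div_nonneg hM0 (by positivity)
      -- pointwise derivative bound where w > 0
      have hderiv : ∀ u ∈ Ioo u₀ u', 0 < w u →
          ∃ dw : ℝ, HasDerivAt w dw u ∧ dw ≤ K * w u := by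
        intro u hu hwu
        have huIcc : u ∈ Icc u₀ u' := Ioo_subset_Icc_self hu
        have huIoo1 : u ∈ Ioo u₀ u₁ := ⟨hu.1, hu.2.trans hu'.2⟩
        obtain ⟨hσIoo, hσdu⟩ := hσd u huIoo1
        obtain ⟨hσLIoo, hσLdu⟩ := hσLd u huIoo1
        have hσT : σ u ∈ Icc (0:ℝ) T := hsubXs ⟨hσIoo.1.le, hσIoo.2.le⟩
        have hσLT : σL u ∈ Icc (0:ℝ) T' := hsubLs ⟨hσLIoo.1.le, hσLIoo.2.le⟩
        have hX2d : HasDerivAt (fun r => (X r).2) ((X' (σ u)).2) (σ u) :=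
          hasDerivAt_snd' ((hXd _ hσT).hasDerivAt
            (Icc_mem_nhds hσIoo.1 (hσIoo.2.trans_le (hs.2.trans hτT))))
        have hAL2d : HasDerivAt (fun r => (AL r).2) ((PhiL p β Λ (AL (σL u))).2) (σL u) :=
          hasDerivAt_snd' ((hAL _ hσLT).hasDerivAt
            (Icc_mem_nhds hσLIoo.1 (hσLIoo.2.trans_le (ht.2.trans hτLT))))
        have hgd : HasDerivAt g ((X' (σ u)).2 * (F1 p β (X (σ u)))⁻¹) u :=
          HasDerivAt.comp u hX2d hσdu
        have hhd : HasDerivAt h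
            (F2L p β Λ (AL (σL u)) * (F1 p β (AL (σL u)))⁻¹) u :=
          HasDerivAt.comp u hAL2d hσLdu
        refine ⟨_, hhd.sub hgd, ?_⟩
        -- now the algebraic estimate
        set a : ℝ := (X (σ u)).2 with hadef
        set b : ℝ := (AL (σL u)).2 with hbdef
        have hfa : (X (σ u)).1 = u := (keyX u (hIccsub huIcc)).2
        have hfb : (AL (σL u)).1 = u := (keyL u (hIccsub huIcc)).2
        have hda : δ ≤ F1 p β (X (σ u)) := hδg u huIcc
        have hdb : δ ≤ F1 p β (AL (σL u)) := hδh u huIcc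
        have hdapos : 0 < F1 p β (X (σ u)) := hδ.trans_le hda
        have hdbpos : 0 < F1 p β (AL (σL u)) := hδ.trans_le hdb
        have hF2a : F2L p β Λ (X (σ u)) ≤ (X' (σ u)).2 := (hXineq _ hσT).1
        have hwub : w u = b - a := rfl
        -- key identity
        have hid : F2L p β Λ (AL (σL u)) * F1 p β (X (σ u)) -
            F2L p β Λ (X (σ u)) * F1 p β (AL (σL u)) = C u * (b - a) := by
          simp only [F1, F2L, hCdef, hfa, hfb, ← hadef, ← hbdef]
          ring
        have step1 : F2L p β Λ (AL (σL u)) * (F1 p β (AL (σL u)))⁻¹ -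
            (X' (σ u)).2 * (F1 p β (X (σ u)))⁻¹ ≤
            F2L p β Λ (AL (σL u)) * (F1 p β (AL (σL u)))⁻¹ -
            F2L p β Λ (X (σ u)) * (F1 p β (X (σ u)))⁻¹ := by
          have := mul_le_mul_of_nonneg_right hF2a (inv_nonneg.2 hdapos.le)
          linarith
        have step2 : F2L p β Λ (AL (σL u)) * (F1 p β (AL (σL u)))⁻¹ -
            F2L p β Λ (X (σ u)) * (F1 p β (X (σ u)))⁻¹ =
            C u * (b - a) * ((F1 p β (AL (σL u))) * (F1 p β (X (σ u))))⁻¹ := by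
          rw [← hid]
          field_simp
        have step3 : C u * (b - a) * ((F1 p β (AL (σL u))) * (F1 p β (X (σ u))))⁻¹ ≤
            K * w u := by
          have hprodpos : 0 < F1 p β (AL (σL u)) * F1 p β (X (σ u)) :=
            mul_pos hdbpos hdapos
          have hδ2le : δ ^ 2 ≤ F1 p β (AL (σL u)) * F1 p β (X (σ u)) := by
            nlinarith
          rcases le_or_gt (C u * (b - a)) 0 with hc | hc
          · have h1 : C u * (b - a) * ((F1 p β (AL (σL u))) * (F1 p β (X (σ u))))⁻¹ ≤ 0 :=
              mul_nonpos_of_nonpos_of_nonneg hc (inv_nonneg.2 hprodpos.le)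
            have h2 : 0 ≤ K * w u := mul_nonneg hK0 hwu.le
            exact h1.trans h2
          · have hinvle : ((F1 p β (AL (σL u))) * (F1 p β (X (σ u))))⁻¹ ≤ (δ ^ 2)⁻¹ :=
              inv_anti₀ (by positivity) hδ2le
            have h1 : C u * (b - a) * ((F1 p β (AL (σL u))) * (F1 p β (X (σ u))))⁻¹ ≤
                C u * (b - a) * (δ ^ 2)⁻¹ :=
              mul_le_mul_of_nonneg_left hinvle hc.le
            have h2 : C u * (b - a) ≤ M * (b - a) := by
              have hba : 0 ≤ b - a := by rw [← hwub]; exact hwu.le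
              exact mul_le_mul_of_nonneg_right (hMb u huIcc) hba
            have h3 : C u * (b - a) * (δ ^ 2)⁻¹ ≤ M * (b - a) * (δ ^ 2)⁻¹ :=
              mul_le_mul_of_nonneg_right h2 (by positivity)
            have h4 : M * (b - a) * (δ ^ 2)⁻¹ = K * w u := by
              rw [hwub, hKdef]; ring
            exact (h1.trans h3).trans h4.le
        calc F2L p β Λ (AL (σL u)) * (F1 p β (AL (σL u)))⁻¹ -
              (X' (σ u)).2 * (F1 p β (X (σ u)))⁻¹
            ≤ C u * (b - a) * ((F1 p β (AL (σL u))) * (F1 p β (X (σ u))))⁻¹ := by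
              rw [← step2]; exact step1
          _ ≤ K * w u := step3
      -- the sSup / Gronwall contradiction
      set Sz : Set ℝ := Icc u₀ u' ∩ w ⁻¹' (Iic 0) with hSzdef
      have hSzc : IsClosed Sz :=
        (hwc.mono hIccsub).preimage_isClosed_of_isClosed isClosed_Icc isClosed_Iic
      have hSzne : Sz.Nonempty := ⟨u₀, ⟨le_rfl, hu'.1⟩, by simp [hw0]⟩
      have hSzbdd : BddAbove Sz := ⟨u', fun x hx => hx.1.2⟩
      set z : ℝ := sSup Sz with hzdef
      have hzmem : z ∈ Sz := hSzc.csSup_mem hSzne hSzbdd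
      have hz0 : w z ≤ 0 := hzmem.2
      have hzu' : z ≤ u' := hzmem.1.2
      have hzu₀ : u₀ ≤ z := hzmem.1.1
      have hzlt : z < u' := by
        rcases eq_or_lt_of_le hzu' with he | hlt'
        · exfalso; rw [he] at hz0; linarith
        · exact hlt'
      have hwpos : ∀ x ∈ Ioc z u', 0 < w x := by
        intro x hx
        by_contra h'
        push_neg at h'
        have : x ∈ Sz := ⟨⟨hzu₀.trans hx.1.le, hx.2⟩, h'⟩
        exact absurd (le_csSup hSzbdd this) (not_le.2 hx.1)
      set φ : ℝ → ℝ := fun x => w x * Real.exp (-K * x) with hφdef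
      have hφkey : ∀ x ∈ Ioo z u', ∃ dφ : ℝ, HasDerivAt φ dφ x ∧ dφ ≤ 0 := by
        intro x hx
        have hxIoo : x ∈ Ioo u₀ u' := ⟨hzu₀.trans_lt hx.1, hx.2⟩
        have hwx : 0 < w x := hwpos x ⟨hx.1, hx.2.le⟩
        obtain ⟨dw, hdw, hdwle⟩ := hderiv x hxIoo hwx
        have hlin : HasDerivAt (fun y : ℝ => -K * y) (-K) x := by
          simpa using (hasDerivAt_id x).const_mul (-K)
        have hexp : HasDerivAt (fun y => Real.exp (-K * y)) (Real.exp (-K * x) * (-K)) x :=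
          HasDerivAt.exp hlin
        refine ⟨_, hdw.mul hexp, ?_⟩
        have he := Real.exp_pos (-K * x)
        nlinarith
      have hφant : AntitoneOn φ (Icc z u') := by
        apply antitoneOn_of_deriv_nonpos (convex_Icc _ _)
        · exact (hwc.mono (Icc_subset_Icc hzu₀ hu'.2.le)).mul
            (Continuous.continuousOn (by fun_prop))
        · intro x hx
          rw [interior_Icc] at hx
          exact ((hφkey x hx).choose_spec.1).differentiableAt.differentiableWithinAt
        · intro x hx
          rw [interior_Icc] at hx
          obtain ⟨dφ, h1, h2⟩ := hφkey x hx
          rw [h1.deriv]; exact h2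
      have hle : φ u' ≤ φ z := hφant ⟨le_rfl, hzlt.le⟩ ⟨hzlt.le, le_rfl⟩ hzlt.le
      have hφz : φ z ≤ 0 := mul_nonpos_of_nonpos_of_nonneg hz0 (Real.exp_pos _).le
      have hφu' : 0 < φ u' := mul_pos hcon (Real.exp_pos _)
      linarith
    -- pass to the closed endpoint u₁
    have hwu₁ : w u₁ ≤ 0 := by
      set S1 : Set ℝ := Icc u₀ u₁ ∩ w ⁻¹' (Iic 0) with hS1def
      have hS1c : IsClosed S1 :=
        hwc.preimage_isClosed_of_isClosed isClosed_Icc isClosed_Iic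
      have hIcoS : Ico u₀ u₁ ⊆ S1 := fun x hx =>
        ⟨⟨hx.1, hx.2.le⟩, claimA x hx⟩
      have hcl : closure (Ico u₀ u₁) ⊆ S1 := hS1c.closure_subset_iff.2 hIcoS
      have hu₁mem : u₁ ∈ closure (Ico u₀ u₁) := by
        rw [closure_Ico hlt.ne]
        exact ⟨hlt.le, le_rfl⟩
      exact (hcl hu₁mem).2
    have : (AL t).2 - (X s).2 ≤ 0 := by
      have : w u₁ = (AL t).2 - (X s).2 := by
        simp only [hwdef, hhdef, hgdef, hσ1, hσL1]
      linarith [hwu₁, this.symm.le, this.le]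
    linarith
end

section
/- Fix real constants p > 2, β > 0, Λ > 0 and T, T' > 0. Let X : [0,T] → ℝ × [0,∞) be continuously differentiable and satisfy Condition I, with F₁(X(0)) > 0. Let A_U : [0,T'] → ℝ² be a solution of the initial value problem A_U'(t) = Φ_U(A_U(t)), A_U(0) = X(0). Define τ = inf{t ∈ [0,T] : F₁(X(t)) ≤ 0} (with τ = T if this set is empty) and τᵁ = inf{t ∈ [0,T'] : F₁(A_U(t)) ≤ 0} (with τᵁ = T' if empty). Then for every s ∈ [0, τ] and t ∈ [0, τᵁ] with X₁(s) = A_{U,1}(t), one has X₂(s) ≤ A_{U,2}(t). -/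
open Set Filter Topology

/-- First-crossing lemma: a function that starts positive and has positive
derivative at any first zero stays positive. -/
lemma crossing_pos {h : ℝ → ℝ} {b : ℝ} (hb : 0 ≤ b) (hc : ContinuousOn h (Icc 0 b))
    (h0 : 0 < h 0)
    (key : ∀ t, 0 < t → t ≤ b → h t = 0 → (∀ r, 0 ≤ r → r < t → 0 < h r) →
      ∃ d, 0 < d ∧ HasDerivAt h d t) :
    ∀ t ∈ Icc (0:ℝ) b, 0 < h t := by
  by_contra hcon
  push_neg at hcon
  obtain ⟨t0, ht0, ht0'⟩ := hcon
  have hSne : ({t ∈ Icc (0:ℝ) b | h t ≤ 0}).Nonempty := ⟨t0, ht0, ht0'⟩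
  have hSbdd : BddBelow {t ∈ Icc (0:ℝ) b | h t ≤ 0} := ⟨0, fun x hx => hx.1.1⟩
  have hSclosed : IsClosed {t ∈ Icc (0:ℝ) b | h t ≤ 0} :=
    hc.preimage_isClosed_of_isClosed isClosed_Icc isClosed_Iic
  set c := sInf {t ∈ Icc (0:ℝ) b | h t ≤ 0} with hcdef
  have hcS : c ∈ {t ∈ Icc (0:ℝ) b | h t ≤ 0} := hSclosed.csInf_mem hSne hSbdd
  have hcIcc : c ∈ Icc (0:ℝ) b := hcS.1
  have hlt : ∀ r, 0 ≤ r → r < c → 0 < h r := by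
    intro r hr hrc
    by_contra hr'
    push_neg at hr'
    exact absurd (csInf_le hSbdd ⟨⟨hr, hrc.le.trans hcIcc.2⟩, hr'⟩) (not_le.mpr hrc)
  have hcpos : 0 < c := by
    rcases hcIcc.1.lt_or_eq with h' | h'
    · exact h'
    · exfalso; rw [← h'] at hcS; exact absurd hcS.2 (not_le.mpr h0)
  haveI hne : (𝓝[Ioo (0:ℝ) c] c).NeBot := by
    apply mem_closure_iff_nhdsWithin_neBot.1
    rw [closure_Ioo hcpos.ne]
    exact ⟨hcpos.le, le_rfl⟩
  have hceq : h c = 0 := by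
    refine le_antisymm hcS.2 ?_
    have htend : Filter.Tendsto h (𝓝[Ioo (0:ℝ) c] c) (𝓝 (h c)) :=
      ((hc c hcIcc).mono (fun x hx => ⟨hx.1.le, hx.2.le.trans hcIcc.2⟩)).tendsto
    exact ge_of_tendsto htend (eventually_nhdsWithin_of_forall fun r hr => (hlt r hr.1.le hr.2).le)
  obtain ⟨d, hd, hder⟩ := key c hcpos hcIcc.2 hceq hlt
  have hslope : Filter.Tendsto (slope h c) (𝓝[Ioo (0:ℝ) c] c) (𝓝 d) :=
    (hasDerivAt_iff_tendsto_slope.1 hder).mono_left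
      (nhdsWithin_mono _ (fun x hx => ne_of_lt hx.2))
  obtain ⟨r, hr1, hr2⟩ :=
    ((hslope.eventually (eventually_gt_nhds hd)).and self_mem_nhdsWithin).exists
  have hneg : slope h c r < 0 := by
    rw [slope_def_field, hceq]
    apply div_neg_of_pos_of_neg
    · simpa using hlt r hr2.1.le hr2.2
    · linarith [hr2.2]
  linarith

/-- Basic facts about the first time `F1` becomes nonpositive along a curve. -/
lemma tau_facts (p β T : ℝ) (hT : 0 < T) (Y Y' : ℝ → ℝ × ℝ)
    (hY : ∀ t ∈ Icc (0:ℝ) T, HasDerivWithinAt Y (Y' t) (Icc (0:ℝ) T) t)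
    (h1 : ∀ t ∈ Icc (0:ℝ) T, (Y' t).1 = F1 p β (Y t))
    (h0 : 0 < F1 p β (Y 0)) :
    sInf ({t ∈ Icc (0:ℝ) T | F1 p β (Y t) ≤ 0} ∪ {T}) ∈ Icc (0:ℝ) T ∧
    (∀ s, 0 ≤ s → s < sInf ({t ∈ Icc (0:ℝ) T | F1 p β (Y t) ≤ 0} ∪ {T}) →
      0 < F1 p β (Y s)) ∧
    StrictMonoOn (fun t => (Y t).1)
      (Icc (0:ℝ) (sInf ({t ∈ Icc (0:ℝ) T | F1 p β (Y t) ≤ 0} ∪ {T}))) := by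
  set S := {t ∈ Icc (0:ℝ) T | F1 p β (Y t) ≤ 0} ∪ {T} with hS
  have hbdd : BddBelow S := by
    refine ⟨0, fun x hx => ?_⟩
    rcases hx with hx | hx
    · exact hx.1.1
    · rw [mem_singleton_iff] at hx; rw [hx]; exact hT.le
  have hne : S.Nonempty := ⟨T, Or.inr rfl⟩
  have hτT : sInf S ≤ T := csInf_le hbdd (Or.inr rfl)
  have hτ0 : 0 ≤ sInf S := by
    apply le_csInf hne
    intro x hx
    rcases hx with hx | hx
    · exact hx.1.1
    · rw [mem_singleton_iff] at hx; rw [hx]; exact hT.le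
  have hpos : ∀ s, 0 ≤ s → s < sInf S → 0 < F1 p β (Y s) := by
    intro s hs0 hsτ
    by_contra hcon
    push_neg at hcon
    exact absurd (csInf_le hbdd (Or.inl ⟨⟨hs0, hsτ.le.trans hτT⟩, hcon⟩)) (not_le.mpr hsτ)
  refine ⟨⟨hτ0, hτT⟩, hpos, ?_⟩
  apply strictMonoOn_of_hasDerivWithinAt_pos (convex_Icc _ _)
    (f' := fun t => F1 p β (Y t))
  · intro r hr
    have hr' : r ∈ Icc (0:ℝ) T := ⟨hr.1, hr.2.trans hτT⟩
    exact ((hY r hr').continuousWithinAt.mono (Icc_subset_Icc le_rfl hτT)).fst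
  · intro r hr
    rw [interior_Icc] at hr ⊢
    have hr' : r ∈ Icc (0:ℝ) T := ⟨hr.1.le, (hr.2.trans_le hτT).le⟩
    have hd : HasDerivAt (fun t => (Y t).1) ((Y' r).1) r := by
      have := ((ContinuousLinearMap.fst ℝ ℝ ℝ).hasFDerivAt.comp_hasDerivWithinAt r (hY r hr'))
      exact (this.hasDerivAt (Icc_mem_nhds hr.1 (hr.2.trans_le hτT)))
    rw [h1 r hr'] at hd
    exact hd.hasDerivWithinAt
  · intro r hr
    rw [interior_Icc] at hr
    exact hpos r hr.1.le hr.2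

lemma aux_L_nonneg {p β Λ A : ℝ} (hp : 2 < p) (hβ : 0 < β) (hΛ : 0 < Λ) (hA : 0 ≤ A) :
    0 ≤ 2*(p-1) + 2*β*Λ + A := by nlinarith

lemma aux_c_le_L {p β Λ u a b : ℝ} (hp : 2 < p) (hβ : 0 < β) (hΛ : 0 < Λ)
    (hau : a ≤ u) : -2*(p-1) - 2*p*β*u + 2*β*Λ ≤ 2*(p-1) + 2*β*Λ + 2*p*β*(|a| + |b|) := by
  have h1 : -u ≤ |a| := le_trans (neg_le_neg hau) (neg_le_abs a)
  have hpb : 0 ≤ 2*p*β := mul_nonneg (by linarith) hβ.le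
  have h2 : 2*p*β*(-u) ≤ 2*p*β*(|a|) := mul_le_mul_of_nonneg_left h1 hpb
  have h3 : 0 ≤ 2*p*β*|b| := mul_nonneg hpb (abs_nonneg b)
  nlinarith [h2, h3]

lemma aux_key_ineq {β M δ L c e F2b fB : ℝ} (hβ : 0 < β) (hM0 : 0 ≤ M) (hδ : 0 < δ)
    (hL0 : 0 ≤ L) (hc : c ≤ L) (he : 0 < e) (hfBδ : δ ≤ fB) (hMb : -M ≤ F2b) :
    (F2b + c*e)*fB ≤ (F2b + (L + β*M/δ)*e)*(fB + β*e) := by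
  have hfB : 0 < fB := lt_of_lt_of_le hδ hfBδ
  have hA1' : 0 ≤ (L - c) * (e * fB) := mul_nonneg (by linarith) (mul_nonneg he.le hfB.le)
  have hA2' : β*M*e ≤ β*M/δ*e*fB := by
    rw [div_mul_eq_mul_div, div_mul_eq_mul_div, le_div_iff₀ hδ]
    nlinarith [mul_nonneg (mul_nonneg hβ.le hM0) he.le]
  have hA3' : 0 ≤ β*e*(F2b + M) := mul_nonneg (mul_nonneg hβ.le he.le) (by linarith)
  have hA4' : 0 ≤ (L + β*M/δ)*(β*(e*e)) := by
    have h5 : 0 ≤ β*M/δ := div_nonneg (mul_nonneg hβ.le hM0) hδ.le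
    exact mul_nonneg (by linarith) (mul_nonneg hβ.le (mul_nonneg he.le he.le))
  nlinarith [hA1', hA2', hA3', hA4']

set_option maxHeartbeats 1000000 in
/-- Comparison of a curve satisfying Condition I with the upper bounding flow `A_U`,
up to the first times `τ`, `τᵁ` at which `F₁` becomes nonpositive (taken to be `T`,
resp. `T'`, if this never happens): whenever `X₁(s) = A_{U,1}(t)` (for `s ≤ τ`, `t ≤ τᵁ`)
one has `X₂(s) ≤ A_{U,2}(t)`. -/
theorem upper_flow_graph_comparison
    (p β Λ T T' : ℝ) (hp : 2 < p) (hβ : 0 < β) (hΛ : 0 < Λ) (hT : 0 < T) (hT' : 0 < T')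
    (X X' : ℝ → ℝ × ℝ) (hXI : CondI p β Λ T X X')
    (hXrange : ∀ t ∈ Icc (0 : ℝ) T, 0 ≤ (X t).2)
    (hX0 : 0 < F1 p β (X 0))
    (AU : ℝ → ℝ × ℝ)
    (hAU : ∀ t ∈ Icc (0 : ℝ) T', HasDerivWithinAt AU (PhiU p β Λ (AU t)) (Icc (0 : ℝ) T') t)
    (hAU0 : AU 0 = X 0) :
    ∀ s ∈ Icc (0 : ℝ) (sInf ({t ∈ Icc (0 : ℝ) T | F1 p β (X t) ≤ 0} ∪ {T})),
      ∀ t ∈ Icc (0 : ℝ) (sInf ({t ∈ Icc (0 : ℝ) T' | F1 p β (AU t) ≤ 0} ∪ {T'})),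
        (X s).1 = (AU t).1 → (X s).2 ≤ (AU t).2 := by
  obtain ⟨hfX, hcX', h1X, h2X⟩ := hXI
  have hA1 : ∀ t ∈ Icc (0:ℝ) T', ((fun t => PhiU p β Λ (AU t)) t).1 = F1 p β (AU t) :=
    fun t _ => rfl
  have hA0 : 0 < F1 p β (AU 0) := by rw [hAU0]; exact hX0
  intro s hs t ht hst
  obtain ⟨hτmem, hFXpos, hXmono⟩ := tau_facts p β T hT X X' hfX h1X hX0
  obtain ⟨hτUmem, hFApos, hAmono⟩ := tau_facts p β T' hT' AU _ hAU hA1 hA0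
  set τ := sInf ({t ∈ Icc (0 : ℝ) T | F1 p β (X t) ≤ 0} ∪ {T}) with hτdef
  set τU := sInf ({t ∈ Icc (0 : ℝ) T' | F1 p β (AU t) ≤ 0} ∪ {T'}) with hτUdef
  have hτ0 : (0:ℝ) ≤ τ := hτmem.1
  have hτT : τ ≤ T := hτmem.2
  have hτU0 : (0:ℝ) ≤ τU := hτUmem.1
  have hτUT' : τU ≤ T' := hτUmem.2
  have hXc : ContinuousOn X (Icc 0 T) := fun r hr => (hfX r hr).continuousWithinAt
  have hAc : ContinuousOn AU (Icc 0 T') := fun r hr => (hAU r hr).continuousWithinAt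
  have hX1c : ContinuousOn (fun w => (X w).1) (Icc 0 T) := hXc.fst
  have hX2c : ContinuousOn (fun w => (X w).2) (Icc 0 T) := hXc.snd
  have hA1c : ContinuousOn (fun w => (AU w).1) (Icc 0 T') := hAc.fst
  have hA2c : ContinuousOn (fun w => (AU w).2) (Icc 0 T') := hAc.snd
  have hX1d : ∀ r, 0 < r → r < T → HasDerivAt (fun w => (X w).1) (F1 p β (X r)) r := by
    intro r h1 h2
    have hd := ((ContinuousLinearMap.fst ℝ ℝ ℝ).hasFDerivAt.comp_hasDerivWithinAt r
      (hfX r ⟨h1.le, h2.le⟩)).hasDerivAt (Icc_mem_nhds h1 h2)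
    rw [show (ContinuousLinearMap.fst ℝ ℝ ℝ) (X' r) = (X' r).1 from rfl,
      h1X r ⟨h1.le, h2.le⟩] at hd
    exact hd
  have hX2d : ∀ r, 0 < r → r < T → HasDerivAt (fun w => (X w).2) ((X' r).2) r := by
    intro r h1 h2
    exact ((ContinuousLinearMap.snd ℝ ℝ ℝ).hasFDerivAt.comp_hasDerivWithinAt r
      (hfX r ⟨h1.le, h2.le⟩)).hasDerivAt (Icc_mem_nhds h1 h2)
  have hA1d : ∀ r, 0 < r → r < T' → HasDerivAt (fun w => (AU w).1) (F1 p β (AU r)) r := by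
    intro r h1 h2
    exact ((ContinuousLinearMap.fst ℝ ℝ ℝ).hasFDerivAt.comp_hasDerivWithinAt r
      (hAU r ⟨h1.le, h2.le⟩)).hasDerivAt (Icc_mem_nhds h1 h2)
  have hA2d : ∀ r, 0 < r → r < T' → HasDerivAt (fun w => (AU w).2) (F2U p β Λ (AU r)) r := by
    intro r h1 h2
    exact ((ContinuousLinearMap.snd ℝ ℝ ℝ).hasFDerivAt.comp_hasDerivWithinAt r
      (hAU r ⟨h1.le, h2.le⟩)).hasDerivAt (Icc_mem_nhds h1 h2)
  -- interior comparison
  have key : ∀ s₁ t₁, 0 ≤ s₁ → s₁ < τ → 0 ≤ t₁ → t₁ < τU →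
      (X s₁).1 = (AU t₁).1 → (X s₁).2 ≤ (AU t₁).2 := by
    intro s₁ t₁ hs₁0 hs₁τ ht₁0 ht₁τ heq
    rcases ht₁0.eq_or_lt with ht₁z | ht₁pos
    · have hx : (X s₁).1 = (X 0).1 := by rw [heq, ← ht₁z, hAU0]
      have hs₁z : s₁ = 0 := hXmono.injOn ⟨hs₁0, hs₁τ.le⟩ ⟨le_rfl, hτ0⟩ hx
      rw [hs₁z, ← ht₁z, hAU0]
    -- now 0 < t₁
    set s₂ := (s₁ + τ)/2 with hs₂def
    have hτpos : 0 < τ := lt_of_le_of_lt hs₁0 hs₁τ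
    have hs₁2 : s₁ < s₂ := by rw [hs₂def]; linarith
    have hs₂τ : s₂ < τ := by rw [hs₂def]; linarith
    have hs₂0 : 0 ≤ s₂ := le_trans hs₁0 hs₁2.le
    have hs₂T : s₂ < T := lt_of_lt_of_le hs₂τ hτT
    have ht₁T' : t₁ < T' := lt_of_lt_of_le ht₁τ hτUT'
    have hIccsub : Icc (0:ℝ) s₂ ⊆ Icc 0 τ := Icc_subset_Icc le_rfl hs₂τ.le
    have hIccsubA : Icc (0:ℝ) t₁ ⊆ Icc 0 T' := Icc_subset_Icc le_rfl ht₁T'.le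
    have hu01 : (X 0).1 ≤ (X s₁).1 :=
      hXmono.monotoneOn ⟨le_rfl, hτ0⟩ ⟨hs₁0, hs₁τ.le⟩ hs₁0
    have hu12 : (X s₁).1 < (X s₂).1 := hXmono ⟨hs₁0, hs₁τ.le⟩ ⟨hs₂0, hs₂τ.le⟩ hs₁2
    have hu02 : (X 0).1 < (X s₂).1 := lt_of_le_of_lt hu01 hu12
    -- the inverse of the first component of X on [0, s₂]
    set invX : ℝ → ℝ := fun y => sSup {r | r ∈ Icc (0:ℝ) s₂ ∧ (X r).1 ≤ y} with hinvdef
    have hbddA : ∀ y : ℝ, BddAbove {r | r ∈ Icc (0:ℝ) s₂ ∧ (X r).1 ≤ y} :=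
      fun y => ⟨s₂, fun x hx => hx.1.2⟩
    have hinv_eq : ∀ r ∈ Icc (0:ℝ) s₂, invX ((X r).1) = r := by
      intro r hr
      have hrr : r ∈ {r' | r' ∈ Icc (0:ℝ) s₂ ∧ (X r').1 ≤ (X r).1} := ⟨hr, le_rfl⟩
      apply le_antisymm
      · show sSup {r' | r' ∈ Icc (0:ℝ) s₂ ∧ (X r').1 ≤ (X r).1} ≤ r
        apply csSup_le ⟨r, hrr⟩
        intro x hx
        by_contra hxr
        push_neg at hxr
        exact absurd (hXmono (hIccsub hr) (hIccsub hx.1) hxr) (not_lt.mpr hx.2)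
      · exact le_csSup (hbddA _) hrr
    have hX1cs : ContinuousOn (fun w => (X w).1) (Icc 0 s₂) :=
      hX1c.mono (Icc_subset_Icc le_rfl hs₂T.le)
    have hinv_spec : ∀ y ∈ Icc ((X 0).1) ((X s₂).1),
        invX y ∈ Icc (0:ℝ) s₂ ∧ (X (invX y)).1 = y := by
      intro y hy
      have himg : y ∈ (fun w => (X w).1) '' (Icc (0:ℝ) s₂) :=
        intermediate_value_Icc hs₂0 hX1cs hy
      obtain ⟨r, hr, hry⟩ := himg
      simp only at hry
      rw [← hry, hinv_eq r hr]
      exact ⟨hr, rfl⟩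
    have hinv_zero : ∀ y : ℝ, y ≤ (X 0).1 → invX y = 0 := by
      intro y hy
      rcases hy.lt_or_eq with hy' | hy'
      · have hemp : {r | r ∈ Icc (0:ℝ) s₂ ∧ (X r).1 ≤ y} = ∅ := by
          ext x
          simp only [mem_setOf_eq, mem_empty_iff_false, iff_false, not_and, not_le]
          intro hx
          exact lt_of_lt_of_le hy' (hXmono.monotoneOn ⟨le_rfl, hτ0⟩ (hIccsub hx) hx.1)
        show sSup {r | r ∈ Icc (0:ℝ) s₂ ∧ (X r).1 ≤ y} = 0
        rw [hemp, Real.sSup_empty]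
      · rw [hy']
        exact hinv_eq 0 ⟨le_rfl, hs₂0⟩
    have hmonoInv : Monotone invX := by
      intro y y' hyy
      rcases eq_empty_or_nonempty {r | r ∈ Icc (0:ℝ) s₂ ∧ (X r).1 ≤ y} with he | hne
      · show sSup {r | r ∈ Icc (0:ℝ) s₂ ∧ (X r).1 ≤ y} ≤
          sSup {r | r ∈ Icc (0:ℝ) s₂ ∧ (X r).1 ≤ y'}
        rw [he, Real.sSup_empty]
        rcases eq_empty_or_nonempty {r | r ∈ Icc (0:ℝ) s₂ ∧ (X r).1 ≤ y'} with he' | hne'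
        · rw [he', Real.sSup_empty]
        · obtain ⟨x, hx⟩ := hne'
          exact le_trans hx.1.1 (le_csSup (hbddA _) hx)
      · exact csSup_le_csSup (hbddA _) hne (fun x hx => ⟨hx.1, hx.2.trans hyy⟩)
    have hinvContAt : ∀ y, (X 0).1 ≤ y → y < (X s₂).1 → ContinuousAt invX y := by
      intro y hy0 hy2
      rcases hy0.lt_or_eq with hy0' | hy0'
      · -- (X 0).1 < y
        obtain ⟨hsy, hXsy⟩ := hinv_spec y ⟨hy0, hy2.le⟩
        have hspos : 0 < invX y := by
          rcases hsy.1.lt_or_eq with h' | h'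
          · exact h'
          · exfalso; rw [← h'] at hXsy; rw [hXsy] at hy0'; exact lt_irrefl _ hy0'
        have hslt : invX y < s₂ := by
          rcases hsy.2.lt_or_eq with h' | h'
          · exact h'
          · exfalso; rw [h'] at hXsy; rw [hXsy] at hy2; exact lt_irrefl _ hy2
        apply continuousAt_of_monotoneOn_of_exists_between
          (s := (univ : Set ℝ)) (fun a _ b _ hab => hmonoInv hab) univ_mem
        · intro b hb
          refine ⟨(X (max ((b + invX y)/2) (invX y/2))).1, mem_univ _, ?_⟩
          have hmax1 : max ((b + invX y)/2) (invX y/2) ∈ Icc (0:ℝ) s₂ :=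
            ⟨le_max_of_le_right (by linarith), max_le (by linarith [hsy.2]) (by linarith [hsy.2])⟩
          rw [hinv_eq _ hmax1]
          exact ⟨lt_max_of_lt_left (by linarith), max_lt (by linarith) (by linarith)⟩
        · intro b hb
          refine ⟨(X (min ((invX y + b)/2) ((invX y + s₂)/2))).1, mem_univ _, ?_⟩
          have hmin1 : min ((invX y + b)/2) ((invX y + s₂)/2) ∈ Icc (0:ℝ) s₂ :=
            ⟨le_min (by linarith) (by linarith), min_le_of_right_le (by linarith [hsy.2])⟩
          rw [hinv_eq _ hmin1]
          exact ⟨lt_min (by linarith) (by linarith), min_lt_of_left_lt (by linarith)⟩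
      · -- y = (X 0).1
        rw [← hy0']
        have hinv0 : invX ((X 0).1) = 0 := hinv_eq 0 ⟨le_rfl, hs₂0⟩
        have hs₂pos : 0 < s₂ := by rw [hs₂def]; linarith
        apply continuousAt_iff_continuous_left_right.2
        constructor
        · exact continuousWithinAt_const.congr
            (fun z hz => hinv_zero z hz) (hinv_zero _ le_rfl)
        · apply continuousWithinAt_right_of_monotoneOn_of_exists_between
            (s := (univ : Set ℝ)) (fun a _ b _ hab => hmonoInv hab)
            (mem_nhdsWithin_of_mem_nhds univ_mem)
          intro b hb
          rw [hinv0] at hb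
          refine ⟨(X (min (b/2) (s₂/2))).1, mem_univ _, ?_⟩
          have hmin1 : min (b/2) (s₂/2) ∈ Icc (0:ℝ) s₂ :=
            ⟨le_min (by linarith) (by linarith), min_le_of_right_le (by linarith)⟩
          rw [hinv_eq _ hmin1, hinv0]
          exact ⟨lt_min (by linarith) (by linarith), min_lt_of_left_lt (by linarith)⟩
    -- the time change σ
    set σ : ℝ → ℝ := fun r => invX ((AU r).1) with hσdef
    have hmapsto : ∀ r ∈ Icc (0:ℝ) t₁, (X 0).1 ≤ (AU r).1 ∧ (AU r).1 ≤ (X s₁).1 := by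
      intro r hr
      have hrτU : r ∈ Icc (0:ℝ) τU := ⟨hr.1, hr.2.trans ht₁τ.le⟩
      constructor
      · have h1 := hAmono.monotoneOn ⟨le_rfl, hτU0⟩ hrτU hr.1
        rwa [hAU0] at h1
      · have h1 := hAmono.monotoneOn hrτU ⟨ht₁0, ht₁τ.le⟩ hr.2
        rwa [← heq] at h1
    have hσspec : ∀ r ∈ Icc (0:ℝ) t₁, σ r ∈ Icc (0:ℝ) s₂ ∧ (X (σ r)).1 = (AU r).1 :=
      fun r hr => hinv_spec _ ⟨(hmapsto r hr).1, le_trans (hmapsto r hr).2 hu12.le⟩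
    have hσcont : ContinuousOn σ (Icc 0 t₁) := by
      intro r hr
      show ContinuousWithinAt (invX ∘ fun w => (AU w).1) (Icc 0 t₁) r
      exact ContinuousAt.comp_continuousWithinAt (hinvContAt _ (hmapsto r hr).1
        (lt_of_le_of_lt (hmapsto r hr).2 hu12)) ((hA1c.mono hIccsubA) r hr)
    have hσ0 : σ 0 = 0 := by
      rw [hσdef]
      simp only [hAU0]
      exact hinv_eq 0 ⟨le_rfl, hs₂0⟩
    have hσt₁ : σ t₁ = s₁ := by
      rw [hσdef]
      simp only [← heq]
      exact hinv_eq s₁ ⟨hs₁0, hs₁2.le⟩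
    -- constants for the Gronwall-type estimate
    have hF1cont : ContinuousOn (fun r => F1 p β (AU r)) (Icc 0 t₁) := by
      show ContinuousOn (fun r => -p * (AU r).1 + β * (AU r).2) (Icc 0 t₁)
      exact (continuousOn_const.mul (hA1c.mono hIccsubA)).add
        (continuousOn_const.mul (hA2c.mono hIccsubA))
    obtain ⟨tδ, htδmem, htδmin⟩ :=
      isCompact_Icc.exists_isMinOn (nonempty_Icc.2 ht₁0) hF1cont
    have hδpos : 0 < F1 p β (AU tδ) :=
      hFApos tδ htδmem.1 (lt_of_le_of_lt htδmem.2 ht₁τ)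
    have hδle : ∀ r ∈ Icc (0:ℝ) t₁, F1 p β (AU tδ) ≤ F1 p β (AU r) :=
      fun r hr => isMinOn_iff.1 htδmin r hr
    set δ := F1 p β (AU tδ) with hδdef
    have hF2cont : ContinuousOn (fun r => F2U p β Λ (AU r)) (Icc 0 t₁) := by
      show ContinuousOn (fun r => 2*p*(p-1) - 2*(p-1)*(AU r).2
        + 2*p*(AU r).1*(p*(AU r).1 - β*(AU r).2) + 2*β*Λ*(AU r).2) (Icc 0 t₁)
      exact ((continuousOn_const.sub (continuousOn_const.mul (hA2c.mono hIccsubA))).add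
        ((continuousOn_const.mul (hA1c.mono hIccsubA)).mul
          ((continuousOn_const.mul (hA1c.mono hIccsubA)).sub
            (continuousOn_const.mul (hA2c.mono hIccsubA))))).add
        (continuousOn_const.mul (hA2c.mono hIccsubA))
    obtain ⟨M, hM⟩ := isCompact_Icc.exists_bound_of_continuousOn hF2cont
    have hM0 : 0 ≤ M := le_trans (norm_nonneg _) (hM 0 ⟨le_rfl, ht₁0⟩)
    have hMabs : ∀ r ∈ Icc (0:ℝ) t₁, |F2U p β Λ (AU r)| ≤ M := by
      intro r hr
      have := hM r hr
      rwa [Real.norm_eq_abs] at this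
    have hppos : 0 < p := by linarith
    set L := 2*(p-1) + 2*β*Λ + 2*p*β*(|(X 0).1| + |(X s₂).1|) with hLdef
    have hL0 : 0 ≤ L := by
      have h1 : 0 ≤ 2*p*β*(|(X 0).1| + |(X s₂).1|) :=
        mul_nonneg (mul_nonneg (by linarith) hβ.le) (by positivity)
      rw [hLdef]
      exact aux_L_nonneg hp hβ hΛ h1
    have hLbound : ∀ u, (X 0).1 ≤ u → u ≤ (X s₂).1 →
        -2*(p-1) - 2*p*β*u + 2*β*Λ ≤ L := by
      intro u h1 h2
      rw [hLdef]
      exact aux_c_le_L hp hβ hΛ h1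
    have hQβ : 0 ≤ β*M/δ := div_nonneg (mul_nonneg hβ.le hM0) hδpos.le
    set Q := L + β*M/δ with hQdef
    have hQ0 : 0 ≤ Q := by rw [hQdef]; linarith
    set K := Q + 1 with hKdef
    -- main estimate via the crossing lemma
    have main : ∀ ε, 0 < ε → (X s₁).2 < (AU t₁).2 + ε * Real.exp (K * t₁) := by
      intro ε hε
      have hcr := crossing_pos (h := fun r => (AU r).2 + ε * Real.exp (K * r) - (X (σ r)).2)
        (b := t₁) ht₁0 ?_ ?_ ?_
      · have hfin := hcr t₁ ⟨ht₁0, le_rfl⟩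
        simp only [hσt₁] at hfin
        linarith
      · -- continuity
        have hA2ct : ContinuousOn (fun w => (AU w).2) (Icc 0 t₁) := hA2c.mono hIccsubA
        have hXσ : ContinuousOn (fun r => (X (σ r)).2) (Icc 0 t₁) := by
          apply (hX2c.mono (Icc_subset_Icc le_rfl hs₂T.le)).comp hσcont
          exact fun r hr => (hσspec r hr).1
        exact (hA2ct.add (continuousOn_const.mul
          ((Real.continuous_exp.comp (continuous_const.mul continuous_id)).continuousOn))).sub hXσ
      · -- positivity at 0
        simp only [hσ0, hAU0, mul_zero, Real.exp_zero]
        linarith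
      · -- derivative at a first crossing point
        intro t' ht'pos ht'le hzero hprev
        clear hprev
        have ht'mem : t' ∈ Icc (0:ℝ) t₁ := ⟨ht'pos.le, ht'le⟩
        have ht'T' : t' < T' := lt_of_le_of_lt ht'le ht₁T'
        obtain ⟨hσmem, hσval⟩ := hσspec t' ht'mem
        have hy1 : (AU t').1 ≤ (X s₁).1 := (hmapsto t' ht'mem).2
        have hy0 : (X 0).1 < (AU t').1 := by
          have h1 : (AU 0).1 < (AU t').1 :=
            hAmono ⟨le_rfl, hτU0⟩ ⟨ht'pos.le, le_trans ht'le ht₁τ.le⟩ ht'pos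
          rwa [hAU0] at h1
        have hσpos : 0 < σ t' := by
          rcases hσmem.1.lt_or_eq with h' | h'
          · exact h'
          · exfalso; rw [← h'] at hσval; rw [← hσval] at hy0; exact lt_irrefl _ hy0
        have hσles₁ : σ t' ≤ s₁ := by
          by_contra hcon
          push_neg at hcon
          have h1 : (X s₁).1 < (X (σ t')).1 := hXmono ⟨hs₁0, hs₁τ.le⟩ (hIccsub hσmem) hcon
          rw [hσval] at h1
          exact absurd (lt_of_lt_of_le h1 hy1) (lt_irrefl _)
        have hσT : σ t' < T := lt_of_le_of_lt (hσles₁.trans hs₁2.le) hs₂T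
        have hστ : σ t' < τ := lt_of_le_of_lt hσles₁ hs₁τ
        have dA1 : HasDerivAt (fun w => (AU w).1) (F1 p β (AU t')) t' := hA1d t' ht'pos ht'T'
        have dA2 : HasDerivAt (fun w => (AU w).2) (F2U p β Λ (AU t')) t' := hA2d t' ht'pos ht'T'
        have dX1 : HasDerivAt (fun w => (X w).1) (F1 p β (X (σ t'))) (σ t') :=
          hX1d _ hσpos hσT
        have dX2 : HasDerivAt (fun w => (X w).2) ((X' (σ t')).2) (σ t') := hX2d _ hσpos hσT
        have hfA : 0 < F1 p β (X (σ t')) := hFXpos _ hσpos.le hστ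
        have dinv : HasDerivAt invX (F1 p β (X (σ t')))⁻¹ ((AU t').1) := by
          apply HasDerivAt.of_local_left_inverse
            (hinvContAt _ hy0.le (lt_of_le_of_lt hy1 hu12)) dX1 (ne_of_gt hfA)
          filter_upwards [Ioo_mem_nhds hy0 (lt_of_le_of_lt hy1 hu12)] with y hy
          exact (hinv_spec y ⟨hy.1.le, hy.2.le⟩).2
        have dσ : HasDerivAt σ ((F1 p β (X (σ t')))⁻¹ * F1 p β (AU t')) t' := by
          have := dinv.comp t' dA1; exact this
        have dg : HasDerivAt (fun r => (X (σ r)).2)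
            ((X' (σ t')).2 * ((F1 p β (X (σ t')))⁻¹ * F1 p β (AU t'))) t' :=
          dX2.comp t' dσ
        have dexp : HasDerivAt (fun r => ε * Real.exp (K * r))
            (ε * (Real.exp (K * t') * K)) t' := by
          have h1 : HasDerivAt (fun r : ℝ => K * r) K t' := by
            simpa using (hasDerivAt_id t').const_mul K
          exact ((Real.hasDerivAt_exp (K * t')).comp t' h1).const_mul ε
        refine ⟨_, ?_, (dA2.add dexp).sub dg⟩
        -- show positivity of the derivative at the crossing point
        set e := ε * Real.exp (K * t') with hedef
        have hepos : 0 < e := by rw [hedef]; positivity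
        have hab : (X (σ t')).2 = (AU t').2 + e := by
          linarith [hzero, hedef]
        have hfB : 0 < F1 p β (AU t') := hFApos t' ht'pos.le (lt_of_le_of_lt ht'le ht₁τ)
        have hfAB : F1 p β (X (σ t')) = F1 p β (AU t') + β * e := by
          show -p * (X (σ t')).1 + β * (X (σ t')).2
            = (-p * (AU t').1 + β * (AU t').2) + β * e
          rw [hσval, hab]; ring
        have hfBδ : δ ≤ F1 p β (AU t') := hδle t' ht'mem
        have hMb' := abs_le.1 (hMabs t' ht'mem)
        have hcle : -2*(p-1) - 2*p*β*((AU t').1) + 2*β*Λ ≤ L :=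
          hLbound _ hy0.le (le_trans hy1 hu12.le)
        have hF2X : (X' (σ t')).2 ≤ F2U p β Λ (X (σ t')) :=
          (h2X (σ t') ⟨hσpos.le, hσT.le⟩).2
        have hF2diff : F2U p β Λ (X (σ t')) =
            F2U p β Λ (AU t') + (-2*(p-1) - 2*p*β*((AU t').1) + 2*β*Λ) * e := by
          show 2*p*(p-1) - 2*(p-1)*(X (σ t')).2
            + 2*p*(X (σ t')).1*(p*(X (σ t')).1 - β*(X (σ t')).2) + 2*β*Λ*(X (σ t')).2
            = 2*p*(p-1) - 2*(p-1)*(AU t').2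
            + 2*p*(AU t').1*(p*(AU t').1 - β*(AU t').2) + 2*β*Λ*(AU t').2
            + (-2*(p-1) - 2*p*β*((AU t').1) + 2*β*Λ) * e
          rw [hσval, hab]; ring
        have hrpos : 0 < (F1 p β (X (σ t')))⁻¹ * F1 p β (AU t') := by positivity
        have hstep1 : (X' (σ t')).2 * ((F1 p β (X (σ t')))⁻¹ * F1 p β (AU t'))
            ≤ F2U p β Λ (X (σ t')) * ((F1 p β (X (σ t')))⁻¹ * F1 p β (AU t')) :=
          mul_le_mul_of_nonneg_right hF2X hrpos.le
        have hstep2 : F2U p β Λ (X (σ t')) * ((F1 p β (X (σ t')))⁻¹ * F1 p β (AU t'))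
            ≤ F2U p β Λ (AU t') + Q * e := by
          have h2' : (F2U p β Λ (AU t') + (-2*(p-1) - 2*p*β*((AU t').1) + 2*β*Λ) * e)
              * F1 p β (AU t')
              ≤ (F2U p β Λ (AU t') + Q * e) * F1 p β (X (σ t')) := by
            rw [hfAB, hQdef]
            exact aux_key_ineq hβ hM0 hδpos hL0 hcle hepos hfBδ hMb'.1
          calc F2U p β Λ (X (σ t')) * ((F1 p β (X (σ t')))⁻¹ * F1 p β (AU t'))
              = (F2U p β Λ (X (σ t')) * F1 p β (AU t')) * (F1 p β (X (σ t')))⁻¹ := by ring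
            _ ≤ ((F2U p β Λ (AU t') + Q * e) * F1 p β (X (σ t'))) * (F1 p β (X (σ t')))⁻¹ := by
                apply mul_le_mul_of_nonneg_right _ (inv_nonneg.2 hfA.le)
                rw [hF2diff]
                exact h2'
            _ = F2U p β Λ (AU t') + Q * e := by
                field_simp
          -- end calc
        have hg'le : (X' (σ t')).2 * ((F1 p β (X (σ t')))⁻¹ * F1 p β (AU t'))
            ≤ F2U p β Λ (AU t') + Q * e := le_trans hstep1 hstep2
        have hKe : ε * (Real.exp (K * t') * K) = (Q + 1) * e := by
          rw [hedef, hKdef]; ring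
        rw [hKe]
        linarith
    -- conclude the interior comparison
    by_contra hcon
    push_neg at hcon
    have hexp : 0 < Real.exp (K * t₁) := Real.exp_pos _
    have h2 := main (((X s₁).2 - (AU t₁).2)/(2 * Real.exp (K * t₁)))
      (div_pos (by linarith) (by positivity))
    have h3 : ((X s₁).2 - (AU t₁).2)/(2 * Real.exp (K * t₁)) * Real.exp (K * t₁)
        = ((X s₁).2 - (AU t₁).2)/2 := by
      field_simp
    rw [h3] at h2
    linarith
  -- boundary cases by continuity
  rcases ht.1.eq_or_lt with htz | htpos
  · have hx : (X s).1 = (X 0).1 := by rw [hst, ← htz, hAU0]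
    have hsz : s = 0 := hXmono.injOn hs ⟨le_rfl, hτ0⟩ hx
    rw [hsz, ← htz, hAU0]
  rcases hs.1.eq_or_lt with hsz | hspos
  · exfalso
    have hlt : (AU 0).1 < (AU t).1 := hAmono ⟨le_rfl, hτU0⟩ ht htpos
    rw [hAU0, ← hst, ← hsz] at hlt
    exact lt_irrefl _ hlt
  have hle : ∀ ε, 0 < ε → (X s).2 ≤ (AU t).2 + ε := by
    intro ε hε
    have hsT : s ∈ Icc (0:ℝ) T := ⟨hs.1, hs.2.trans hτT⟩
    have htT' : t ∈ Icc (0:ℝ) T' := ⟨ht.1, ht.2.trans hτUT'⟩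
    obtain ⟨η₁, hη₁, hX2cont⟩ := Metric.continuousWithinAt_iff.1 (hX2c s hsT) (ε/2) (by linarith)
    obtain ⟨η₂, hη₂, hA2cont⟩ := Metric.continuousWithinAt_iff.1 (hA2c t htT') (ε/2) (by linarith)
    set s₀ := max (s - η₁/2) (s/2) with hs₀def
    have hs₀0 : 0 ≤ s₀ := le_max_of_le_right (by linarith)
    have hs₀lt : s₀ < s := max_lt (by linarith) (by linarith)
    have hs₀d : s - s₀ < η₁ := by
      have h1 : s - η₁/2 ≤ s₀ := le_max_left _ _
      linarith
    set t₀ := max (t - η₂/2) (t/2) with ht₀def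
    have ht₀0 : 0 ≤ t₀ := le_max_of_le_right (by linarith)
    have ht₀lt : t₀ < t := max_lt (by linarith) (by linarith)
    have ht₀d : t - t₀ < η₂ := by
      have h1 : t - η₂/2 ≤ t₀ := le_max_left _ _
      linarith
    have hws : (X s₀).1 < (X s).1 := hXmono ⟨hs₀0, hs₀lt.le.trans hs.2⟩ hs hs₀lt
    have hwt : (AU t₀).1 < (X s).1 := by
      rw [hst]; exact hAmono ⟨ht₀0, ht₀lt.le.trans ht.2⟩ ht ht₀lt
    set w := max ((X s₀).1) ((AU t₀).1) with hwdef
    have hw : w < (X s).1 := max_lt hws hwt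
    set u' := (w + (X s).1)/2 with hu'def
    have hu'2 : u' < (X s).1 := by rw [hu'def]; linarith
    have hu'w : w < u' := by rw [hu'def]; linarith
    obtain ⟨s', hs'mem, hs'val⟩ := intermediate_value_Icc hs₀lt.le
      (hX1c.mono (Icc_subset_Icc hs₀0 (hs.2.trans hτT)))
      (show u' ∈ Icc ((X s₀).1) ((X s).1) from
        ⟨le_trans (le_max_left _ _) hu'w.le, hu'2.le⟩)
    obtain ⟨t', ht'mem, ht'val⟩ := intermediate_value_Icc ht₀lt.le
      (hA1c.mono (Icc_subset_Icc ht₀0 (ht.2.trans hτUT')))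
      (show u' ∈ Icc ((AU t₀).1) ((AU t).1) from
        ⟨le_trans (le_max_right _ _) hu'w.le, by rw [← hst]; exact hu'2.le⟩)
    simp only at hs'val ht'val
    have hs'lt : s' < s := by
      rcases hs'mem.2.lt_or_eq with h' | h'
      · exact h'
      · exfalso; rw [h'] at hs'val; rw [hs'val] at hu'2; exact lt_irrefl _ hu'2
    have ht'lt : t' < t := by
      rcases ht'mem.2.lt_or_eq with h' | h'
      · exact h'
      · exfalso; rw [h'] at ht'val
        rw [← hst] at ht'val
        rw [ht'val] at hu'2; exact lt_irrefl _ hu'2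
    have hkey := key s' t' (le_trans hs₀0 hs'mem.1) (lt_of_lt_of_le hs'lt hs.2)
      (le_trans ht₀0 ht'mem.1) (lt_of_lt_of_le ht'lt ht.2)
      (by rw [hs'val, ht'val])
    have hd1 : dist ((X s').2) ((X s).2) < ε/2 := by
      apply hX2cont ⟨le_trans hs₀0 hs'mem.1, hs'lt.le.trans (hs.2.trans hτT)⟩
      rw [Real.dist_eq, abs_of_nonpos (by linarith [hs'mem.2] : s' - s ≤ 0)]
      linarith [hs'mem.1]
    have hd2 : dist ((AU t').2) ((AU t).2) < ε/2 := by
      apply hA2cont ⟨le_trans ht₀0 ht'mem.1, ht'lt.le.trans (ht.2.trans hτUT')⟩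
      rw [Real.dist_eq, abs_of_nonpos (by linarith [ht'mem.2] : t' - t ≤ 0)]
      linarith [ht'mem.1]
    rw [Real.dist_eq] at hd1 hd2
    have hb1 := abs_lt.1 hd1
    have hb2 := abs_lt.1 hd2
    linarith [hb1.1, hb1.2, hb2.1, hb2.2, hkey]
  by_contra hcon
  push_neg at hcon
  have := hle (((X s).2 - (AU t).2)/2) (by linarith)
  linarith
end

section
/- Fix real constants p > 2, β > 0, Λ > 0 and T > 0. Let V₋ = {(u,v) ∈ ℝ² : u ≥ 0, 0 ≤ v ≤ 2pu/β}. Let X : [0,T] → ℝ² be continuously differentiable and satisfy Condition I with X(0) in the interior of V₋, and let A_L, A_U : [0,T] → ℝ² be solutions of A_L' = Φ_L(A_L), A_U' = Φ_U(A_U) with A_L(0) = A_U(0) = X(0). Define the exit times τ = inf{t : X(t) ∉ V₋}, τᴸ = inf{t : A_L(t) ∉ V₋}, τᵁ = inf{t : A_U(t) ∉ V₋}, and τ^□ = inf{t : (A_{L,1}(t), A_{U,2}(t)) ∉ V₋}, each taken equal to T if the corresponding set is empty. Then: (1) X₁(t) ≥ A_{L,1}(t) and X₂(t) ≥ A_{L,2}(t)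 for every t ≤ min(τᴸ, τ), and X₁(t) ≤ A_{U,1}(t) and X₂(t) ≤ A_{U,2}(t) for every t ≤ min(τᵁ, τ); (2) A_L(t) ≤ X(t) ≤ A_U(t) componentwise for every t ≤ τ^□. -/
open Set

/-- The region `V₋ = {(u,v) : u ≥ 0, 0 ≤ v ≤ 2pu/β}` on which `Φ_L` and `Φ_U`
are quasi-increasing. -/
def Vminus (p β : ℝ) : Set (ℝ × ℝ) :=
  {z : ℝ × ℝ | 0 ≤ z.1 ∧ 0 ≤ z.2 ∧ z.2 ≤ 2 * p * z.1 / β}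

open Set Real Filter Topology

/- ### Auxiliary lemmas -/

lemma barrier_strict (S K : ℝ) (n : ℕ) (φ φ' : Fin n → ℝ → ℝ)
    (hd : ∀ i, ∀ t ∈ Icc (0:ℝ) S, HasDerivWithinAt (φ i) (φ' i t) (Icc (0:ℝ) S) t)
    (h0 : ∀ i, φ i 0 ≤ 0)
    (key : ∀ t ∈ Icc (0:ℝ) S, ∀ ε ∈ Ioc (0:ℝ) 1, ∀ i, φ i t = ε * exp (K*t) →
        (∀ j, φ j t ≤ ε * exp (K*t)) → φ' i t < ε * (K * exp (K*t)))
    (ε : ℝ) (hε : ε ∈ Ioc (0:ℝ) 1) :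
    ∀ t ∈ Icc (0:ℝ) S, ∀ i, φ i t < ε * exp (K*t) := by
  by_contra hcon
  push_neg at hcon
  obtain ⟨t₁, ht₁, i₁, hi₁⟩ := hcon
  set E : Set ℝ := ⋃ i, (Icc (0:ℝ) S ∩ (fun t => φ i t - ε * exp (K*t)) ⁻¹' (Ici 0)) with hE
  have hcontφ : ∀ i, ContinuousOn (φ i) (Icc (0:ℝ) S) :=
    fun i t ht => ((hd i t ht).continuousWithinAt)
  have hcontψ : ∀ i, ContinuousOn (fun t => φ i t - ε * exp (K*t)) (Icc (0:ℝ) S) :=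
    fun i => (hcontφ i).sub (Continuous.continuousOn (by continuity))
  have hEclosed : IsClosed E := by
    exact isClosed_iUnion_of_finite fun i =>
      (hcontψ i).preimage_isClosed_of_isClosed isClosed_Icc isClosed_Ici
  have hEne : E.Nonempty := ⟨t₁, mem_iUnion.2 ⟨i₁, ht₁, by simpa using hi₁⟩⟩
  have hEbdd : BddBelow E := ⟨0, fun t ht => by
    obtain ⟨i, hti⟩ := mem_iUnion.1 ht; exact hti.1.1⟩
  set t₀ := sInf E with ht₀def
  have ht₀E : t₀ ∈ E := hEclosed.csInf_mem hEne hEbdd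
  obtain ⟨i, ht₀i⟩ := mem_iUnion.1 ht₀E
  have ht₀Icc : t₀ ∈ Icc (0:ℝ) S := ht₀i.1
  have hge : ε * exp (K * t₀) ≤ φ i t₀ := by
    have := ht₀i.2; simpa [sub_nonneg] using this
  have ht₀pos : 0 < t₀ := by
    rcases lt_or_eq_of_le ht₀Icc.1 with h | h
    · exact h
    · exfalso
      have h1 : ε * exp (K * 0) ≤ φ i 0 := by rw [← h] at hge; simpa using hge
      have hε0 : 0 < ε := hε.1
      have : (0:ℝ) < ε * exp (K * 0) := by positivity
      linarith [h0 i]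
  have hbefore : ∀ t ∈ Ico (0:ℝ) t₀, ∀ j, φ j t < ε * exp (K*t) := by
    intro t ht j
    by_contra hc
    push_neg at hc
    have htE : t ∈ E := mem_iUnion.2 ⟨j, ⟨⟨ht.1, le_trans (le_of_lt ht.2) ht₀Icc.2⟩,
      by simpa [sub_nonneg] using hc⟩⟩
    exact absurd (csInf_le hEbdd htE) (not_le.2 ht.2)
  haveI hNB : (nhdsWithin t₀ (Ico (0:ℝ) t₀)).NeBot := by
    rw [← mem_closure_iff_nhdsWithin_neBot, closure_Ico (ne_of_lt ht₀pos)]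
    exact right_mem_Icc.2 (le_of_lt ht₀pos)
  have hIcosub : Ico (0:ℝ) t₀ ⊆ Icc (0:ℝ) S :=
    fun t ht => ⟨ht.1, le_trans (le_of_lt ht.2) ht₀Icc.2⟩
  have hle : ∀ j, φ j t₀ ≤ ε * exp (K * t₀) := by
    intro j
    have hcw : ContinuousWithinAt (fun t => φ j t - ε * exp (K*t)) (Ico (0:ℝ) t₀) t₀ :=
      ((hcontψ j) t₀ ht₀Icc).mono hIcosub
    have hlim : Tendsto (fun t => φ j t - ε * exp (K*t)) (nhdsWithin t₀ (Ico (0:ℝ) t₀))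
        (nhds (φ j t₀ - ε * exp (K*t₀))) := hcw
    have : φ j t₀ - ε * exp (K*t₀) ≤ 0 := by
      refine le_of_tendsto hlim ?_
      filter_upwards [eventually_mem_nhdsWithin] with t ht
      have := hbefore t ht j; linarith
    linarith
  have heqi : φ i t₀ = ε * exp (K * t₀) := le_antisymm (hle i) hge
  have hkey := key t₀ ht₀Icc ε hε i heqi hle
  have hexp : HasDerivAt (fun t => ε * exp (K*t)) (ε * (K * exp (K*t₀))) t₀ := by
    have h1 : HasDerivAt (fun t : ℝ => K * t) K t₀ := by
      simpa using (hasDerivAt_id t₀).const_mul K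
    simpa [mul_comm, mul_assoc, mul_left_comm] using (h1.exp.const_mul ε)
  have hθ : HasDerivWithinAt (fun t => φ i t - ε * exp (K*t))
      (φ' i t₀ - ε * (K * exp (K*t₀))) (Icc (0:ℝ) t₀) t₀ :=
    ((hd i t₀ ht₀Icc).sub hexp.hasDerivWithinAt).mono (Icc_subset_Icc le_rfl ht₀Icc.2)
  have hslope := hasDerivWithinAt_iff_tendsto_slope.1 hθ
  rw [Icc_sdiff_right] at hslope
  have hpos : ∀ t ∈ Ico (0:ℝ) t₀, 0 ≤ slope (fun t => φ i t - ε * exp (K*t)) t₀ t := by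
    intro t ht
    have hnum : φ i t - ε * exp (K*t) < 0 := by have := hbefore t ht i; linarith
    have hden : t - t₀ < 0 := by linarith [ht.2]
    rw [slope_def_field]
    have h0' : φ i t₀ - ε * exp (K*t₀) = 0 := by rw [heqi]; ring
    rw [div_nonneg_iff]
    right
    constructor
    · rw [h0']; linarith
    · linarith
  have : (0:ℝ) ≤ φ' i t₀ - ε * (K * exp (K*t₀)) := by
    refine ge_of_tendsto hslope ?_
    filter_upwards [eventually_mem_nhdsWithin] with t ht using hpos t ht
  linarith

lemma barrier (S K : ℝ) (n : ℕ) (φ φ' : Fin n → ℝ → ℝ)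
    (hd : ∀ i, ∀ t ∈ Icc (0:ℝ) S, HasDerivWithinAt (φ i) (φ' i t) (Icc (0:ℝ) S) t)
    (h0 : ∀ i, φ i 0 ≤ 0)
    (key : ∀ t ∈ Icc (0:ℝ) S, ∀ ε ∈ Ioc (0:ℝ) 1, ∀ i, φ i t = ε * exp (K*t) →
        (∀ j, φ j t ≤ ε * exp (K*t)) → φ' i t < ε * (K * exp (K*t)))
    : ∀ t ∈ Icc (0:ℝ) S, ∀ i, φ i t ≤ 0 := by
  intro t ht i
  by_contra hc
  push_neg at hc
  set ε := min 1 (φ i t / (2 * exp (K*t))) with hε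
  have hexppos : (0:ℝ) < exp (K*t) := exp_pos _
  have hεpos : 0 < ε := lt_min one_pos (by positivity)
  have hεIoc : ε ∈ Ioc (0:ℝ) 1 := ⟨hεpos, min_le_left _ _⟩
  have := barrier_strict S K n φ φ' hd h0 key ε hεIoc t ht i
  have h2 : ε * exp (K*t) ≤ φ i t / 2 := by
    calc ε * exp (K*t) ≤ (φ i t / (2 * exp (K*t))) * exp (K*t) := by
          apply mul_le_mul_of_nonneg_right (min_le_right _ _) (le_of_lt hexppos)
      _ = φ i t / 2 := by field_simp
  linarith

lemma Vminus_closed (p β : ℝ) : IsClosed (Vminus p β) := by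
  have h1 : IsClosed {z : ℝ × ℝ | 0 ≤ z.1} := isClosed_le continuous_const continuous_fst
  have h23 : IsClosed ({z : ℝ × ℝ | 0 ≤ z.2} ∩ {z : ℝ × ℝ | z.2 ≤ 2 * p * z.1 / β}) := by
    refine IsClosed.inter (isClosed_le continuous_const continuous_snd)
      (isClosed_le continuous_snd (by continuity))
  exact h1.inter h23

lemma Vm_ineq {p β : ℝ} (hβ : 0 < β) {z : ℝ × ℝ} (hz : z ∈ Vminus p β) :
    β * z.2 ≤ 2 * p * z.1 := by
  have h := hz.2.2
  rw [le_div_iff₀ hβ] at h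
  linarith

lemma exit_facts (T : ℝ) (hT : 0 < T) (p β : ℝ) (Y : ℝ → ℝ × ℝ)
    (hY : ContinuousOn Y (Icc 0 T)) (hY0 : Y 0 ∈ Vminus p β) :
    0 ≤ sInf ({t ∈ Icc (0:ℝ) T | Y t ∉ Vminus p β} ∪ {T}) ∧
    sInf ({t ∈ Icc (0:ℝ) T | Y t ∉ Vminus p β} ∪ {T}) ≤ T ∧
    ∀ t ∈ Icc (0:ℝ) (sInf ({t ∈ Icc (0:ℝ) T | Y t ∉ Vminus p β} ∪ {T})),
      Y t ∈ Vminus p β := by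
  set E := ({t ∈ Icc (0:ℝ) T | Y t ∉ Vminus p β} ∪ {T}) with hE
  have hTE : T ∈ E := Or.inr rfl
  have hEne : E.Nonempty := ⟨T, hTE⟩
  have hbdd : BddBelow E := by
    refine ⟨0, fun t ht => ?_⟩
    rcases ht with ⟨⟨h1, _⟩, _⟩ | h
    · exact h1
    · rw [mem_singleton_iff] at h; rw [h]; exact le_of_lt hT
  set τ := sInf E with hτ
  have hτ0 : 0 ≤ τ := le_csInf hEne (fun t ht => by
    rcases ht with ⟨⟨h1, _⟩, _⟩ | h
    · exact h1
    · rw [mem_singleton_iff] at h; rw [h]; exact le_of_lt hT)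
  have hτT : τ ≤ T := csInf_le hbdd hTE
  refine ⟨hτ0, hτT, ?_⟩
  have hmem_lt : ∀ t, 0 ≤ t → t < τ → Y t ∈ Vminus p β := by
    intro t h0t htτ
    by_contra hc
    have : t ∈ E := Or.inl ⟨⟨h0t, le_trans (le_of_lt htτ) hτT⟩, hc⟩
    exact absurd (csInf_le hbdd this) (not_le.2 htτ)
  intro t ht
  rcases lt_or_eq_of_le ht.2 with h | h
  · exact hmem_lt t ht.1 h
  · rcases lt_or_eq_of_le ht.1 with hpos | h0
    · haveI : (nhdsWithin t (Ico (0:ℝ) t)).NeBot := by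
        rw [← mem_closure_iff_nhdsWithin_neBot, closure_Ico (ne_of_lt hpos)]
        exact right_mem_Icc.2 (le_of_lt hpos)
      have hsub : Ico (0:ℝ) t ⊆ Icc (0:ℝ) T :=
        fun s hs => ⟨hs.1, le_trans (le_of_lt hs.2) (le_trans ht.2 hτT)⟩
      have hcw : ContinuousWithinAt Y (Ico (0:ℝ) t) t :=
        (hY t ⟨ht.1, le_trans ht.2 hτT⟩).mono hsub
      refine (Vminus_closed p β).mem_of_tendsto hcw ?_
      filter_upwards [eventually_mem_nhdsWithin] with s hs
      exact hmem_lt s hs.1 (lt_of_lt_of_le hs.2 ht.2)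
    · rw [← h0]; exact hY0

lemma quad_est (p β cv C0 c M ε e a₁ a₂ x₁ x₂ : ℝ)
    (hp : 0 < p) (hβ : 0 < β) (hε : 0 < ε) (he : 0 < e) (hM : 0 ≤ M) (hc : 0 ≤ c)
    (hcv : |cv| ≤ C0)
    (ha₁ : |a₁| ≤ M) (hx₁ : |x₁| ≤ M) (ha₂ : |a₂| ≤ M)
    (heq : a₂ = x₂ + ε * e) (hle : a₁ ≤ x₁ + ε * e)
    (hreg : β * a₂ ≤ 2 * p * a₁ + c * (ε * e)) :
    (cv * a₂ + 2*p^2*a₁^2 - 2*p*β*a₁*a₂) - (cv * x₂ + 2*p^2*x₁^2 - 2*p*β*x₁*x₂)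
      ≤ (C0 + 2*p*β*M + 2*p*(2*p*M + β*M) + 4*p*M*c) * (ε * e) := by
  have hεe : 0 < ε * e := mul_pos hε he
  obtain ⟨δ, hδ⟩ : ∃ δ, δ = a₁ - x₁ := ⟨_, rfl⟩
  obtain ⟨B, hB⟩ : ∃ B, B = p * (a₁ + x₁) - β * a₂ := ⟨_, rfl⟩
  have hsplit : (cv * a₂ + 2*p^2*a₁^2 - 2*p*β*a₁*a₂) - (cv * x₂ + 2*p^2*x₁^2 - 2*p*β*x₁*x₂)
      = (cv - 2*p*β*x₁) * (ε * e) + 2*p*δ*B := by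
    rw [hδ, hB, heq]; ring
  rw [hsplit]
  have ha₁' := abs_le.1 ha₁
  have hx₁' := abs_le.1 hx₁
  have ha₂' := abs_le.1 ha₂
  have hcv' := abs_le.1 hcv
  have hpβ : (0:ℝ) ≤ 2*p*β := by positivity
  have hfirst : (cv - 2*p*β*x₁) * (ε * e) ≤ (C0 + 2*p*β*M) * (ε * e) := by
    apply mul_le_mul_of_nonneg_right _ (le_of_lt hεe)
    have h1 : -x₁ ≤ M := neg_le.2 hx₁'.1
    have h2 := mul_le_mul_of_nonneg_left h1 hpβ
    linarith [hcv'.2]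
  have hBub : B ≤ 2*p*M + β*M := by
    rw [hB]
    have h1 : a₁ + x₁ ≤ 2*M := by linarith [ha₁'.2, hx₁'.2]
    have h2 := mul_le_mul_of_nonneg_left h1 (le_of_lt hp)
    have h3 : -a₂ ≤ M := neg_le.2 ha₂'.1
    have h4 := mul_le_mul_of_nonneg_left h3 (le_of_lt hβ)
    linarith
  have hBlb : -p*δ - c*(ε*e) ≤ B := by rw [hB, hδ]; linarith
  have hδle : δ ≤ ε * e := by rw [hδ]; linarith
  have hδ2M : -δ ≤ 2*M := by rw [hδ]; linarith [ha₁'.1, hx₁'.2]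
  have hsecond : 2*p*δ*B ≤ (2*p*(2*p*M + β*M) + 4*p*M*c) * (ε * e) := by
    rcases le_or_gt 0 δ with hδ0 | hδ0
    · rcases le_or_gt B 0 with hB0 | hB0
      · have h1 : 0 ≤ δ * (-B) := mul_nonneg hδ0 (neg_nonneg.2 hB0)
        have h1' : (0:ℝ) ≤ 2*p*(δ*(-B)) := mul_nonneg (by positivity) h1
        have h2 : (0:ℝ) ≤ (2*p*(2*p*M + β*M) + 4*p*M*c) * (ε * e) := by positivity
        linarith [h1', h2]
      · have h1 : δ*B ≤ (ε*e)*B := mul_le_mul_of_nonneg_right hδle (le_of_lt hB0)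
        have h2 : (ε*e)*B ≤ (ε*e)*(2*p*M+β*M) := mul_le_mul_of_nonneg_left hBub (le_of_lt hεe)
        have h3 : 2*p*(δ*B) ≤ 2*p*((ε*e)*(2*p*M+β*M)) :=
          mul_le_mul_of_nonneg_left (le_trans h1 h2) (by positivity)
        have h4 : (0:ℝ) ≤ 4*p*M*c*(ε*e) := by positivity
        linarith
    · have hA : δ*B ≤ δ*(-p*δ - c*(ε*e)) := mul_le_mul_of_nonpos_left hBlb (le_of_lt hδ0)
      have hsq : (0:ℝ) ≤ p*δ^2 := by positivity
      have hc2 : (-δ)*(c*(ε*e)) ≤ (2*M)*(c*(ε*e)) :=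
        mul_le_mul_of_nonneg_right hδ2M (by positivity)
      have hA2 : δ*B ≤ 2*M*(c*(ε*e)) := by linarith [hA, hsq, hc2]
      have h3 : 2*p*(δ*B) ≤ 2*p*(2*M*(c*(ε*e))) :=
        mul_le_mul_of_nonneg_left hA2 (by positivity)
      have hnn : (0:ℝ) ≤ 2*p*(2*p*M+β*M)*(ε*e) := by positivity
      linarith [h3, hnn]
  linarith

lemma key1_arith (p β K ε e d₁ d₂ : ℝ) (hp : 0 < p) (hβ : 0 < β) (hεe : 0 < ε*e)
    (hK : β + 1 ≤ K) (h1 : d₁ = ε*e) (h2 : d₂ ≤ ε*e) :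
    -p*d₁ + β*d₂ < ε*(K*e) := by
  have ha := mul_le_mul_of_nonneg_left h2 (le_of_lt hβ)
  have hb := mul_pos (show (0:ℝ) < K - β + p by linarith) hεe
  nlinarith [ha, hb]


set_option maxHeartbeats 4000000 in
/-- **Pointwise comparison with the bounding flows.** If `X` satisfies Condition I with
`X 0` in the interior of `V₋`, and `A_L`, `A_U` solve the lower/upper bounding ODEs with
the same initial condition, then (1) `X ≥ A_L` componentwise up to `min(τᴸ, τ)` and
`X ≤ A_U` componentwise up to `min(τᵁ, τ)`; (2) `A_L ≤ X ≤ A_U` componentwise up to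
`τ^□`, where `τ, τᴸ, τᵁ, τ^□` are the exit times from `V₋` of `X`, `A_L`, `A_U` and
`(A_{L,1}, A_{U,2})` respectively (taken to be `T` if there is no exit). -/
theorem pointwise_comparison
    (p β Λ T : ℝ) (hp : 2 < p) (hβ : 0 < β) (hΛ : 0 < Λ) (hT : 0 < T)
    (X X' : ℝ → ℝ × ℝ) (hXI : CondI p β Λ T X X')
    (hX0 : X 0 ∈ interior (Vminus p β))
    (AL AU : ℝ → ℝ × ℝ)
    (hAL : ∀ t ∈ Icc (0 : ℝ) T, HasDerivWithinAt AL (PhiL p β Λ (AL t)) (Icc (0 : ℝ) T) t)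
    (hAU : ∀ t ∈ Icc (0 : ℝ) T, HasDerivWithinAt AU (PhiU p β Λ (AU t)) (Icc (0 : ℝ) T) t)
    (hAL0 : AL 0 = X 0) (hAU0 : AU 0 = X 0) :
    ((∀ t ∈ Icc (0 : ℝ)
        (min (sInf ({t ∈ Icc (0 : ℝ) T | AL t ∉ Vminus p β} ∪ {T}))
             (sInf ({t ∈ Icc (0 : ℝ) T | X t ∉ Vminus p β} ∪ {T}))),
        (AL t).1 ≤ (X t).1 ∧ (AL t).2 ≤ (X t).2) ∧
     (∀ t ∈ Icc (0 : ℝ)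
        (min (sInf ({t ∈ Icc (0 : ℝ) T | AU t ∉ Vminus p β} ∪ {T}))
             (sInf ({t ∈ Icc (0 : ℝ) T | X t ∉ Vminus p β} ∪ {T}))),
        (X t).1 ≤ (AU t).1 ∧ (X t).2 ≤ (AU t).2)) ∧
    (∀ t ∈ Icc (0 : ℝ)
        (sInf ({t ∈ Icc (0 : ℝ) T | ((AL t).1, (AU t).2) ∉ Vminus p β} ∪ {T})),
        ((AL t).1 ≤ (X t).1 ∧ (AL t).2 ≤ (X t).2) ∧
        ((X t).1 ≤ (AU t).1 ∧ (X t).2 ≤ (AU t).2)) := by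
  obtain ⟨hXd, hX'c, hX1, hX2⟩ := hXI
  have hp' : (0:ℝ) < p := by linarith
  have hXV0 : X 0 ∈ Vminus p β := interior_subset hX0
  have hXc : ContinuousOn X (Icc (0:ℝ) T) := fun t ht => (hXd t ht).continuousWithinAt
  have hALc : ContinuousOn AL (Icc (0:ℝ) T) := fun t ht => (hAL t ht).continuousWithinAt
  have hAUc : ContinuousOn AU (Icc (0:ℝ) T) := fun t ht => (hAU t ht).continuousWithinAt
  obtain ⟨MX, hMX⟩ := isCompact_Icc.exists_bound_of_continuousOn hXc
  obtain ⟨ML, hML⟩ := isCompact_Icc.exists_bound_of_continuousOn hALc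
  obtain ⟨MU, hMU⟩ := isCompact_Icc.exists_bound_of_continuousOn hAUc
  set M := max 0 (max MX (max ML MU)) with hMdef
  have hM0 : (0:ℝ) ≤ M := le_max_left _ _
  have hMb : ∀ t ∈ Icc (0:ℝ) T, |(X t).1| ≤ M ∧ |(X t).2| ≤ M ∧ |(AL t).1| ≤ M ∧
      |(AL t).2| ≤ M ∧ |(AU t).1| ≤ M ∧ |(AU t).2| ≤ M := by
    intro t ht
    have hXM : MX ≤ M := le_trans (le_max_left MX (max ML MU)) (le_max_right 0 _)
    have hLM : ML ≤ M :=
      le_trans (le_trans (le_max_left ML MU) (le_max_right MX _)) (le_max_right 0 _)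
    have hUM : MU ≤ M :=
      le_trans (le_trans (le_max_right ML MU) (le_max_right MX _)) (le_max_right 0 _)
    refine ⟨?_, ?_, ?_, ?_, ?_, ?_⟩
    · exact le_trans (le_trans (by simpa [Real.norm_eq_abs] using norm_fst_le (X t)) (hMX t ht)) hXM
    · exact le_trans (le_trans (by simpa [Real.norm_eq_abs] using norm_snd_le (X t)) (hMX t ht)) hXM
    · exact le_trans (le_trans (by simpa [Real.norm_eq_abs] using norm_fst_le (AL t)) (hML t ht)) hLM
    · exact le_trans (le_trans (by simpa [Real.norm_eq_abs] using norm_snd_le (AL t)) (hML t ht)) hLM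
    · exact le_trans (le_trans (by simpa [Real.norm_eq_abs] using norm_fst_le (AU t)) (hMU t ht)) hUM
    · exact le_trans (le_trans (by simpa [Real.norm_eq_abs] using norm_snd_le (AU t)) (hMU t ht)) hUM
  -- the Lipschitz-type constant
  set K := (2*(p-1) + 2*β*Λ) + 2*p*β*M + 2*p*(2*p*M + β*M) + 4*p*M*(2*p + 2*β) + β + 1
    with hKdef
  have hn1 : (0:ℝ) ≤ 2*(p-1) := by linarith
  have hn2 : (0:ℝ) ≤ 2*β*Λ := by positivity
  have hn3 : (0:ℝ) ≤ 2*p*β*M := by positivity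
  have hn4 : (0:ℝ) ≤ 2*p*(2*p*M + β*M) := by positivity
  have hn5 : (0:ℝ) ≤ 4*p*M*(2*p + 2*β) := by positivity
  have hKβ : β + 1 ≤ K := by rw [hKdef]; linarith
  have hCqK : (2*(p-1) + 2*β*Λ) + 2*p*β*M + 2*p*(2*p*M + β*M) + 4*p*M*(2*p + 2*β) < K := by
    rw [hKdef]; linarith
  have hcvL : |(-(2*(p-1)) - 2*β*Λ)| ≤ 2*(p-1) + 2*β*Λ := by
    rw [abs_of_nonpos (by linarith)]; linarith
  have hcvU : |(-(2*(p-1)) + 2*β*Λ)| ≤ 2*(p-1) + 2*β*Λ :=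
    abs_le.2 ⟨by linarith, by linarith⟩
  -- exit time facts
  have hEX := exit_facts T hT p β X hXc hXV0
  have hEL := exit_facts T hT p β AL hALc (by rw [hAL0]; exact hXV0)
  have hEU := exit_facts T hT p β AU hAUc (by rw [hAU0]; exact hXV0)
  have hEB := exit_facts T hT p β (fun t => ((AL t).1, (AU t).2))
    ((hALc.fst).prodMk (hAUc.snd))
    (by show ((AL 0).1, (AU 0).2) ∈ Vminus p β
        rw [hAL0, hAU0]; exact ⟨hXV0.1, hXV0.2.1, hXV0.2.2⟩)
  -- Part 1, lower comparison
  have part1L : ∀ t ∈ Icc (0 : ℝ)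
      (min (sInf ({t ∈ Icc (0:ℝ) T | AL t ∉ Vminus p β} ∪ {T}))
           (sInf ({t ∈ Icc (0:ℝ) T | X t ∉ Vminus p β} ∪ {T}))),
      (AL t).1 ≤ (X t).1 ∧ (AL t).2 ≤ (X t).2 := by
    set S := min (sInf ({t ∈ Icc (0:ℝ) T | AL t ∉ Vminus p β} ∪ {T}))
                 (sInf ({t ∈ Icc (0:ℝ) T | X t ∉ Vminus p β} ∪ {T})) with hSdef
    have hST : S ≤ T := le_trans (min_le_left _ _) hEL.2.1
    have hsub : Icc (0:ℝ) S ⊆ Icc (0:ℝ) T := Icc_subset_Icc le_rfl hST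
    have hcomp := barrier S K 2
      ![fun t => (AL t).1 - (X t).1, fun t => (AL t).2 - (X t).2]
      ![fun t => (PhiL p β Λ (AL t)).1 - (X' t).1, fun t => (PhiL p β Λ (AL t)).2 - (X' t).2]
      (by
        intro i t ht
        fin_cases i
        · show HasDerivWithinAt (fun t => (AL t).1 - (X t).1)
            ((PhiL p β Λ (AL t)).1 - (X' t).1) (Icc (0:ℝ) S) t
          exact HasDerivWithinAt.sub (((hAL t (hsub ht)).mono hsub).fst)
            (((hXd t (hsub ht)).mono hsub).fst)
        · show HasDerivWithinAt (fun t => (AL t).2 - (X t).2)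
            ((PhiL p β Λ (AL t)).2 - (X' t).2) (Icc (0:ℝ) S) t
          exact HasDerivWithinAt.sub (((hAL t (hsub ht)).mono hsub).snd)
            (((hXd t (hsub ht)).mono hsub).snd))
      (by
        intro i
        fin_cases i
        · show (AL 0).1 - (X 0).1 ≤ 0
          rw [hAL0]; simp
        · show (AL 0).2 - (X 0).2 ≤ 0
          rw [hAL0]; simp)
      (by
        intro t ht ε hε i heq hle2
        have htT : t ∈ Icc (0:ℝ) T := hsub ht
        have hALV : AL t ∈ Vminus p β := hEL.2.2 t ⟨ht.1, le_trans ht.2 (min_le_left _ _)⟩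
        have hXV : X t ∈ Vminus p β := hEX.2.2 t ⟨ht.1, le_trans ht.2 (min_le_right _ _)⟩
        have hεe : 0 < ε * exp (K*t) := mul_pos hε.1 (exp_pos _)
        obtain ⟨hbX1, hbX2, hbL1, hbL2, hbU1, hbU2⟩ := hMb t htT
        have hd1 : (AL t).1 - (X t).1 ≤ ε * exp (K*t) := hle2 0
        have hd2 : (AL t).2 - (X t).2 ≤ ε * exp (K*t) := hle2 1
        fin_cases i
        · -- first component
          have heq' : (AL t).1 - (X t).1 = ε * exp (K*t) := heq
          show (PhiL p β Λ (AL t)).1 - (X' t).1 < ε * (K * exp (K*t))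
          have hkey := key1_arith p β K ε (exp (K*t)) ((AL t).1 - (X t).1)
            ((AL t).2 - (X t).2) hp' hβ hεe hKβ heq' hd2
          have hPhi1 : (PhiL p β Λ (AL t)).1 = F1 p β (AL t) := rfl
          rw [hPhi1, hX1 t htT]
          simp only [F1]
          linarith
        · -- second component
          have heq' : (AL t).2 - (X t).2 = ε * exp (K*t) := heq
          show (PhiL p β Λ (AL t)).2 - (X' t).2 < ε * (K * exp (K*t))
          have hX2L : F2L p β Λ (X t) ≤ (X' t).2 := (hX2 t htT).1
          have hreg : β*(AL t).2 ≤ 2*p*(AL t).1 + (2*p + 2*β)*(ε*exp (K*t)) := by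
            have hv := Vm_ineq hβ hALV
            have hce : (0:ℝ) ≤ (2*p + 2*β)*(ε*exp (K*t)) := by positivity
            linarith
          have hq := quad_est p β (-(2*(p-1)) - 2*β*Λ) (2*(p-1) + 2*β*Λ) (2*p + 2*β) M ε
            (exp (K*t)) (AL t).1 (AL t).2 (X t).1 (X t).2 hp' hβ hε.1 (exp_pos _) hM0
            (by positivity) hcvL hbL1 hbX1 hbL2 (by linarith) (by linarith) hreg
          have hrw : F2L p β Λ (AL t) - F2L p β Λ (X t) =
              ((-(2*(p-1)) - 2*β*Λ) * (AL t).2 + 2*p^2*(AL t).1^2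
                - 2*p*β*(AL t).1*(AL t).2)
              - ((-(2*(p-1)) - 2*β*Λ) * (X t).2 + 2*p^2*(X t).1^2
                - 2*p*β*(X t).1*(X t).2) := by
            simp only [F2L]; ring
          have hlt : ((2*(p-1) + 2*β*Λ) + 2*p*β*M + 2*p*(2*p*M + β*M)
              + 4*p*M*(2*p + 2*β)) * (ε*exp (K*t)) < K * (ε*exp (K*t)) :=
            mul_lt_mul_of_pos_right hCqK hεe
          have hPhi2 : (PhiL p β Λ (AL t)).2 = F2L p β Λ (AL t) := rfl
          rw [hPhi2]
          linarith)
    intro t ht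
    have h0 : (AL t).1 - (X t).1 ≤ 0 := hcomp t ht 0
    have h1 : (AL t).2 - (X t).2 ≤ 0 := hcomp t ht 1
    exact ⟨by linarith, by linarith⟩
  -- Part 1, upper comparison
  have part1U : ∀ t ∈ Icc (0 : ℝ)
      (min (sInf ({t ∈ Icc (0:ℝ) T | AU t ∉ Vminus p β} ∪ {T}))
           (sInf ({t ∈ Icc (0:ℝ) T | X t ∉ Vminus p β} ∪ {T}))),
      (X t).1 ≤ (AU t).1 ∧ (X t).2 ≤ (AU t).2 := by
    set S := min (sInf ({t ∈ Icc (0:ℝ) T | AU t ∉ Vminus p β} ∪ {T}))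
                 (sInf ({t ∈ Icc (0:ℝ) T | X t ∉ Vminus p β} ∪ {T})) with hSdef
    have hST : S ≤ T := le_trans (min_le_left _ _) hEU.2.1
    have hsub : Icc (0:ℝ) S ⊆ Icc (0:ℝ) T := Icc_subset_Icc le_rfl hST
    have hcomp := barrier S K 2
      ![fun t => (X t).1 - (AU t).1, fun t => (X t).2 - (AU t).2]
      ![fun t => (X' t).1 - (PhiU p β Λ (AU t)).1, fun t => (X' t).2 - (PhiU p β Λ (AU t)).2]
      (by
        intro i t ht
        fin_cases i
        · show HasDerivWithinAt (fun t => (X t).1 - (AU t).1)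
            ((X' t).1 - (PhiU p β Λ (AU t)).1) (Icc (0:ℝ) S) t
          exact HasDerivWithinAt.sub (((hXd t (hsub ht)).mono hsub).fst)
            (((hAU t (hsub ht)).mono hsub).fst)
        · show HasDerivWithinAt (fun t => (X t).2 - (AU t).2)
            ((X' t).2 - (PhiU p β Λ (AU t)).2) (Icc (0:ℝ) S) t
          exact HasDerivWithinAt.sub (((hXd t (hsub ht)).mono hsub).snd)
            (((hAU t (hsub ht)).mono hsub).snd))
      (by
        intro i
        fin_cases i
        · show (X 0).1 - (AU 0).1 ≤ 0
          rw [hAU0]; simp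
        · show (X 0).2 - (AU 0).2 ≤ 0
          rw [hAU0]; simp)
      (by
        intro t ht ε hε i heq hle2
        have htT : t ∈ Icc (0:ℝ) T := hsub ht
        have hXV : X t ∈ Vminus p β := hEX.2.2 t ⟨ht.1, le_trans ht.2 (min_le_right _ _)⟩
        have hεe : 0 < ε * exp (K*t) := mul_pos hε.1 (exp_pos _)
        obtain ⟨hbX1, hbX2, hbL1, hbL2, hbU1, hbU2⟩ := hMb t htT
        have hd1 : (X t).1 - (AU t).1 ≤ ε * exp (K*t) := hle2 0
        have hd2 : (X t).2 - (AU t).2 ≤ ε * exp (K*t) := hle2 1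
        fin_cases i
        · have heq' : (X t).1 - (AU t).1 = ε * exp (K*t) := heq
          show (X' t).1 - (PhiU p β Λ (AU t)).1 < ε * (K * exp (K*t))
          have hkey := key1_arith p β K ε (exp (K*t)) ((X t).1 - (AU t).1)
            ((X t).2 - (AU t).2) hp' hβ hεe hKβ heq' hd2
          have hPhi1 : (PhiU p β Λ (AU t)).1 = F1 p β (AU t) := rfl
          rw [hPhi1, hX1 t htT]
          simp only [F1]
          linarith
        · have heq' : (X t).2 - (AU t).2 = ε * exp (K*t) := heq
          show (X' t).2 - (PhiU p β Λ (AU t)).2 < ε * (K * exp (K*t))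
          have hX2U : (X' t).2 ≤ F2U p β Λ (X t) := (hX2 t htT).2
          have hreg : β*(X t).2 ≤ 2*p*(X t).1 + (2*p + 2*β)*(ε*exp (K*t)) := by
            have hv := Vm_ineq hβ hXV
            have hce : (0:ℝ) ≤ (2*p + 2*β)*(ε*exp (K*t)) := by positivity
            linarith
          have hq := quad_est p β (-(2*(p-1)) + 2*β*Λ) (2*(p-1) + 2*β*Λ) (2*p + 2*β) M ε
            (exp (K*t)) (X t).1 (X t).2 (AU t).1 (AU t).2 hp' hβ hε.1 (exp_pos _) hM0
            (by positivity) hcvU hbX1 hbU1 hbX2 (by linarith) (by linarith) hreg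
          have hrw : F2U p β Λ (X t) - F2U p β Λ (AU t) =
              ((-(2*(p-1)) + 2*β*Λ) * (X t).2 + 2*p^2*(X t).1^2
                - 2*p*β*(X t).1*(X t).2)
              - ((-(2*(p-1)) + 2*β*Λ) * (AU t).2 + 2*p^2*(AU t).1^2
                - 2*p*β*(AU t).1*(AU t).2) := by
            simp only [F2U]; ring
          have hlt : ((2*(p-1) + 2*β*Λ) + 2*p*β*M + 2*p*(2*p*M + β*M)
              + 4*p*M*(2*p + 2*β)) * (ε*exp (K*t)) < K * (ε*exp (K*t)) :=
            mul_lt_mul_of_pos_right hCqK hεe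
          have hPhi2 : (PhiU p β Λ (AU t)).2 = F2U p β Λ (AU t) := rfl
          rw [hPhi2]
          linarith)
    intro t ht
    have h0 : (X t).1 - (AU t).1 ≤ 0 := hcomp t ht 0
    have h1 : (X t).2 - (AU t).2 ≤ 0 := hcomp t ht 1
    exact ⟨by linarith, by linarith⟩
  -- Part 2, box comparison
  have part2 : ∀ t ∈ Icc (0 : ℝ)
      (sInf ({t ∈ Icc (0:ℝ) T | ((AL t).1, (AU t).2) ∉ Vminus p β} ∪ {T})),
      ((AL t).1 ≤ (X t).1 ∧ (AL t).2 ≤ (X t).2) ∧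
      ((X t).1 ≤ (AU t).1 ∧ (X t).2 ≤ (AU t).2) := by
    set S := sInf ({t ∈ Icc (0:ℝ) T | ((AL t).1, (AU t).2) ∉ Vminus p β} ∪ {T}) with hSdef
    have hST : S ≤ T := hEB.2.1
    have hsub : Icc (0:ℝ) S ⊆ Icc (0:ℝ) T := Icc_subset_Icc le_rfl hST
    have hcomp := barrier S K 4
      ![fun t => (AL t).1 - (X t).1, fun t => (AL t).2 - (X t).2,
        fun t => (X t).1 - (AU t).1, fun t => (X t).2 - (AU t).2]
      ![fun t => (PhiL p β Λ (AL t)).1 - (X' t).1, fun t => (PhiL p β Λ (AL t)).2 - (X' t).2,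
        fun t => (X' t).1 - (PhiU p β Λ (AU t)).1, fun t => (X' t).2 - (PhiU p β Λ (AU t)).2]
      (by
        intro i t ht
        fin_cases i
        · show HasDerivWithinAt (fun t => (AL t).1 - (X t).1)
            ((PhiL p β Λ (AL t)).1 - (X' t).1) (Icc (0:ℝ) S) t
          exact HasDerivWithinAt.sub (((hAL t (hsub ht)).mono hsub).fst)
            (((hXd t (hsub ht)).mono hsub).fst)
        · show HasDerivWithinAt (fun t => (AL t).2 - (X t).2)
            ((PhiL p β Λ (AL t)).2 - (X' t).2) (Icc (0:ℝ) S) t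
          exact HasDerivWithinAt.sub (((hAL t (hsub ht)).mono hsub).snd)
            (((hXd t (hsub ht)).mono hsub).snd)
        · show HasDerivWithinAt (fun t => (X t).1 - (AU t).1)
            ((X' t).1 - (PhiU p β Λ (AU t)).1) (Icc (0:ℝ) S) t
          exact HasDerivWithinAt.sub (((hXd t (hsub ht)).mono hsub).fst)
            (((hAU t (hsub ht)).mono hsub).fst)
        · show HasDerivWithinAt (fun t => (X t).2 - (AU t).2)
            ((X' t).2 - (PhiU p β Λ (AU t)).2) (Icc (0:ℝ) S) t
          exact HasDerivWithinAt.sub (((hXd t (hsub ht)).mono hsub).snd)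
            (((hAU t (hsub ht)).mono hsub).snd))
      (by
        intro i
        fin_cases i
        · show (AL 0).1 - (X 0).1 ≤ 0
          rw [hAL0]; simp
        · show (AL 0).2 - (X 0).2 ≤ 0
          rw [hAL0]; simp
        · show (X 0).1 - (AU 0).1 ≤ 0
          rw [hAU0]; simp
        · show (X 0).2 - (AU 0).2 ≤ 0
          rw [hAU0]; simp)
      (by
        intro t ht ε hε i heq hle2
        have htT : t ∈ Icc (0:ℝ) T := hsub ht
        have hboxV : ((AL t).1, (AU t).2) ∈ Vminus p β := hEB.2.2 t ht
        have hbox : β*(AU t).2 ≤ 2*p*(AL t).1 := Vm_ineq hβ hboxV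
        have hεe : 0 < ε * exp (K*t) := mul_pos hε.1 (exp_pos _)
        obtain ⟨hbX1, hbX2, hbL1, hbL2, hbU1, hbU2⟩ := hMb t htT
        have hq0 : (AL t).1 - (X t).1 ≤ ε * exp (K*t) := hle2 0
        have hq1 : (AL t).2 - (X t).2 ≤ ε * exp (K*t) := hle2 1
        have hq2 : (X t).1 - (AU t).1 ≤ ε * exp (K*t) := hle2 2
        have hq3 : (X t).2 - (AU t).2 ≤ ε * exp (K*t) := hle2 3
        fin_cases i
        · -- AL₁ - X₁ hits the barrier
          have heq' : (AL t).1 - (X t).1 = ε * exp (K*t) := heq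
          show (PhiL p β Λ (AL t)).1 - (X' t).1 < ε * (K * exp (K*t))
          have hkey := key1_arith p β K ε (exp (K*t)) ((AL t).1 - (X t).1)
            ((AL t).2 - (X t).2) hp' hβ hεe hKβ heq' hq1
          have hPhi1 : (PhiL p β Λ (AL t)).1 = F1 p β (AL t) := rfl
          rw [hPhi1, hX1 t htT]
          simp only [F1]
          linarith
        · -- AL₂ - X₂ hits the barrier
          have heq' : (AL t).2 - (X t).2 = ε * exp (K*t) := heq
          show (PhiL p β Λ (AL t)).2 - (X' t).2 < ε * (K * exp (K*t))
          have hX2L : F2L p β Λ (X t) ≤ (X' t).2 := (hX2 t htT).1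
          have hreg : β*(AL t).2 ≤ 2*p*(AL t).1 + (2*p + 2*β)*(ε*exp (K*t)) := by
            have hm1 : β*((X t).2 - (AU t).2) ≤ β*(ε*exp (K*t)) :=
              mul_le_mul_of_nonneg_left hq3 (le_of_lt hβ)
            have hm2 : β*((AL t).2 - (X t).2) = β*(ε*exp (K*t)) := by rw [heq']
            have hm3 : (0:ℝ) ≤ p*(ε*exp (K*t)) := by positivity
            nlinarith [hm1, hm2, hm3, hbox]
          have hq := quad_est p β (-(2*(p-1)) - 2*β*Λ) (2*(p-1) + 2*β*Λ) (2*p + 2*β) M ε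
            (exp (K*t)) (AL t).1 (AL t).2 (X t).1 (X t).2 hp' hβ hε.1 (exp_pos _) hM0
            (by positivity) hcvL hbL1 hbX1 hbL2 (by linarith) (by linarith) hreg
          have hrw : F2L p β Λ (AL t) - F2L p β Λ (X t) =
              ((-(2*(p-1)) - 2*β*Λ) * (AL t).2 + 2*p^2*(AL t).1^2
                - 2*p*β*(AL t).1*(AL t).2)
              - ((-(2*(p-1)) - 2*β*Λ) * (X t).2 + 2*p^2*(X t).1^2
                - 2*p*β*(X t).1*(X t).2) := by
            simp only [F2L]; ring
          have hlt : ((2*(p-1) + 2*β*Λ) + 2*p*β*M + 2*p*(2*p*M + β*M)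
              + 4*p*M*(2*p + 2*β)) * (ε*exp (K*t)) < K * (ε*exp (K*t)) :=
            mul_lt_mul_of_pos_right hCqK hεe
          have hPhi2 : (PhiL p β Λ (AL t)).2 = F2L p β Λ (AL t) := rfl
          rw [hPhi2]
          linarith
        · -- X₁ - AU₁ hits the barrier
          have heq' : (X t).1 - (AU t).1 = ε * exp (K*t) := heq
          show (X' t).1 - (PhiU p β Λ (AU t)).1 < ε * (K * exp (K*t))
          have hkey := key1_arith p β K ε (exp (K*t)) ((X t).1 - (AU t).1)
            ((X t).2 - (AU t).2) hp' hβ hεe hKβ heq' hq3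
          have hPhi1 : (PhiU p β Λ (AU t)).1 = F1 p β (AU t) := rfl
          rw [hPhi1, hX1 t htT]
          simp only [F1]
          linarith
        · -- X₂ - AU₂ hits the barrier
          have heq' : (X t).2 - (AU t).2 = ε * exp (K*t) := heq
          show (X' t).2 - (PhiU p β Λ (AU t)).2 < ε * (K * exp (K*t))
          have hX2U : (X' t).2 ≤ F2U p β Λ (X t) := (hX2 t htT).2
          have hreg : β*(X t).2 ≤ 2*p*(X t).1 + (2*p + 2*β)*(ε*exp (K*t)) := by
            have hm2 : β*((X t).2 - (AU t).2) = β*(ε*exp (K*t)) := by rw [heq']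
            have hm1 : 2*p*((AL t).1 - (X t).1) ≤ 2*p*(ε*exp (K*t)) :=
              mul_le_mul_of_nonneg_left hq0 (by positivity)
            have hm3 : (0:ℝ) ≤ β*(ε*exp (K*t)) := by positivity
            nlinarith [hm1, hm2, hm3, hbox]
          have hq := quad_est p β (-(2*(p-1)) + 2*β*Λ) (2*(p-1) + 2*β*Λ) (2*p + 2*β) M ε
            (exp (K*t)) (X t).1 (X t).2 (AU t).1 (AU t).2 hp' hβ hε.1 (exp_pos _) hM0
            (by positivity) hcvU hbX1 hbU1 hbX2 (by linarith) (by linarith) hreg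
          have hrw : F2U p β Λ (X t) - F2U p β Λ (AU t) =
              ((-(2*(p-1)) + 2*β*Λ) * (X t).2 + 2*p^2*(X t).1^2
                - 2*p*β*(X t).1*(X t).2)
              - ((-(2*(p-1)) + 2*β*Λ) * (AU t).2 + 2*p^2*(AU t).1^2
                - 2*p*β*(AU t).1*(AU t).2) := by
            simp only [F2U]; ring
          have hlt : ((2*(p-1) + 2*β*Λ) + 2*p*β*M + 2*p*(2*p*M + β*M)
              + 4*p*M*(2*p + 2*β)) * (ε*exp (K*t)) < K * (ε*exp (K*t)) :=
            mul_lt_mul_of_pos_right hCqK hεe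
          have hPhi2 : (PhiU p β Λ (AU t)).2 = F2U p β Λ (AU t) := rfl
          rw [hPhi2]
          linarith)
    intro t ht
    have h0 : (AL t).1 - (X t).1 ≤ 0 := hcomp t ht 0
    have h1 : (AL t).2 - (X t).2 ≤ 0 := hcomp t ht 1
    have h2 : (X t).1 - (AU t).1 ≤ 0 := hcomp t ht 2
    have h3 : (X t).2 - (AU t).2 ≤ 0 := hcomp t ht 3
    exact ⟨⟨by linarith, by linarith⟩, ⟨by linarith, by linarith⟩⟩
  exact ⟨⟨part1L, part1U⟩, part2⟩
end

section
/- Let T > 0 and let Ψ : ℝ² → ℝ² be locally Lipschitz and quasi-increasing, meaning that for each fixed x the map y ↦ Ψ₁(x,y) is monotone nondecreasing, and for each fixed y the map x ↦ Ψ₂(x,y) is monotone nondecreasing. Let A, B : [0,T] → ℝ² be continuously differentiable with B'(t) = Ψ(B(t)) for all t, A₁'(t) ≥ Ψ₁(A(t)) and A₂'(t) ≥ Ψ₂(A(t)) for all t, and B₁(0) ≤ A₁(0), B₂(0) ≤ A₂(0). Then B₁(t) ≤ A₁(t) and B₂(t) ≤ A₂(t) for all t ∈ [0,T]. -/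
open Set Metric

lemma loclip_compact {E F : Type*} [MetricSpace E] [MetricSpace F]
    {Ψ : E → F} (h : LocallyLipschitz Ψ) {K : Set E} (hK : IsCompact K)
    (hne : K.Nonempty) (hbd : ∃ S : ℝ, ∀ p ∈ K, ∀ q ∈ K, dist (Ψ p) (Ψ q) ≤ S) :
    ∃ L : ℝ, 0 ≤ L ∧ ∀ p ∈ K, ∀ q ∈ K, dist (Ψ p) (Ψ q) ≤ L * dist p q := by
  classical
  have hloc : ∀ x : E, ∃ C : NNReal, ∃ r : ℝ, 0 < r ∧ LipschitzOnWith C Ψ (ball x r) := by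
    intro x
    obtain ⟨C, t, ht, hL⟩ := h x
    obtain ⟨r, hr, hball⟩ := Metric.mem_nhds_iff.1 ht
    exact ⟨C, r, hr, hL.mono hball⟩
  choose C r hr hL using hloc
  obtain ⟨s, hs⟩ := hK.elim_finite_subcover (fun x : E => ball x (r x / 2))
    (fun x => isOpen_ball) (fun x hx => mem_iUnion.2 ⟨x, mem_ball_self (by linarith [hr x])⟩)
  have hsne : s.Nonempty := by
    obtain ⟨p, hp⟩ := hne
    have := hs hp
    simp only [mem_iUnion] at this
    obtain ⟨i, hi, _⟩ := this
    exact ⟨i, hi⟩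
  set δ : ℝ := s.inf' hsne (fun x => r x / 2) with hδdef
  have hδpos : 0 < δ := by
    rw [hδdef]
    apply (Finset.lt_inf'_iff hsne).2
    intro x _; linarith [hr x]
  set Cmax : ℝ := s.sup' hsne (fun x => (C x : ℝ)) with hCdef
  have hC0 : 0 ≤ Cmax := by
    obtain ⟨i, hi⟩ := hsne
    exact le_trans (C i).2 (Finset.le_sup' (fun x => (C x : ℝ)) hi)
  obtain ⟨S, hS⟩ := hbd
  have hS0 : 0 ≤ S := by
    obtain ⟨p, hp⟩ := hne
    exact le_trans dist_nonneg (hS p hp p hp)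
  refine ⟨max Cmax (S / δ), le_trans hC0 (le_max_left _ _), ?_⟩
  intro p hp q hq
  rcases lt_or_ge (dist p q) δ with hd | hd
  · -- close pair: use local Lipschitz
    have := hs hp
    simp only [mem_iUnion] at this
    obtain ⟨i, hi, hpi⟩ := this
    have hqi : q ∈ ball i (r i) := by
      rw [mem_ball] at hpi ⊢
      have hδle : δ ≤ r i / 2 := Finset.inf'_le _ hi
      calc dist q i ≤ dist q p + dist p i := dist_triangle _ _ _
        _ < δ + r i / 2 := by rw [dist_comm q p]; linarith
        _ ≤ r i := by linarith
    have hpi' : p ∈ ball i (r i) := by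
      rw [mem_ball] at hpi ⊢; linarith [hr i]
    have := (lipschitzOnWith_iff_dist_le_mul.1 (hL i)) p hpi' q hqi
    calc dist (Ψ p) (Ψ q) ≤ (C i : ℝ) * dist p q := this
      _ ≤ Cmax * dist p q := by
          apply mul_le_mul_of_nonneg_right (Finset.le_sup' (fun x => (C x : ℝ)) hi) dist_nonneg
      _ ≤ max Cmax (S / δ) * dist p q :=
          mul_le_mul_of_nonneg_right (le_max_left _ _) dist_nonneg
  · -- far pair: use boundedness
    calc dist (Ψ p) (Ψ q) ≤ S := hS p hp q hq
      _ = (S / δ) * δ := by field_simp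
      _ ≤ (S / δ) * dist p q := by
          apply mul_le_mul_of_nonneg_left hd (by positivity)
      _ ≤ max Cmax (S / δ) * dist p q :=
          mul_le_mul_of_nonneg_right (le_max_right _ _) dist_nonneg

/-- **Chaplygin's comparison lemma.** Let `Ψ : ℝ² → ℝ²` be locally Lipschitz and
quasi-increasing (i.e. `y ↦ Ψ₁(x,y)` and `x ↦ Ψ₂(x,y)` are monotone nondecreasing).
If `B` solves `B' = Ψ(B)`, `A` is `C¹` with `A₁' ≥ Ψ₁(A)` and `A₂' ≥ Ψ₂(A)` on `[0,T]`,
and `B(0) ≤ A(0)` componentwise, then `B(t) ≤ A(t)` componentwise on `[0,T]`. -/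
theorem chaplygin
    (T : ℝ) (hT : 0 < T)
    (Ψ : ℝ × ℝ → ℝ × ℝ) (hLip : LocallyLipschitz Ψ)
    (hquasi1 : ∀ x : ℝ, Monotone fun y : ℝ => (Ψ (x, y)).1)
    (hquasi2 : ∀ y : ℝ, Monotone fun x : ℝ => (Ψ (x, y)).2)
    (A B A' B' : ℝ → ℝ × ℝ)
    (hA : ∀ t ∈ Icc (0 : ℝ) T, HasDerivWithinAt A (A' t) (Icc (0 : ℝ) T) t)
    (hA' : ContinuousOn A' (Icc (0 : ℝ) T))
    (hB : ∀ t ∈ Icc (0 : ℝ) T, HasDerivWithinAt B (B' t) (Icc (0 : ℝ) T) t)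
    (hB' : ContinuousOn B' (Icc (0 : ℝ) T))
    (hBode : ∀ t ∈ Icc (0 : ℝ) T, B' t = Ψ (B t))
    (hA1 : ∀ t ∈ Icc (0 : ℝ) T, (Ψ (A t)).1 ≤ (A' t).1)
    (hA2 : ∀ t ∈ Icc (0 : ℝ) T, (Ψ (A t)).2 ≤ (A' t).2)
    (h01 : (B 0).1 ≤ (A 0).1) (h02 : (B 0).2 ≤ (A 0).2) :
    ∀ t ∈ Icc (0 : ℝ) T, (B t).1 ≤ (A t).1 ∧ (B t).2 ≤ (A t).2 := by
  have h0I : (0 : ℝ) ∈ Icc (0:ℝ) T := ⟨le_refl _, le_of_lt hT⟩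
  have hAc : ContinuousOn A (Icc (0:ℝ) T) := fun t ht => (hA t ht).continuousWithinAt
  have hBc : ContinuousOn B (Icc (0:ℝ) T) := fun t ht => (hB t ht).continuousWithinAt
  -- bound on curves
  obtain ⟨RA, hRA⟩ := isCompact_Icc.exists_bound_of_continuousOn hAc
  obtain ⟨RB, hRB⟩ := isCompact_Icc.exists_bound_of_continuousOn hBc
  set R : ℝ := max RA RB with hRdef
  have hR0 : 0 ≤ R := le_trans (norm_nonneg (A 0)) (le_trans (hRA 0 h0I) (le_max_left _ _))
  have hAK : ∀ t ∈ Icc (0:ℝ) T, ‖A t‖ ≤ R := fun t ht => le_trans (hRA t ht) (le_max_left _ _)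
  have hBK : ∀ t ∈ Icc (0:ℝ) T, ‖B t‖ ≤ R := fun t ht => le_trans (hRB t ht) (le_max_right _ _)
  have hKc : IsCompact (closedBall (0 : ℝ × ℝ) (R + 1)) := isCompact_closedBall _ _
  have hKne : (closedBall (0 : ℝ × ℝ) (R + 1)).Nonempty := ⟨0, mem_closedBall_self (by linarith)⟩
  have hKbd : ∃ S : ℝ, ∀ p ∈ closedBall (0 : ℝ × ℝ) (R + 1), ∀ q ∈ closedBall (0 : ℝ × ℝ) (R + 1), dist (Ψ p) (Ψ q) ≤ S := by
    obtain ⟨S, hS⟩ := hKc.exists_bound_of_continuousOn (hLip.continuous.continuousOn)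
    exact ⟨2 * S, fun p hp q hq => by
      calc dist (Ψ p) (Ψ q) ≤ ‖Ψ p‖ + ‖Ψ q‖ := dist_le_norm_add_norm _ _
        _ ≤ 2 * S := by linarith [hS p hp, hS q hq]⟩
  obtain ⟨L₀, hL₀0, hL₀⟩ := loclip_compact hLip hKc hKne hKbd
  set L : ℝ := max L₀ 1 with hLdef
  have hL1 : (1:ℝ) ≤ L := le_max_right _ _
  have hLpos : (0:ℝ) < L := lt_of_lt_of_le one_pos hL1
  have hLlip : ∀ p ∈ closedBall (0 : ℝ × ℝ) (R+1), ∀ q ∈ closedBall (0 : ℝ × ℝ) (R+1), dist (Ψ p) (Ψ q) ≤ L * dist p q := fun p hp q hq =>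
    le_trans (hL₀ p hp q hq) (mul_le_mul_of_nonneg_right (le_max_left _ _) dist_nonneg)
  -- the key claim
  set ε₀ : ℝ := Real.exp (-(3 * L * T)) with hε₀def
  have hε₀pos : 0 < ε₀ := Real.exp_pos _
  have key : ∀ ε : ℝ, 0 < ε → ε ≤ ε₀ → ∀ t ∈ Icc (0:ℝ) T,
      -(ε * Real.exp (3 * L * t)) < (A t).1 - (B t).1 ∧
      -(ε * Real.exp (3 * L * t)) < (A t).2 - (B t).2 := by
      intro ε hε hεε
      set m : ℝ → ℝ := fun s => ε * Real.exp (3 * L * s) with hmdef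
      have hmpos : ∀ s, 0 < m s := fun s => mul_pos hε (Real.exp_pos _)
      have hmle1 : ∀ s ∈ Icc (0:ℝ) T, m s ≤ 1 := by
        intro s hs
        have h1 : Real.exp (3 * L * s) ≤ Real.exp (3 * L * T) := by
          apply Real.exp_le_exp.2
          have := hs.2
          nlinarith
        calc m s ≤ ε₀ * Real.exp (3 * L * T) :=
              mul_le_mul hεε h1 (Real.exp_pos _).le hε₀pos.le
          _ = 1 := by rw [hε₀def, ← Real.exp_add]; simp
      have hmcont : Continuous m := by fun_prop
      have hmderiv : ∀ x : ℝ, HasDerivAt m (3 * L * m x) x := by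
        intro x
        have h1 : HasDerivAt (fun s : ℝ => 3 * L * s) (3 * L) x := by
          simpa using (hasDerivAt_id x).const_mul (3 * L)
        have := (h1.exp).const_mul ε
        convert this using 1
        show 3 * L * (ε * Real.exp (3 * L * x)) = _; ring
        all_goals rfl
      -- component derivatives helper
      have hfst : ∀ (f : ℝ → ℝ×ℝ) (v : ℝ×ℝ) (x : ℝ), HasDerivAt f v x →
          HasDerivAt (fun s => (f s).1) v.1 x := by
        intro f v x hf
        exact (hasFDerivAt_fst (p := f x)).comp_hasDerivAt x hf
      have hsnd : ∀ (f : ℝ → ℝ×ℝ) (v : ℝ×ℝ) (x : ℝ), HasDerivAt f v x →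
          HasDerivAt (fun s => (f s).2) v.2 x := by
        intro f v x hf
        exact (hasFDerivAt_snd (p := f x)).comp_hasDerivAt x hf
      -- the contradiction set
      by_contra hcon
      push_neg at hcon
      obtain ⟨t₁, ht₁I, ht₁⟩ := hcon
      set Z : Set ℝ := {t | t ∈ Icc (0:ℝ) T ∧
          ((A t).1 - (B t).1 + m t ≤ 0 ∨ (A t).2 - (B t).2 + m t ≤ 0)} with hZdef
      replace ht₁ : -(m t₁) < (A t₁).1 - (B t₁).1 → (A t₁).2 - (B t₁).2 ≤ -(m t₁) := ht₁
      have ht₁Z : t₁ ∈ Z := by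
        refine ⟨ht₁I, ?_⟩
        rcases le_or_gt ((A t₁).1 - (B t₁).1) (-(m t₁)) with h | h
        · left; linarith
        · right; linarith [ht₁ h]
      have hZbdd : BddBelow Z := ⟨0, fun t ht => ht.1.1⟩
      have hZclosed : IsClosed Z := by
        have e1 : IsClosed (Icc (0:ℝ) T ∩
            (fun t => (A t).1 - (B t).1 + m t) ⁻¹' Iic 0) := by
          apply ContinuousOn.preimage_isClosed_of_isClosed
            ((hAc.fst.sub hBc.fst).add hmcont.continuousOn) isClosed_Icc isClosed_Iic
        have e2 : IsClosed (Icc (0:ℝ) T ∩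
            (fun t => (A t).2 - (B t).2 + m t) ⁻¹' Iic 0) := by
          apply ContinuousOn.preimage_isClosed_of_isClosed
            ((hAc.snd.sub hBc.snd).add hmcont.continuousOn) isClosed_Icc isClosed_Iic
        have : Z = (Icc (0:ℝ) T ∩ (fun t => (A t).1 - (B t).1 + m t) ⁻¹' Iic 0) ∪
            (Icc (0:ℝ) T ∩ (fun t => (A t).2 - (B t).2 + m t) ⁻¹' Iic 0) := by
          ext t
          simp only [hZdef, mem_setOf_eq, mem_union, mem_inter_iff, mem_preimage, mem_Iic]
          tauto
        rw [this]
        exact e1.union e2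
      set t₀ : ℝ := sInf Z with ht₀def
      have ht₀Z : t₀ ∈ Z := hZclosed.csInf_mem ⟨t₁, ht₁Z⟩ hZbdd
      have ht₀I : t₀ ∈ Icc (0:ℝ) T := ht₀Z.1
      have ht₀pos : 0 < t₀ := by
        rcases lt_or_eq_of_le ht₀I.1 with h | h
        · exact h
        · exfalso
          have h0Z : (0:ℝ) ∈ Z := by rw [h]; exact ht₀Z
          have hm0 : m 0 = ε := by simp [hmdef]
          rcases h0Z.2 with h' | h' <;> rw [hm0] at h' <;> linarith
      have hbefore : ∀ s, 0 ≤ s → s < t₀ →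
          0 < (A s).1 - (B s).1 + m s ∧ 0 < (A s).2 - (B s).2 + m s := by
        intro s hs0 hst
        have hsI : s ∈ Icc (0:ℝ) T := ⟨hs0, le_trans hst.le ht₀I.2⟩
        have hsZ : s ∉ Z := notMem_of_lt_csInf hst hZbdd
        rw [hZdef, mem_setOf_eq] at hsZ
        push_neg at hsZ
        obtain ⟨h1, h2⟩ := hsZ hsI
        exact ⟨by linarith, by linarith⟩
      -- membership facts
      have hBinK : ∀ x ∈ Icc (0:ℝ) T, B x ∈ closedBall (0:ℝ×ℝ) (R+1) := by
        intro x hx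
        rw [mem_closedBall, dist_zero_right]
        linarith [hBK x hx]
      have hP1K : ∀ x ∈ Icc (0:ℝ) T, ((A x).1, (B x).2 - m x) ∈ closedBall (0:ℝ×ℝ) (R+1) := by
        intro x hx
        rw [mem_closedBall, dist_zero_right, Prod.norm_def]
        apply max_le
        · have : ‖(A x).1‖ ≤ ‖A x‖ := by
            rw [Prod.norm_def]; exact le_max_left _ _
          simp only [Real.norm_eq_abs] at this ⊢
          linarith [hAK x hx]
        · have h2 : ‖(B x).2‖ ≤ ‖B x‖ := by
            rw [Prod.norm_def]; exact le_max_right _ _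
          simp only [Real.norm_eq_abs] at h2 ⊢
          have := abs_le.1 (le_trans h2 (hBK x hx))
          rw [abs_le]
          constructor <;> [linarith [hmle1 x hx]; linarith [hmpos x]]
      have hP2K : ∀ x ∈ Icc (0:ℝ) T, ((B x).1 - m x, (A x).2) ∈ closedBall (0:ℝ×ℝ) (R+1) := by
        intro x hx
        rw [mem_closedBall, dist_zero_right, Prod.norm_def]
        apply max_le
        · have h2 : ‖(B x).1‖ ≤ ‖B x‖ := by
            rw [Prod.norm_def]; exact le_max_left _ _
          simp only [Real.norm_eq_abs] at h2 ⊢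
          have := abs_le.1 (le_trans h2 (hBK x hx))
          rw [abs_le]
          constructor <;> [linarith [hmle1 x hx]; linarith [hmpos x]]
        · have : ‖(A x).2‖ ≤ ‖A x‖ := by
            rw [Prod.norm_def]; exact le_max_right _ _
          simp only [Real.norm_eq_abs] at this ⊢
          linarith [hAK x hx]
      -- case analysis on which component hits zero first
      rcases ht₀Z.2 with hz1 | hz2
      · -- component 1 hits zero
        have hu1t₀ : (A t₀).1 - (B t₀).1 < 0 := by linarith [hmpos t₀]
        have hcont1 : ContinuousOn (fun s => (A s).1 - (B s).1) (Icc (0:ℝ) T) :=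
          hAc.fst.sub hBc.fst
        have hev : ∀ᶠ s in nhdsWithin t₀ (Icc (0:ℝ) T), (A s).1 - (B s).1 < 0 :=
          Filter.Tendsto.eventually_lt_const hu1t₀ (hcont1 t₀ ht₀I)
        rw [eventually_nhdsWithin_iff, Metric.eventually_nhds_iff] at hev
        obtain ⟨δ, hδpos, hδ⟩ := hev
        set c : ℝ := t₀ - min (δ/2) t₀ with hcdef
        have hc0 : 0 ≤ c := by
          rw [hcdef]; simp only [sub_nonneg]; exact min_le_right _ _
        have hclt : c < t₀ := by
          rw [hcdef]
          have : 0 < min (δ/2) t₀ := lt_min (by linarith) ht₀pos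
          linarith
        have hsub : Icc c t₀ ⊆ Icc (0:ℝ) T :=
          fun s hs => ⟨le_trans hc0 hs.1, le_trans hs.2 ht₀I.2⟩
        have hu1neg : ∀ s ∈ Icc c t₀, (A s).1 - (B s).1 < 0 := by
          intro s hs
          apply hδ _ (hsub hs)
          rw [Real.dist_eq, abs_of_nonpos (by linarith [hs.2])]
          have : t₀ - s ≤ min (δ/2) t₀ := by rw [hcdef] at hs; linarith [hs.1]
          have h2 : min (δ/2) t₀ ≤ δ/2 := min_le_left _ _
          linarith
        set g : ℝ → ℝ := fun s => (A s).1 - (B s).1 + m s with hgdef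
        have hgcont : ContinuousOn g (Icc c t₀) :=
          (hcont1.mono hsub).add hmcont.continuousOn
        have hgmono : StrictMonoOn g (Icc c t₀) := by
          apply strictMonoOn_of_deriv_pos (convex_Icc c t₀) hgcont
          intro x hx
          rw [interior_Icc] at hx
          have hx0 : 0 < x := lt_of_le_of_lt hc0 hx.1
          have hxt₀ : x < t₀ := hx.2
          have hxT : x < T := lt_of_lt_of_le hxt₀ ht₀I.2
          have hxI : x ∈ Icc (0:ℝ) T := ⟨hx0.le, hxT.le⟩
          have hnhds : Icc (0:ℝ) T ∈ nhds x := Icc_mem_nhds hx0 hxT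
          have hdA1 : HasDerivAt (fun s => (A s).1) (A' x).1 x :=
            hfst A (A' x) x ((hA x hxI).hasDerivAt hnhds)
          have hdB1 : HasDerivAt (fun s => (B s).1) (B' x).1 x :=
            hfst B (B' x) x ((hB x hxI).hasDerivAt hnhds)
          have hdg : HasDerivAt g ((A' x).1 - (B' x).1 + 3 * L * m x) x :=
            (hdA1.sub hdB1).add (hmderiv x)
          rw [hdg.deriv]
          have hbef := hbefore x hx0.le hxt₀
          have hu1x : (A x).1 - (B x).1 < 0 := hu1neg x ⟨hx.1.le, hxt₀.le⟩
          -- monotonicity step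
          have hstep : (Ψ ((A x).1, (B x).2 - m x)).1 ≤ (Ψ (A x)).1 := by
            have h2 : (B x).2 - m x ≤ (A x).2 := by linarith [hbef.2]
            have := hquasi1 (A x).1 h2
            simpa using this
          -- Lipschitz step
          have hdP : dist ((A x).1, (B x).2 - m x) (B x) ≤ m x := by
            rw [Prod.dist_eq]
            apply max_le
            · rw [Real.dist_eq]
              rw [abs_le]
              exact ⟨by linarith [hbef.1], by linarith [hmpos x]⟩
            · rw [Real.dist_eq]
              have h3 : (B x).2 - m x - (B x).2 = -(m x) := by ring
              rw [h3, abs_neg, abs_of_pos (hmpos x)]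
          have hlip := hLlip _ (hP1K x hxI) _ (hBinK x hxI)
          have hcomp : |(Ψ ((A x).1, (B x).2 - m x)).1 - (Ψ (B x)).1| ≤
              dist (Ψ ((A x).1, (B x).2 - m x)) (Ψ (B x)) := by
            rw [Prod.dist_eq, ← Real.dist_eq]
            exact le_max_left _ _
          have hkey : (Ψ (B x)).1 - L * m x ≤ (Ψ ((A x).1, (B x).2 - m x)).1 := by
            have h2 : dist (Ψ ((A x).1, (B x).2 - m x)) (Ψ (B x)) ≤ L * m x :=
              le_trans hlip (mul_le_mul_of_nonneg_left hdP hLpos.le)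
            have h3 := abs_le.1 (le_trans hcomp h2)
            linarith [h3.1]
          have hB'x : (B' x).1 = (Ψ (B x)).1 := by rw [hBode x hxI]
          have hA'x := hA1 x hxI
          have hfin : 2 * L * m x ≤ (A' x).1 - (B' x).1 + 3 * L * m x := by
            rw [hB'x]; linarith
          have : 0 < 2 * L * m x := by positivity
          linarith
        have hct₀ : g c < g t₀ := hgmono ⟨le_refl c, hclt.le⟩ ⟨hclt.le, le_refl t₀⟩ hclt
        have hgc := (hbefore c hc0 hclt).1
        have : g c = (A c).1 - (B c).1 + m c := rfl
        have h2 : g t₀ = (A t₀).1 - (B t₀).1 + m t₀ := rfl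
        linarith
      · -- component 2 hits zero
        have hu2t₀ : (A t₀).2 - (B t₀).2 < 0 := by linarith [hmpos t₀]
        have hcont2 : ContinuousOn (fun s => (A s).2 - (B s).2) (Icc (0:ℝ) T) :=
          hAc.snd.sub hBc.snd
        have hev : ∀ᶠ s in nhdsWithin t₀ (Icc (0:ℝ) T), (A s).2 - (B s).2 < 0 :=
          Filter.Tendsto.eventually_lt_const hu2t₀ (hcont2 t₀ ht₀I)
        rw [eventually_nhdsWithin_iff, Metric.eventually_nhds_iff] at hev
        obtain ⟨δ, hδpos, hδ⟩ := hev
        set c : ℝ := t₀ - min (δ/2) t₀ with hcdef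
        have hc0 : 0 ≤ c := by
          rw [hcdef]; simp only [sub_nonneg]; exact min_le_right _ _
        have hclt : c < t₀ := by
          rw [hcdef]
          have : 0 < min (δ/2) t₀ := lt_min (by linarith) ht₀pos
          linarith
        have hsub : Icc c t₀ ⊆ Icc (0:ℝ) T :=
          fun s hs => ⟨le_trans hc0 hs.1, le_trans hs.2 ht₀I.2⟩
        have hu2neg : ∀ s ∈ Icc c t₀, (A s).2 - (B s).2 < 0 := by
          intro s hs
          apply hδ _ (hsub hs)
          rw [Real.dist_eq, abs_of_nonpos (by linarith [hs.2])]
          have : t₀ - s ≤ min (δ/2) t₀ := by rw [hcdef] at hs; linarith [hs.1]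
          have h2 : min (δ/2) t₀ ≤ δ/2 := min_le_left _ _
          linarith
        set g : ℝ → ℝ := fun s => (A s).2 - (B s).2 + m s with hgdef
        have hgcont : ContinuousOn g (Icc c t₀) :=
          (hcont2.mono hsub).add hmcont.continuousOn
        have hgmono : StrictMonoOn g (Icc c t₀) := by
          apply strictMonoOn_of_deriv_pos (convex_Icc c t₀) hgcont
          intro x hx
          rw [interior_Icc] at hx
          have hx0 : 0 < x := lt_of_le_of_lt hc0 hx.1
          have hxt₀ : x < t₀ := hx.2
          have hxT : x < T := lt_of_lt_of_le hxt₀ ht₀I.2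
          have hxI : x ∈ Icc (0:ℝ) T := ⟨hx0.le, hxT.le⟩
          have hnhds : Icc (0:ℝ) T ∈ nhds x := Icc_mem_nhds hx0 hxT
          have hdA2 : HasDerivAt (fun s => (A s).2) (A' x).2 x :=
            hsnd A (A' x) x ((hA x hxI).hasDerivAt hnhds)
          have hdB2 : HasDerivAt (fun s => (B s).2) (B' x).2 x :=
            hsnd B (B' x) x ((hB x hxI).hasDerivAt hnhds)
          have hdg : HasDerivAt g ((A' x).2 - (B' x).2 + 3 * L * m x) x :=
            (hdA2.sub hdB2).add (hmderiv x)
          rw [hdg.deriv]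
          have hbef := hbefore x hx0.le hxt₀
          have hu2x : (A x).2 - (B x).2 < 0 := hu2neg x ⟨hx.1.le, hxt₀.le⟩
          have hstep : (Ψ ((B x).1 - m x, (A x).2)).2 ≤ (Ψ (A x)).2 := by
            have h2 : (B x).1 - m x ≤ (A x).1 := by linarith [hbef.1]
            have := hquasi2 (A x).2 h2
            simpa using this
          have hdP : dist ((B x).1 - m x, (A x).2) (B x) ≤ m x := by
            rw [Prod.dist_eq]
            apply max_le
            · rw [Real.dist_eq]
              have h3 : (B x).1 - m x - (B x).1 = -(m x) := by ring
              rw [h3, abs_neg, abs_of_pos (hmpos x)]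
            · rw [Real.dist_eq]
              rw [abs_le]
              exact ⟨by linarith [hbef.2], by linarith [hmpos x]⟩
          have hlip := hLlip _ (hP2K x hxI) _ (hBinK x hxI)
          have hcomp : |(Ψ ((B x).1 - m x, (A x).2)).2 - (Ψ (B x)).2| ≤
              dist (Ψ ((B x).1 - m x, (A x).2)) (Ψ (B x)) := by
            rw [Prod.dist_eq, ← Real.dist_eq]
            exact le_max_right _ _
          have hkey : (Ψ (B x)).2 - L * m x ≤ (Ψ ((B x).1 - m x, (A x).2)).2 := by
            have h2 : dist (Ψ ((B x).1 - m x, (A x).2)) (Ψ (B x)) ≤ L * m x :=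
              le_trans hlip (mul_le_mul_of_nonneg_left hdP hLpos.le)
            have h3 := abs_le.1 (le_trans hcomp h2)
            linarith [h3.1]
          have hB'x : (B' x).2 = (Ψ (B x)).2 := by rw [hBode x hxI]
          have hA'x := hA2 x hxI
          have hfin : 2 * L * m x ≤ (A' x).2 - (B' x).2 + 3 * L * m x := by
            rw [hB'x]; linarith
          have : 0 < 2 * L * m x := by positivity
          linarith
        have hct₀ : g c < g t₀ := hgmono ⟨le_refl c, hclt.le⟩ ⟨hclt.le, le_refl t₀⟩ hclt
        have hgc := (hbefore c hc0 hclt).2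
        have : g c = (A c).2 - (B c).2 + m c := rfl
        have h2 : g t₀ = (A t₀).2 - (B t₀).2 + m t₀ := rfl
        linarith
  -- conclude
  intro t ht
  constructor
  · by_contra hcon
    push_neg at hcon
    set ε : ℝ := min ε₀ (((B t).1 - (A t).1) * Real.exp (-(3 * L * t))) with hεdef
    have hεpos : 0 < ε := lt_min hε₀pos (by
      apply mul_pos (by linarith) (Real.exp_pos _))
    have := (key ε hεpos (min_le_left _ _) t ht).1
    have hle : ε * Real.exp (3 * L * t) ≤ (B t).1 - (A t).1 := by
      calc ε * Real.exp (3 * L * t)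
          ≤ (((B t).1 - (A t).1) * Real.exp (-(3 * L * t))) * Real.exp (3 * L * t) :=
            mul_le_mul_of_nonneg_right (min_le_right _ _) (Real.exp_pos _).le
        _ = (B t).1 - (A t).1 := by
            rw [mul_assoc, ← Real.exp_add]; simp
    linarith
  · by_contra hcon
    push_neg at hcon
    set ε : ℝ := min ε₀ (((B t).2 - (A t).2) * Real.exp (-(3 * L * t))) with hεdef
    have hεpos : 0 < ε := lt_min hε₀pos (by
      apply mul_pos (by linarith) (Real.exp_pos _))
    have := (key ε hεpos (min_le_left _ _) t ht).2
    have hle : ε * Real.exp (3 * L * t) ≤ (B t).2 - (A t).2 := by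
      calc ε * Real.exp (3 * L * t)
          ≤ (((B t).2 - (A t).2) * Real.exp (-(3 * L * t))) * Real.exp (3 * L * t) :=
            mul_le_mul_of_nonneg_right (min_le_right _ _) (Real.exp_pos _).le
        _ = (B t).2 - (A t).2 := by
            rw [mul_assoc, ← Real.exp_add]; simp
    linarith
end

section
/- Fix real constants p > 2, β > 0, Λ > 0 and T > 0, and let (x₀, y₀) ∈ ℝ × [0,∞) with F₁(x₀,y₀) > 0. Let A_L : [0,T] → ℝ² solve A_L' = Φ_L(A_L), A_L(0) = (x₀,y₀). If t₀ ∈ (0,T] satisfies F₁(A_L(t)) > 0 for all t < t₀ and F₁(A_L(t₀)) ≤ 0, then A_{L,1}(t₀) ≥ u_c. Moreover, if βΛ < p - 1 and A_U : [0,T] → ℝ² solves A_U' = Φ_U(A_U), A_U(0) = (x₀,y₀), and t₁ ∈ (0,T] satisfies F₁(A_U(t)) > 0 for all t < t₁ and F₁(A_U(t₁)) ≤ 0, then A_{U,1}(t₁) ≥ ū_c, where ū_c = β(1 - βΛ/(p-1))⁻¹. -/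
open Set

/-- `u_c = β(1 + βΛ/(p-1))⁻¹`. -/
noncomputable def uCrit (p β Λ : ℝ) : ℝ := β * (1 + β * Λ / (p - 1))⁻¹

/-- `ū_c = β(1 - βΛ/(p-1))⁻¹`. -/
noncomputable def uBarCrit (p β Λ : ℝ) : ℝ := β * (1 - β * Λ / (p - 1))⁻¹


private lemma exit_aux (p β T : ℝ) (hβ : 0 < β)
    (A : ℝ → ℝ × ℝ) (Φ2 : ℝ × ℝ → ℝ)
    (hA : ∀ t ∈ Icc (0:ℝ) T, HasDerivWithinAt A (F1 p β (A t), Φ2 (A t)) (Icc (0:ℝ) T) t)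
    (t₀ : ℝ) (ht₀ : t₀ ∈ Ioc (0:ℝ) T)
    (hpos : ∀ t ∈ Ico (0:ℝ) t₀, 0 < F1 p β (A t))
    (hle : F1 p β (A t₀) ≤ 0) :
    F1 p β (A t₀) = 0 ∧ Φ2 (A t₀) ≤ 0 := by
  obtain ⟨ht0, htT⟩ := ht₀
  have ht₀s : t₀ ∈ Icc (0:ℝ) T := ⟨ht0.le, htT⟩
  have hsub : Ico (0:ℝ) t₀ ⊆ Icc (0:ℝ) T := fun x hx => ⟨hx.1, hx.2.le.trans htT⟩
  have hsub2 : Icc (0:ℝ) t₀ ⊆ Icc (0:ℝ) T := Icc_subset_Icc_right htT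
  have hg : ∀ t ∈ Icc (0:ℝ) T, HasDerivWithinAt (fun t => F1 p β (A t))
      (-p * F1 p β (A t) + β * Φ2 (A t)) (Icc (0:ℝ) T) t := by
    intro t ht
    have h1 : HasDerivWithinAt (fun t => (A t).1) (F1 p β (A t)) (Icc (0:ℝ) T) t := by
      simpa using ((hA t ht).hasFDerivWithinAt.fst).hasDerivWithinAt
    have h2 : HasDerivWithinAt (fun t => (A t).2) (Φ2 (A t)) (Icc (0:ℝ) T) t := by
      simpa using ((hA t ht).hasFDerivWithinAt.snd).hasDerivWithinAt
    have h3 := (h1.const_mul (-p)).add (h2.const_mul β)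
    simpa [F1, Pi.add_def] using h3
  have hne : (nhdsWithin t₀ (Ico (0:ℝ) t₀)).NeBot := by
    rw [← mem_closure_iff_nhdsWithin_neBot, closure_Ico ht0.ne]
    exact ⟨ht0.le, le_refl _⟩
  have hg0 : F1 p β (A t₀) = 0 := by
    refine le_antisymm hle ?_
    have hc : ContinuousWithinAt (fun t => F1 p β (A t)) (Ico (0:ℝ) t₀) t₀ :=
      ((hg t₀ ht₀s).continuousWithinAt).mono hsub
    exact ge_of_tendsto hc (eventually_mem_nhdsWithin.mono fun t ht => (hpos t ht).le)
  refine ⟨hg0, ?_⟩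
  have hd := ((hg t₀ ht₀s).mono hsub2)
  rw [hasDerivWithinAt_iff_tendsto_slope, Icc_sdiff_right] at hd
  have hder : -p * F1 p β (A t₀) + β * Φ2 (A t₀) ≤ 0 := by
    refine le_of_tendsto hd (eventually_mem_nhdsWithin.mono fun t ht => ?_)
    rw [slope_def_field, hg0, sub_zero]
    exact div_nonpos_iff.2 (Or.inl ⟨(hpos t ht).le, by linarith [ht.2]⟩)
  rw [hg0] at hder
  nlinarith

/-- When the lower bounding flow `A_L`, started from a point where `F₁ > 0`, first
reaches `{F₁ ≤ 0}`, its first coordinate is at least `u_c`; and if `βΛ < p - 1`, when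
the upper bounding flow `A_U` first reaches `{F₁ ≤ 0}`, its first coordinate is at
least `ū_c`. -/
theorem flows_exit_to_the_right
    (p β Λ T : ℝ) (hp : 2 < p) (hβ : 0 < β) (hΛ : 0 < Λ) (hT : 0 < T)
    (x₀ y₀ : ℝ) (hy₀ : 0 ≤ y₀) (hF1 : 0 < F1 p β (x₀, y₀)) :
    (∀ AL : ℝ → ℝ × ℝ,
      (∀ t ∈ Icc (0 : ℝ) T, HasDerivWithinAt AL (PhiL p β Λ (AL t)) (Icc (0 : ℝ) T) t) →
      AL 0 = (x₀, y₀) →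
      ∀ t₀ ∈ Ioc (0 : ℝ) T, (∀ t ∈ Ico (0 : ℝ) t₀, 0 < F1 p β (AL t)) →
        F1 p β (AL t₀) ≤ 0 → uCrit p β Λ ≤ (AL t₀).1) ∧
    (β * Λ < p - 1 →
      ∀ AU : ℝ → ℝ × ℝ,
      (∀ t ∈ Icc (0 : ℝ) T, HasDerivWithinAt AU (PhiU p β Λ (AU t)) (Icc (0 : ℝ) T) t) →
      AU 0 = (x₀, y₀) →
      ∀ t₁ ∈ Ioc (0 : ℝ) T, (∀ t ∈ Ico (0 : ℝ) t₁, 0 < F1 p β (AU t)) →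
        F1 p β (AU t₁) ≤ 0 → uBarCrit p β Λ ≤ (AU t₁).1) := by
  constructor
  · intro AL hAL hAL0 t₀ ht₀ hpos hle
    obtain ⟨hg0, hΦ⟩ := exit_aux p β T hβ AL (F2L p β Λ)
      (fun t ht => hAL t ht) t₀ ht₀ hpos hle
    set u := (AL t₀).1 with hu
    set v := (AL t₀).2 with hv
    have hp1 : (0:ℝ) < p - 1 := by linarith
    have hzz : β * v = p * u := by
      simp only [F1] at hg0; linarith
    have hΦ' : 2*p*(p-1) ≤ 2*(p-1)*v + 2*β*Λ*v := by
      simp only [F2L] at hΦ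
      have hmid : 2 * p * u * (p * u - β * v) = 0 := by
        rw [show p * u - β * v = 0 by linarith]; ring
      nlinarith [hΦ, hmid]
    have e1 : 2*(p-1)*(β*v) + 2*β*Λ*(β*v) = 2*(p-1)*(p*u) + 2*β*Λ*(p*u) := by
      linear_combination (2*(p-1) + 2*β*Λ) * hzz
    have e2 : 2*p*(β*(p-1)) ≤ 2*(p-1)*(β*v) + 2*β*Λ*(β*v) := by nlinarith [hΦ', hβ]
    have h3 : (2*p) * (β*(p-1)) ≤ (2*p) * (u*((p-1)+β*Λ)) := by nlinarith [e1, e2]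
    have h4 : β*(p-1) ≤ u*((p-1)+β*Λ) :=
      le_of_mul_le_mul_left h3 (by linarith)
    have hP : (0:ℝ) < 1 + β*Λ/(p-1) := by positivity
    rw [uCrit, ← div_eq_mul_inv, div_le_iff₀ hP,
      show 1 + β*Λ/(p-1) = ((p-1)+β*Λ)/(p-1) by field_simp,
      ← mul_div_assoc, le_div_iff₀ hp1]
    linarith [h4]
  · intro hβΛ AU hAU hAU0 t₁ ht₁ hpos hle
    obtain ⟨hg0, hΦ⟩ := exit_aux p β T hβ AU (F2U p β Λ)
      (fun t ht => hAU t ht) t₁ ht₁ hpos hle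
    set u := (AU t₁).1 with hu
    set v := (AU t₁).2 with hv
    have hp1 : (0:ℝ) < p - 1 := by linarith
    have hzz : β * v = p * u := by
      simp only [F1] at hg0; linarith
    have hΦ' : 2*p*(p-1) ≤ 2*(p-1)*v - 2*β*Λ*v := by
      simp only [F2U] at hΦ
      have hmid : 2 * p * u * (p * u - β * v) = 0 := by
        rw [show p * u - β * v = 0 by linarith]; ring
      nlinarith [hΦ, hmid]
    have e1 : 2*(p-1)*(β*v) - 2*β*Λ*(β*v) = 2*(p-1)*(p*u) - 2*β*Λ*(p*u) := by
      linear_combination (2*(p-1) - 2*β*Λ) * hzz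
    have e2 : 2*p*(β*(p-1)) ≤ 2*(p-1)*(β*v) - 2*β*Λ*(β*v) := by nlinarith [hΦ', hβ]
    have h3 : (2*p) * (β*(p-1)) ≤ (2*p) * (u*((p-1)-β*Λ)) := by nlinarith [e1, e2]
    have h4 : β*(p-1) ≤ u*((p-1)-β*Λ) :=
      le_of_mul_le_mul_left h3 (by linarith)
    have hP : (0:ℝ) < 1 - β*Λ/(p-1) := by
      rw [sub_pos, div_lt_one hp1]; exact hβΛ
    rw [uBarCrit, ← div_eq_mul_inv, div_le_iff₀ hP,
      show 1 - β*Λ/(p-1) = ((p-1)-β*Λ)/(p-1) by field_simp,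
      ← mul_div_assoc, le_div_iff₀ hp1]
    linarith [h4]
end
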